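/- arXiv:1806.03221 — 8 statements merged into one kernel-verified Lean document; each statement's English description precedes it below -/
import Mathlib

section
/- For any pair of positive integers (a,b), the operators C_a on symmetric functions satisfy the commutation relation q(C_b C_a + C_{a-1} C_{b+1}) = C_a C_b + C_{b+1} C_{a-1}. -/
open Polynomial Finset

noncomputable section

abbrev K : Type := RatFunc ℚ

def qq : K := RatFunc.X

abbrev SymF : Type := MvPolynomial ℕ K

def hh : ℕ → SymF
  | 0 => 1
  | n + 1 => MvPolynomial.X n

def himg (q : K) (m : ℕ) : Polynomial SymF :=
  ∑ r ∈ Finset.range (m + 1),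
      Polynomial.C (MvPolynomial.C (q⁻¹ ^ r) * hh (m - r)) * Polynomial.X ^ r -
    ∑ r ∈ Finset.range m,
      Polynomial.C (MvPolynomial.C (q⁻¹ ^ r) * hh (m - 1 - r)) * Polynomial.X ^ (r + 1)

def pleth (q : K) : SymF →ₐ[K] Polynomial SymF :=
  MvPolynomial.aeval fun n => himg q (n + 1)

def Cop (q : K) (a : ℕ) (F : SymF) : SymF :=
  MvPolynomial.C ((-q⁻¹) ^ ((a : ℤ) - 1)) *
    ∑ j ∈ Finset.range ((pleth q F).natDegree + 1), hh (a + j) * (pleth q F).coeff j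

lemma qq_ne : qq ≠ 0 := RatFunc.X_ne_zero

def kap (q : K) : ℕ → K
  | 0 => 1
  | i + 1 => q⁻¹ ^ (i + 1) - q⁻¹ ^ i

lemma himg_eq (q : K) (m : ℕ) : himg q m =
    ∑ i ∈ Finset.range (m + 1),
      Polynomial.C (MvPolynomial.C (kap q i) * hh (m - i)) * Polynomial.X ^ i := by
  rw [himg, Finset.sum_range_succ' (fun i => Polynomial.C (MvPolynomial.C (kap q i) * hh (m - i)) * Polynomial.X ^ i) m,
    Finset.sum_range_succ' (fun i => Polynomial.C (MvPolynomial.C (q⁻¹ ^ i) * hh (m - i)) * Polynomial.X ^ i) m]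
  rw [sub_eq_iff_eq_add, add_right_comm]
  congr 1
  rw [← Finset.sum_add_distrib]
  apply Finset.sum_congr rfl
  intro i _
  have h1 : m - (i + 1) = m - 1 - i := by omega
  rw [h1, show (kap q (i + 1)) = q⁻¹ ^ (i + 1) - q⁻¹ ^ i from rfl,
    ← add_mul, ← Polynomial.C_add, ← add_mul, ← map_add, sub_add_cancel]

lemma himg_coeff (q : K) (m i : ℕ) :
    (himg q m).coeff i = if i ≤ m then MvPolynomial.C (kap q i) * hh (m - i) else 0 := by
  rw [himg_eq, Polynomial.finset_sum_coeff]
  simp only [Polynomial.coeff_C_mul, Polynomial.coeff_X_pow]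
  by_cases h : i ≤ m
  · rw [if_pos h, Finset.sum_eq_single i
      (fun b _ hb => by rw [if_neg (Ne.symm hb), mul_zero])
      (fun hi => ((hi (Finset.mem_range.2 (by omega))).elim))]
    simp
  · rw [if_neg h]
    apply Finset.sum_eq_zero
    intro b hb
    rw [if_neg, mul_zero]
    intro e
    rw [e] at h
    exact h (Nat.lt_succ_iff.mp (Finset.mem_range.mp hb))

lemma pleth_hh (q : K) (n : ℕ) : pleth q (hh n) = himg q n := by
  cases n with
  | zero =>
      show pleth q 1 = himg q 0
      rw [map_one, himg_eq]
      simp [hh, kap]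
  | succ n =>
      show pleth q (MvPolynomial.X n) = himg q (n + 1)
      rw [pleth, MvPolynomial.aeval_X]

lemma pleth_C (q : K) (k : K) :
    pleth q (MvPolynomial.C k) = Polynomial.C (MvPolynomial.C k) := by
  rw [pleth, MvPolynomial.aeval_C, Polynomial.algebraMap_apply, MvPolynomial.algebraMap_eq]

-- the swap ring hom on bivariate polynomials

def swapP : Polynomial (Polynomial SymF) →+* Polynomial (Polynomial SymF) :=
  Polynomial.eval₂RingHom (R := Polynomial SymF) (S := Polynomial (Polynomial SymF))
    (Polynomial.eval₂RingHom (R := SymF) (S := Polynomial (Polynomial SymF)) (Polynomial.C.comp Polynomial.C) Polynomial.X)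
    (Polynomial.C Polynomial.X)

lemma swapP_coeff (p : Polynomial (Polynomial SymF)) (j l : ℕ) :
    ((swapP p).coeff j).coeff l = ((p.coeff l).coeff j) := by
  induction p using Polynomial.induction_on' with
  | add p q hp hq => simp [map_add, hp, hq]
  | monomial n r =>
      induction r using Polynomial.induction_on' with
      | add r s hr hs =>
          rw [show Polynomial.monomial n (r + s) = Polynomial.monomial n r + Polynomial.monomial n s by rw [map_add]]
          simp only [map_add, Polynomial.coeff_add] at *
          rw [hr, hs]
      | monomial m x =>
          rw [swapP, Polynomial.coe_eval₂RingHom, Polynomial.eval₂_monomial,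
            Polynomial.coe_eval₂RingHom, Polynomial.eval₂_monomial]
          simp only [RingHom.coe_comp, Function.comp_apply]
          rw [show (Polynomial.C (Polynomial.C x) * Polynomial.X ^ m * Polynomial.C Polynomial.X ^ n : Polynomial (Polynomial SymF)) = Polynomial.C (Polynomial.C x * Polynomial.X ^ n) * Polynomial.X ^ m by rw [Polynomial.C_mul, Polynomial.C_pow]; ring]
          simp only [Polynomial.coeff_C_mul, Polynomial.coeff_X_pow, Polynomial.coeff_monomial,
            mul_ite, mul_one, mul_zero, apply_ite (Polynomial.coeff · l),
            apply_ite (Polynomial.coeff · j), Polynomial.coeff_zero]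
          split_ifs <;> simp_all

def biP (q : K) : SymF →+* Polynomial (Polynomial SymF) :=
  (Polynomial.mapRingHom (pleth q).toRingHom).comp (pleth q).toRingHom

lemma map_pleth_himg_coeff (q : K) (m l : ℕ) :
    (Polynomial.map (pleth q).toRingHom (himg q m)).coeff l =
      if l ≤ m then Polynomial.C (MvPolynomial.C (kap q l)) * himg q (m - l) else 0 := by
  rw [Polynomial.coeff_map]
  show pleth q _ = _
  rw [himg_coeff]
  split_ifs
  · rw [map_mul, pleth_C, pleth_hh]
  · exact map_zero _

lemma biP_C (q : K) (r : K) :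
    biP q (MvPolynomial.C r) = Polynomial.C (Polynomial.C (MvPolynomial.C r)) := by
  show Polynomial.map (pleth q).toRingHom (pleth q (MvPolynomial.C r)) = _
  rw [pleth_C, Polynomial.map_C]
  show Polynomial.C (pleth q (MvPolynomial.C r)) = _
  rw [pleth_C]

lemma biP_X (q : K) (n : ℕ) :
    biP q (MvPolynomial.X n) = Polynomial.map (pleth q).toRingHom (himg q (n + 1)) := by
  show Polynomial.map (pleth q).toRingHom (pleth q (MvPolynomial.X n)) = _
  rw [show pleth q (MvPolynomial.X n) = himg q (n + 1) from MvPolynomial.aeval_X _ n]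

lemma swapP_map_pleth_himg (q : K) (m : ℕ) :
    swapP (Polynomial.map (pleth q).toRingHom (himg q m)) =
      Polynomial.map (pleth q).toRingHom (himg q m) := by
  apply Polynomial.ext; intro j
  apply Polynomial.ext; intro l
  rw [swapP_coeff, map_pleth_himg_coeff, map_pleth_himg_coeff]
  simp only [apply_ite (fun p => Polynomial.coeff p j), apply_ite (fun p => Polynomial.coeff p l),
    Polynomial.coeff_zero, Polynomial.coeff_C_mul, himg_coeff, mul_ite, mul_zero]
  split_ifs <;> first
    | rfl
    | (exfalso; omega)
    | (rw [show m - l - j = m - j - l from by omega]; ring)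

lemma swapP_biP (q : K) (F : SymF) : swapP (biP q F) = biP q F := by
  have h : swapP.comp (biP q) = biP q := by
    apply MvPolynomial.ringHom_ext
    · intro r
      show swapP (biP q (MvPolynomial.C r)) = biP q (MvPolynomial.C r)
      rw [biP_C]
      simp [swapP]
    · intro n
      show swapP (biP q (MvPolynomial.X n)) = biP q (MvPolynomial.X n)
      rw [biP_X]
      exact swapP_map_pleth_himg q (n + 1)
  exact RingHom.congr_fun h F

def Dd (q : K) (F : SymF) (j l : ℕ) : SymF := (pleth q ((pleth q F).coeff j)).coeff l

lemma Dd_symm (q : K) (F : SymF) (j l : ℕ) : Dd q F j l = Dd q F l j := by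
  have h : ∀ j l : ℕ, Dd q F j l = ((biP q F).coeff j).coeff l := by
    intro j l
    show _ = ((Polynomial.map (pleth q).toRingHom (pleth q F)).coeff j).coeff l
    rw [Polynomial.coeff_map]
    rfl
  rw [h, h, ← swapP_biP q F, swapP_coeff, swapP_biP]

def Rb (q : K) (F : SymF) : ℕ := (pleth q F).natDegree + 1

def gg (q : K) (F : SymF) (m n : ℤ) : SymF :=
  ∑ j ∈ Finset.range (Rb q F), ∑ l ∈ Finset.range (Rb q F),
    if 0 ≤ m + j ∧ 0 ≤ n + l then hh (m + j).toNat * (hh (n + l).toNat * Dd q F j l) else 0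

lemma Dd_zero_left (q : K) (F : SymF) (j l : ℕ) (hj : Rb q F ≤ j) : Dd q F j l = 0 := by
  unfold Dd
  have h : (pleth q F).coeff j = 0 :=
    Polynomial.coeff_eq_zero_of_natDegree_lt (by unfold Rb at hj; omega)
  rw [h, map_zero, Polynomial.coeff_zero]

lemma Dd_zero_right (q : K) (F : SymF) (j l : ℕ) (hl : Rb q F ≤ l) : Dd q F j l = 0 := by
  rw [Dd_symm]; exact Dd_zero_left q F l j hl

lemma gg_symm (q : K) (F : SymF) (m n : ℤ) : gg q F m n = gg q F n m := by
  unfold gg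
  rw [Finset.sum_comm]
  apply Finset.sum_congr rfl; intro j _
  apply Finset.sum_congr rfl; intro l _
  rw [Dd_symm]
  by_cases h1 : 0 ≤ m + l <;> by_cases h2 : 0 ≤ n + j
  · rw [if_pos ⟨h1, h2⟩, if_pos ⟨h2, h1⟩]; ring
  all_goals rw [if_neg (by tauto), if_neg (by tauto)]

lemma gg_zero_right (q : K) (F : SymF) (m n : ℤ) (hn : n + Rb q F ≤ 0) : gg q F m n = 0 := by
  unfold gg
  apply Finset.sum_eq_zero; intro j _
  apply Finset.sum_eq_zero; intro l hl
  rw [if_neg]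
  rintro ⟨-, h2⟩
  have := Finset.mem_range.mp hl
  omega

lemma gg_zero_left (q : K) (F : SymF) (m n : ℤ) (hm : m + Rb q F ≤ 0) : gg q F m n = 0 := by
  rw [gg_symm]; exact gg_zero_right q F n m hm

lemma sum_antidiag_flatten {M : ℕ} (f : ℕ → ℕ → SymF) (hf : ∀ i l, M ≤ i + l → f i l = 0) :
    ∑ k ∈ Finset.range M, ∑ p ∈ Finset.HasAntidiagonal.antidiagonal k, f p.1 p.2 =
      ∑ i ∈ Finset.range M, ∑ l ∈ Finset.range M, f i l := by
  rw [← Finset.sum_biUnion (by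
    intro x _ y _ hxy
    apply Finset.disjoint_left.mpr
    intro p hp hq
    exact hxy (by rw [← Finset.HasAntidiagonal.mem_antidiagonal.mp hp, ← Finset.HasAntidiagonal.mem_antidiagonal.mp hq])),
    ← Finset.sum_product']
  apply Finset.sum_subset
  · intro p hp
    rw [Finset.mem_biUnion] at hp
    obtain ⟨k, hk, hpk⟩ := hp
    have h1 := Finset.HasAntidiagonal.mem_antidiagonal.mp hpk
    have h2 := Finset.mem_range.mp hk
    rw [Finset.mem_product, Finset.mem_range, Finset.mem_range]
    omega
  · intro p hp hnp
    apply hf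
    by_contra h
    push_neg at h
    exact hnp (Finset.mem_biUnion.mpr ⟨p.1 + p.2, Finset.mem_range.mpr (by omega),
      Finset.HasAntidiagonal.mem_antidiagonal.mpr rfl⟩)

lemma core (q : K) (F : SymF) (α β M I : ℕ) (hM : α + 2 * Rb q F ≤ M)
    (hI : α + 2 * Rb q F ≤ I) :
    ∑ k ∈ Finset.range M,
        hh (β + k) *
          (pleth q (∑ j ∈ Finset.range (Rb q F), hh (α + j) * (pleth q F).coeff j)).coeff k =
      ∑ i ∈ Finset.range I, MvPolynomial.C (kap q i) * gg q F ((β : ℤ) + i) ((α : ℤ) - i) := by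
  set R := Rb q F with hR
  have hR1 : 1 ≤ R := Nat.le_add_left 1 _
  have hpleth : pleth q (∑ j ∈ Finset.range R, hh (α + j) * (pleth q F).coeff j) =
      ∑ j ∈ Finset.range R, himg q (α + j) * pleth q ((pleth q F).coeff j) := by
    rw [map_sum]
    exact Finset.sum_congr rfl fun j _ => by rw [map_mul, pleth_hh]
  calc
    ∑ k ∈ Finset.range M, hh (β + k) *
        (pleth q (∑ j ∈ Finset.range R, hh (α + j) * (pleth q F).coeff j)).coeff k
      = ∑ k ∈ Finset.range M, ∑ j ∈ Finset.range R, ∑ p ∈ Finset.HasAntidiagonal.antidiagonal k,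
          hh (β + (p.1 + p.2)) * ((himg q (α + j)).coeff p.1 * Dd q F j p.2) := by
        apply Finset.sum_congr rfl; intro k _
        rw [hpleth, Polynomial.finset_sum_coeff, Finset.mul_sum]
        apply Finset.sum_congr rfl; intro j _
        rw [Polynomial.coeff_mul, Finset.mul_sum]
        apply Finset.sum_congr rfl; intro p hp
        rw [Finset.HasAntidiagonal.mem_antidiagonal.mp hp]
        rfl
    _ = ∑ j ∈ Finset.range R, ∑ k ∈ Finset.range M, ∑ p ∈ Finset.HasAntidiagonal.antidiagonal k,
          hh (β + (p.1 + p.2)) * ((himg q (α + j)).coeff p.1 * Dd q F j p.2) :=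
        Finset.sum_comm
    _ = ∑ j ∈ Finset.range R, ∑ i ∈ Finset.range M, ∑ l ∈ Finset.range M,
          hh (β + (i + l)) * ((himg q (α + j)).coeff i * Dd q F j l) := by
        apply Finset.sum_congr rfl; intro j hj
        refine sum_antidiag_flatten
          (fun i l => hh (β + (i + l)) * ((himg q (α + j)).coeff i * Dd q F j l)) ?_
        intro i l hil
        by_cases hi : i ≤ α + j
        · rw [Dd_zero_right q F j l (by have := Finset.mem_range.mp hj; omega), mul_zero,
            mul_zero]
        · rw [himg_coeff, if_neg hi, zero_mul, mul_zero]
    _ = ∑ j ∈ Finset.range R, ∑ i ∈ Finset.range M, ∑ l ∈ Finset.range R,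
          hh (β + (i + l)) * ((himg q (α + j)).coeff i * Dd q F j l) := by
        apply Finset.sum_congr rfl; intro j _
        apply Finset.sum_congr rfl; intro i _
        refine (Finset.sum_subset (Finset.range_subset_range.mpr (by omega)) ?_).symm
        intro l _ hl
        rw [Dd_zero_right q F j l (by simp only [Finset.mem_range] at hl; omega), mul_zero,
          mul_zero]
    _ = ∑ i ∈ Finset.range M, ∑ j ∈ Finset.range R, ∑ l ∈ Finset.range R,
          hh (β + (i + l)) * ((himg q (α + j)).coeff i * Dd q F j l) := Finset.sum_comm
    _ = ∑ i ∈ Finset.range M, MvPolynomial.C (kap q i) * gg q F ((β : ℤ) + i) ((α : ℤ) - i) := by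
        apply Finset.sum_congr rfl; intro i _
        rw [gg, Finset.mul_sum]
        rw [Finset.sum_comm]
        apply Finset.sum_congr rfl; intro j _
        rw [Finset.mul_sum]
        apply Finset.sum_congr rfl; intro l _
        rw [himg_coeff, Dd_symm q F l j]
        by_cases hi : i ≤ α + l
        · rw [if_pos hi, if_pos ⟨by positivity, by omega⟩,
            show ((β : ℤ) + i + j).toNat = β + (i + j) by omega,
            show ((α : ℤ) - i + l).toNat = α + l - i by omega]
          ring
        · rw [if_neg hi, if_neg (by rintro ⟨-, h⟩; omega), zero_mul, mul_zero, mul_zero]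
    _ = ∑ i ∈ Finset.range I, MvPolynomial.C (kap q i) * gg q F ((β : ℤ) + i) ((α : ℤ) - i) := by
        have key : ∀ J : ℕ, α + 2 * R ≤ J → J ≤ max M I →
            ∑ i ∈ Finset.range J, MvPolynomial.C (kap q i) * gg q F ((β : ℤ) + i) ((α : ℤ) - i) =
            ∑ i ∈ Finset.range (max M I),
              MvPolynomial.C (kap q i) * gg q F ((β : ℤ) + i) ((α : ℤ) - i) := by
          intro J hJ hJ2
          apply Finset.sum_subset (Finset.range_subset_range.mpr hJ2)
          intro i _ hi
          simp only [Finset.mem_range, not_lt] at hi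
          rw [gg_zero_right q F _ _ (by push_cast; omega), mul_zero]
        rw [key M hM (le_max_left M I), key I hI (le_max_right M I)]

lemma comp_eq (q : K) (F : SymF) (β α I : ℕ) (hI : α + 2 * Rb q F ≤ I) :
    Cop q β (Cop q α F) =
      MvPolynomial.C ((-q⁻¹) ^ ((α : ℤ) - 1) * (-q⁻¹) ^ ((β : ℤ) - 1)) *
        ∑ i ∈ Finset.range I, MvPolynomial.C (kap q i) * gg q F ((β : ℤ) + i) ((α : ℤ) - i) := by
  set R := Rb q F with hRdef
  set εα : K := (-q⁻¹) ^ ((α : ℤ) - 1) with hεα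
  set εβ : K := (-q⁻¹) ^ ((β : ℤ) - 1) with hεβ
  set A0 : SymF := ∑ j ∈ Finset.range R, hh (α + j) * (pleth q F).coeff j with hA0
  have hCopα : Cop q α F = MvPolynomial.C εα * A0 := rfl
  set M : ℕ := max ((pleth q (Cop q α F)).natDegree + 1) (α + 2 * R) with hM
  have hM1 : α + 2 * R ≤ M := le_max_right _ _
  have step1 : Cop q β (Cop q α F) =
      MvPolynomial.C εβ * ∑ k ∈ Finset.range M,
        hh (β + k) * (pleth q (Cop q α F)).coeff k := by
    rw [Cop]
    refine congrArg (MvPolynomial.C εβ * ·) ?_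
    apply Finset.sum_subset (Finset.range_subset_range.mpr (le_max_left _ _))
    intro k _ hk
    simp only [Finset.mem_range, not_lt] at hk
    rw [Polynomial.coeff_eq_zero_of_natDegree_lt (by omega), mul_zero]
  have step2 : ∀ k, (pleth q (Cop q α F)).coeff k = MvPolynomial.C εα * (pleth q A0).coeff k := by
    intro k
    rw [hCopα, map_mul, pleth_C, Polynomial.coeff_C_mul]
  rw [step1]
  calc
    MvPolynomial.C εβ * ∑ k ∈ Finset.range M, hh (β + k) * (pleth q (Cop q α F)).coeff k
      = MvPolynomial.C (εα * εβ) *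
          ∑ k ∈ Finset.range M, hh (β + k) * (pleth q A0).coeff k := by
        rw [map_mul, Finset.mul_sum, Finset.mul_sum]
        apply Finset.sum_congr rfl
        intro k _
        rw [step2]
        ring
    _ = MvPolynomial.C (εα * εβ) *
          ∑ i ∈ Finset.range I, MvPolynomial.C (kap q i) * gg q F ((β : ℤ) + i) ((α : ℤ) - i) := by
        rw [core q F α β M I hM1 hI]

lemma kap_mul (q : K) (hq : q ≠ 0) (i : ℕ) (hi : 1 ≤ i) : q * kap q (i + 1) = kap q i := by
  obtain ⟨j, rfl⟩ : ∃ j, i = j + 1 := ⟨i - 1, by omega⟩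
  show q * (q⁻¹ ^ (j + 2) - q⁻¹ ^ (j + 1)) = q⁻¹ ^ (j + 1) - q⁻¹ ^ j
  have hqq : q * q⁻¹ = 1 := mul_inv_cancel₀ hq
  linear_combination (q⁻¹ ^ (j + 1) - q⁻¹ ^ j) * hqq

lemma kap_one (q : K) (hq : q ≠ 0) : q * kap q 1 = 1 - q := by
  show q * (q⁻¹ ^ 1 - q⁻¹ ^ 0) = 1 - q
  field_simp

lemma final_sum (q : K) (hq : q ≠ 0) (f : ℤ → SymF) (n : ℕ)
    (htop : f ((n : ℤ) + 1) = 0) (hbot : f (-(n : ℤ) - 2) = 0) :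
    MvPolynomial.C q *
        ((∑ i ∈ Finset.range (n + 2), MvPolynomial.C (kap q i) * f (-(i : ℤ))) +
          ∑ i ∈ Finset.range (n + 2), MvPolynomial.C (kap q i) * f ((i : ℤ) - 1)) =
      (∑ i ∈ Finset.range (n + 2), MvPolynomial.C (kap q i) * f (i : ℤ)) +
        ∑ i ∈ Finset.range (n + 2), MvPolynomial.C (kap q i) * f (-1 - (i : ℤ)) := by
  have hκ : ∀ i : ℕ, 1 ≤ i →
      MvPolynomial.C q * MvPolynomial.C (kap q (i + 1)) = (MvPolynomial.C (kap q i) : SymF) :=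
    fun i hi => by rw [← map_mul, kap_mul q hq i hi]
  have hκ1 : MvPolynomial.C q * MvPolynomial.C (kap q 1) = (1 : SymF) - MvPolynomial.C q := by
    rw [← map_mul, kap_one q hq, map_sub, map_one]
  have hk0 : (MvPolynomial.C (kap q 0) : SymF) = 1 := by
    rw [show kap q 0 = 1 from rfl, map_one]
  have eA1 : (∑ i ∈ Finset.range (n + 2), MvPolynomial.C (kap q i) * f (-(i : ℤ))) =
      (∑ i ∈ Finset.range n, MvPolynomial.C (kap q (i + 2)) * f (-(i : ℤ) - 2)) +
        (MvPolynomial.C (kap q 1) * f (-1) + f 0) := by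
    rw [Finset.sum_range_succ' (fun i => MvPolynomial.C (kap q i) * f (-(i : ℤ))) (n + 1),
      Finset.sum_range_succ' (fun i => MvPolynomial.C (kap q (i + 1)) * f (-((i + 1 : ℕ) : ℤ))) n,
      add_assoc]
    exact congrArg₂ (· + ·)
      (Finset.sum_congr rfl fun i _ => congrArg₂ (· * ·) rfl (congrArg f (by push_cast; ring)))
      (congrArg₂ (· + ·) (congrArg₂ (· * ·) rfl (congrArg f (by norm_num)))
        (by rw [hk0, one_mul]; exact congrArg f (by norm_num)))
  have eA2 : (∑ i ∈ Finset.range (n + 2), MvPolynomial.C (kap q i) * f ((i : ℤ) - 1)) =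
      (∑ i ∈ Finset.range n, MvPolynomial.C (kap q (i + 2)) * f ((i : ℤ) + 1)) +
        (MvPolynomial.C (kap q 1) * f 0 + f (-1)) := by
    rw [Finset.sum_range_succ' (fun i => MvPolynomial.C (kap q i) * f ((i : ℤ) - 1)) (n + 1),
      Finset.sum_range_succ'
        (fun i => MvPolynomial.C (kap q (i + 1)) * f (((i + 1 : ℕ) : ℤ) - 1)) n,
      add_assoc]
    exact congrArg₂ (· + ·)
      (Finset.sum_congr rfl fun i _ => congrArg₂ (· * ·) rfl (congrArg f (by push_cast; ring)))
      (congrArg₂ (· + ·) (congrArg₂ (· * ·) rfl (congrArg f (by norm_num)))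
        (by rw [hk0, one_mul]; exact congrArg f (by norm_num)))
  have eB1 : (∑ i ∈ Finset.range (n + 2), MvPolynomial.C (kap q i) * f (i : ℤ)) =
      (∑ i ∈ Finset.range n, MvPolynomial.C (kap q (i + 1)) * f ((i : ℤ) + 1)) + f 0 := by
    rw [Finset.sum_range_succ' (fun i => MvPolynomial.C (kap q i) * f (i : ℤ)) (n + 1),
      Finset.sum_range_succ (fun i => MvPolynomial.C (kap q (i + 1)) * f ((i + 1 : ℕ) : ℤ)) n,
      show (((n + 1 : ℕ)) : ℤ) = (n : ℤ) + 1 from by push_cast; ring, htop, mul_zero, add_zero]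
    exact congrArg₂ (· + ·)
      (Finset.sum_congr rfl fun i _ => congrArg₂ (· * ·) rfl (congrArg f (by push_cast; ring)))
      (by rw [hk0, one_mul]; exact congrArg f (by norm_num))
  have eB2 : (∑ i ∈ Finset.range (n + 2), MvPolynomial.C (kap q i) * f (-1 - (i : ℤ))) =
      (∑ i ∈ Finset.range n, MvPolynomial.C (kap q (i + 1)) * f (-(i : ℤ) - 2)) + f (-1) := by
    rw [Finset.sum_range_succ' (fun i => MvPolynomial.C (kap q i) * f (-1 - (i : ℤ))) (n + 1),
      Finset.sum_range_succ (fun i => MvPolynomial.C (kap q (i + 1)) * f (-1 - ((i + 1 : ℕ) : ℤ)))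
        n,
      show -1 - (((n + 1 : ℕ)) : ℤ) = -(n : ℤ) - 2 from by push_cast; ring, hbot, mul_zero,
      add_zero]
    exact congrArg₂ (· + ·)
      (Finset.sum_congr rfl fun i _ => congrArg₂ (· * ·) rfl (congrArg f (by push_cast; ring)))
      (by rw [hk0, one_mul]; exact congrArg f (by norm_num))
  have hS1 : MvPolynomial.C q *
      (∑ i ∈ Finset.range n, MvPolynomial.C (kap q (i + 2)) * f (-(i : ℤ) - 2)) =
      ∑ i ∈ Finset.range n, MvPolynomial.C (kap q (i + 1)) * f (-(i : ℤ) - 2) := by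
    rw [Finset.mul_sum]
    exact Finset.sum_congr rfl fun i _ => by rw [← mul_assoc, hκ (i + 1) (by omega)]
  have hS2 : MvPolynomial.C q *
      (∑ i ∈ Finset.range n, MvPolynomial.C (kap q (i + 2)) * f ((i : ℤ) + 1)) =
      ∑ i ∈ Finset.range n, MvPolynomial.C (kap q (i + 1)) * f ((i : ℤ) + 1) := by
    rw [Finset.mul_sum]
    exact Finset.sum_congr rfl fun i _ => by rw [← mul_assoc, hκ (i + 1) (by omega)]
  rw [eA1, eA2, eB1, eB2]
  linear_combination hS1 + hS2 + (f 0 + f (-1)) * hκ1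

/-- for any pair of positive integers (a,b), the operators C_a satisfy
q(C_b C_a + C_{a-1} C_{b+1}) = C_a C_b + C_{b+1} C_{a-1}. -/
theorem stmt0 (a b : ℕ) (ha : 1 ≤ a) (hb : 1 ≤ b) (F : SymF) :
    MvPolynomial.C qq *
        (Cop qq b (Cop qq a F) + Cop qq (a - 1) (Cop qq (b + 1) F)) =
      Cop qq a (Cop qq b F) + Cop qq (b + 1) (Cop qq (a - 1) F) := by
  set R := Rb qq F with hR
  set n : ℕ := a + b + 2 * R - 1 with hn
  have hI : ∀ α : ℕ, α ≤ b + 1 ∨ α ≤ a → α + 2 * Rb qq F ≤ n + 2 := by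
    intro α hα
    rw [← hR, hn]
    omega
  have hne : (-qq⁻¹ : K) ≠ 0 := neg_ne_zero.mpr (inv_ne_zero qq_ne)
  set E : K := (-qq⁻¹) ^ ((a : ℤ) + (b : ℤ) - 2) with hE
  have e1 : (-qq⁻¹ : K) ^ ((a : ℤ) - 1) * (-qq⁻¹) ^ ((b : ℤ) - 1) = E := by
    rw [hE, ← zpow_add₀ hne]; congr 1; ring
  have e2 : (-qq⁻¹ : K) ^ (((b + 1 : ℕ) : ℤ) - 1) * (-qq⁻¹) ^ (((a - 1 : ℕ) : ℤ) - 1) = E := by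
    rw [hE, ← zpow_add₀ hne]; congr 1; push_cast [Nat.cast_sub ha]; ring
  have e3 : (-qq⁻¹ : K) ^ ((b : ℤ) - 1) * (-qq⁻¹) ^ ((a : ℤ) - 1) = E := by
    rw [hE, ← zpow_add₀ hne]; congr 1; ring
  have e4 : (-qq⁻¹ : K) ^ (((a - 1 : ℕ) : ℤ) - 1) * (-qq⁻¹) ^ (((b + 1 : ℕ) : ℤ) - 1) = E := by
    rw [hE, ← zpow_add₀ hne]; congr 1; push_cast [Nat.cast_sub ha]; ring
  have h1 := comp_eq qq F b a (n + 2) (hI a (Or.inr le_rfl))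
  have h2 := comp_eq qq F (a - 1) (b + 1) (n + 2) (hI (b + 1) (Or.inl le_rfl))
  have h3 := comp_eq qq F a b (n + 2) (hI b (Or.inl (by omega)))
  have h4 := comp_eq qq F (b + 1) (a - 1) (n + 2) (hI (a - 1) (Or.inr (by omega)))
  have htop : gg qq F ((a : ℤ) + ((n : ℤ) + 1)) ((b : ℤ) - ((n : ℤ) + 1)) = 0 :=
    gg_zero_right qq F _ _ (by rw [← hR]; push_cast [hn]; omega)
  have hbot : gg qq F ((a : ℤ) + (-(n : ℤ) - 2)) ((b : ℤ) - (-(n : ℤ) - 2)) = 0 :=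
    gg_zero_left qq F _ _ (by rw [← hR]; push_cast [hn]; omega)
  have FS := final_sum qq qq_ne (fun s => gg qq F ((a : ℤ) + s) ((b : ℤ) - s)) n htop hbot
  have hc1 : ∑ i ∈ Finset.range (n + 2),
        MvPolynomial.C (kap qq i) * gg qq F ((b : ℤ) + i) ((a : ℤ) - i) =
      ∑ i ∈ Finset.range (n + 2),
        MvPolynomial.C (kap qq i) * gg qq F ((a : ℤ) + -(i : ℤ)) ((b : ℤ) - -(i : ℤ)) :=
    Finset.sum_congr rfl fun i _ => congrArg₂ (· * ·) rfl
      (by rw [gg_symm]; congr 1 <;> ring)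
  have hc2 : ∑ i ∈ Finset.range (n + 2),
        MvPolynomial.C (kap qq i) * gg qq F (((a - 1 : ℕ) : ℤ) + i) (((b + 1 : ℕ) : ℤ) - i) =
      ∑ i ∈ Finset.range (n + 2),
        MvPolynomial.C (kap qq i) * gg qq F ((a : ℤ) + ((i : ℤ) - 1)) ((b : ℤ) - ((i : ℤ) - 1)) :=
    Finset.sum_congr rfl fun i _ => congrArg₂ (· * ·) rfl
      (by congr 1 <;> push_cast [Nat.cast_sub ha] <;> ring)
  have hc3 : ∑ i ∈ Finset.range (n + 2),
        MvPolynomial.C (kap qq i) * gg qq F ((a : ℤ) + i) ((b : ℤ) - i) =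
      ∑ i ∈ Finset.range (n + 2),
        MvPolynomial.C (kap qq i) * gg qq F ((a : ℤ) + (i : ℤ)) ((b : ℤ) - (i : ℤ)) := rfl
  have hc4 : ∑ i ∈ Finset.range (n + 2),
        MvPolynomial.C (kap qq i) * gg qq F (((b + 1 : ℕ) : ℤ) + i) (((a - 1 : ℕ) : ℤ) - i) =
      ∑ i ∈ Finset.range (n + 2),
        MvPolynomial.C (kap qq i) * gg qq F ((a : ℤ) + (-1 - (i : ℤ))) ((b : ℤ) - (-1 - (i : ℤ))) :=
    Finset.sum_congr rfl fun i _ => congrArg₂ (· * ·) rfl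
      (by rw [gg_symm]; congr 1 <;> push_cast [Nat.cast_sub ha] <;> ring)
  rw [h1, h2, h3, h4, e1, e2, e3, e4, hc1, hc2, hc4]
  linear_combination (MvPolynomial.C E : SymF) * FS

end
end

section
/- For any legal schedule W = (w_1,...,w_{k-1}), specializing all variables x_i to 1 in P_W gives P_W[X_k;q]|_{x_i=1 for all i} = (1+q) · Π_{i=1}^{k-1} [w_i]_q, where [w]_q = 1 + q + ... + q^{w-1}. -/
open Polynomial Finset

noncomputable section

def qint (q : K) (n : ℕ) : K := ∑ i ∈ Finset.range n, q ^ i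

def Legal (W : List ℕ) : Prop :=
  (∀ h : W ≠ [], 1 ≤ W.head h ∧ W.head h ≤ 2) ∧
    List.Chain' (fun a b => 1 ≤ b ∧ b ≤ a + 1) W

def Prev (q : K) : List ℕ → MvPolynomial ℤ K
  | [] => MvPolynomial.C q * MvPolynomial.X (-1) + MvPolynomial.X 0
  | w :: V =>
      MvPolynomial.C ((1 - q)⁻¹) *
        ((MvPolynomial.X ((V.length : ℤ) + 1) - MvPolynomial.C (q ^ w)) * Prev q V +
          (1 - MvPolynomial.X ((V.length : ℤ) + 1)) *
            MvPolynomial.aeval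
              (fun j : ℤ =>
                if (V.length : ℤ) + 1 - (w : ℤ) ≤ j ∧ j ≤ (V.length : ℤ) then
                  MvPolynomial.C q * MvPolynomial.X j
                else MvPolynomial.X j)
              (Prev q V))

def Psched (q : K) (W : List ℕ) : MvPolynomial ℤ K := Prev q W.reverse

def Qsched (q : K) (W : List ℕ) : Polynomial K :=
  MvPolynomial.aeval (fun _ : ℤ => (Polynomial.X : Polynomial K)) (Psched q W)

def TameFE (q : K) (W : List ℕ) : Prop :=
  ∀ x : K, x ≠ 0 →
    (1 - q / x) * (Qsched q W).eval x +
        x ^ (W.length + 1) * (1 - q * x) * (Qsched q W).eval x⁻¹ =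
      (1 + x ^ (W.length + 1)) * ((1 - q ^ 2) * (W.map (qint q)).prod)

lemma one_sub_qq_ne : (1 : K) - qq ≠ 0 := by
  intro h
  have hq : qq = 1 := by linear_combination -h
  have : (RatFunc.X : RatFunc ℚ).num = (1 : RatFunc ℚ).num := by rw [← hq]; rfl
  rw [RatFunc.num_X, RatFunc.num_one] at this
  simpa using congrArg Polynomial.natDegree this

lemma qint_eq (w : ℕ) : (1 - qq)⁻¹ * (1 - qq ^ w) = qint qq w := by
  have h2 : (1 - qq) * qint qq w = 1 - qq ^ w := by
    rw [qint]; linear_combination -geom_sum_mul qq w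
  rw [← h2, ← mul_assoc, inv_mul_cancel₀ one_sub_qq_ne, one_mul]

lemma evalOnes (V : List ℕ) :
    MvPolynomial.eval (fun _ : ℤ => (1 : K)) (Prev qq V) =
      (1 + qq) * (V.map (qint qq)).prod := by
  induction V with
  | nil => simp [Prev, add_comm]
  | cons w V ih =>
    simp only [Prev, map_add, map_mul, map_sub, map_one, MvPolynomial.eval_C,
      MvPolynomial.eval_X, List.map_cons, List.prod_cons, ih, sub_self, zero_mul, add_zero]
    rw [← qint_eq w]
    ring

/-- specializing all variables to 1 in P_W gives (1+q)·∏ [w_i]_q. -/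
theorem stmt2 (W : List ℕ) (hW : Legal W) :
    MvPolynomial.eval (fun _ : ℤ => (1 : K)) (Psched qq W) =
      (1 + qq) * (W.map (qint qq)).prod := by
  have h : (W.reverse.map (qint qq)).prod = (W.map (qint qq)).prod := by
    rw [List.map_reverse, List.prod_reverse]
  rw [Psched, evalOnes, h]

end
end

section
/- The complementation identity: for all legal schedules W = (w_1,...,w_{k-1}), P_W(X_k;q) = x_{-1} x_0 x_1 ⋯ x_{k-1} · q^{1 + Σ_{i=1}^{k-1}(w_i - 1)} · P_W(1/x_{-1}, 1/x_0, ..., 1/x_{k-1}; 1/q). -/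
open Polynomial Finset

noncomputable section

/-- Auxiliary predicate on reversed schedules. -/
def Ok : List ℕ → Prop
  | [] => True
  | w :: V => (1 ≤ w ∧ w ≤ V.length + 2) ∧ Ok V

lemma eval_aeval' (v : ℤ → K) (f : ℤ → MvPolynomial ℤ K) (p : MvPolynomial ℤ K) :
    MvPolynomial.eval v (MvPolynomial.aeval f p) =
      MvPolynomial.eval (fun j => MvPolynomial.eval v (f j)) p := by
  rw [MvPolynomial.aeval_def, MvPolynomial.eval_eval₂,
    show ((MvPolynomial.eval v).comp (algebraMap K (MvPolynomial ℤ K))) = RingHom.id K from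
      RingHom.ext (fun a => by simp), MvPolynomial.eval₂_id]

lemma ok_of_bounds : ∀ (L : List ℕ),
    (∀ j (hj : j < L.length), 1 ≤ L[j]'hj ∧ L[j]'hj ≤ L.length - j + 1) → Ok L
  | [], _ => trivial
  | w :: V, h => by
    constructor
    · have := h 0 (by simp)
      simpa using this
    · apply ok_of_bounds
      intro j hj
      have := h (j + 1) (by simpa using Nat.succ_lt_succ hj)
      simp only [List.getElem_cons_succ, List.length_cons] at this ⊢
      omega

lemma legal_bounds (W : List ℕ) (hW : Legal W) :
    ∀ j (hj : j < W.length), 1 ≤ W[j]'hj ∧ W[j]'hj ≤ j + 2 := by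
  obtain ⟨hhead, hchain⟩ := hW
  intro j
  induction j with
  | zero =>
    intro hj
    have hne : W ≠ [] := by intro h; simp [h] at hj
    have := hhead hne
    rcases W with _ | ⟨a, W⟩
    · simp at hj
    · simpa using this
  | succ j ih =>
    intro hj
    have hc := List.isChain_iff_getElem.mp hchain j (by omega)
    have hb := ih (by omega)
    omega

lemma ok_reverse (W : List ℕ) (hW : Legal W) : Ok W.reverse := by
  apply ok_of_bounds
  intro j hj
  have hj' : j < W.length := by simpa using hj
  rw [List.getElem_reverse]
  have := legal_bounds W hW (W.length - 1 - j) (by omega)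
  simp only [List.length_reverse] at *
  omega

lemma main_lemma (q : K) (hq0 : q ≠ 0) (hq1 : q ≠ 1) :
    ∀ (L : List ℕ), Ok L → ∀ (v : ℤ → K), (∀ i : ℤ, v i ≠ 0) →
      MvPolynomial.eval v (Prev q L) =
        (∏ i ∈ Finset.Icc (-1 : ℤ) (L.length : ℤ), v i) *
          q ^ (1 + (L.map (fun w => w - 1)).sum) *
            MvPolynomial.eval (fun i : ℤ => (v i)⁻¹) (Prev q⁻¹ L) := by
  intro L
  induction L with
  | nil =>
    intro _ v hv
    have h1 : Finset.Icc (-1 : ℤ) ((0 : ℕ) : ℤ) = {-1, 0} := by decide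
    simp only [Prev, map_add, map_mul, MvPolynomial.eval_C, MvPolynomial.eval_X,
      List.length_nil, List.map_nil, List.sum_nil, h1]
    rw [Finset.prod_insert (by decide), Finset.prod_singleton]
    have h0 := hv (-1); have h2 := hv 0
    field_simp
    ring
  | cons w V ih =>
    intro hok v hv
    obtain ⟨⟨hw1, hw2⟩, hokV⟩ := hok
    set n : ℤ := (V.length : ℤ) with hn
    have hn0 : 0 ≤ n := Int.natCast_nonneg _
    set v' : ℤ → K := fun j => if n + 1 - (w : ℤ) ≤ j ∧ j ≤ n then q * v j else v j with hv'
    have hv'ne : ∀ i : ℤ, v' i ≠ 0 := by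
      intro i; simp only [hv']; split
      · exact mul_ne_zero hq0 (hv i)
      · exact hv i
    have hq0' : q⁻¹ ≠ 0 := inv_ne_zero hq0
    have hq1' : q⁻¹ ≠ 1 := fun h => hq1 (by rw [← inv_inv q, h, inv_one])
    have hsub : ∀ (r : K) (u : ℤ → K),
        MvPolynomial.eval u (MvPolynomial.aeval
          (fun j : ℤ => if n + 1 - (w : ℤ) ≤ j ∧ j ≤ n then
              MvPolynomial.C r * MvPolynomial.X j else MvPolynomial.X j) (Prev r V)) =
          MvPolynomial.eval
            (fun j : ℤ => if n + 1 - (w : ℤ) ≤ j ∧ j ≤ n then r * u j else u j) (Prev r V) := by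
      intro r u
      rw [eval_aeval']
      have hfun : (fun j : ℤ => MvPolynomial.eval u
          (if n + 1 - (w : ℤ) ≤ j ∧ j ≤ n then
            MvPolynomial.C r * MvPolynomial.X j else MvPolynomial.X j)) =
          fun j : ℤ => if n + 1 - (w : ℤ) ≤ j ∧ j ≤ n then r * u j else u j := by
        funext j
        split <;> simp
      rw [hfun]
    have hA := ih hokV v hv
    have hB := ih hokV v' hv'ne
    have hB' :
        MvPolynomial.eval (fun i : ℤ => (v' i)⁻¹) (Prev q⁻¹ V) =
          MvPolynomial.eval
            (fun j : ℤ => if n + 1 - (w : ℤ) ≤ j ∧ j ≤ n then q⁻¹ * (v j)⁻¹ else (v j)⁻¹)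
            (Prev q⁻¹ V) := by
      have hfun : (fun i : ℤ => (v' i)⁻¹) =
          fun j : ℤ => if n + 1 - (w : ℤ) ≤ j ∧ j ≤ n then q⁻¹ * (v j)⁻¹ else (v j)⁻¹ := by
        funext j
        simp only [hv']
        split <;> simp [mul_inv, mul_comm]
      rw [hfun]
    have hwnd : Finset.filter (fun j : ℤ => n + 1 - (w : ℤ) ≤ j ∧ j ≤ n) (Finset.Icc (-1 : ℤ) n)
        = Finset.Icc (n + 1 - (w : ℤ)) n := by
      have hw2' : (w : ℤ) ≤ n + 2 := by
        rw [hn]; exact_mod_cast hw2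
      ext j
      simp only [Finset.mem_filter, Finset.mem_Icc]
      omega
    have hcard : (Finset.filter (fun j : ℤ => n + 1 - (w : ℤ) ≤ j ∧ j ≤ n)
        (Finset.Icc (-1 : ℤ) n)).card = w := by
      rw [hwnd, Int.card_Icc]
      omega
    have hprod : (∏ i ∈ Finset.Icc (-1 : ℤ) n, v' i)
        = q ^ w * ∏ i ∈ Finset.Icc (-1 : ℤ) n, v i := by
      rw [show (∏ i ∈ Finset.Icc (-1 : ℤ) n, v' i)
          = ∏ i ∈ Finset.Icc (-1 : ℤ) n,
              (if n + 1 - (w : ℤ) ≤ i ∧ i ≤ n then q * v i else v i) from rfl]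
      rw [Finset.prod_ite, Finset.prod_mul_distrib, Finset.prod_const, hcard, mul_assoc,
        Finset.prod_filter_mul_prod_filter_not]
    have hlen : (((w :: V).length : ℕ) : ℤ) = n + 1 := by
      simp [hn]
    have htop : (∏ i ∈ Finset.Icc (-1 : ℤ) (n + 1), v i)
        = v (n + 1) * ∏ i ∈ Finset.Icc (-1 : ℤ) n, v i := by
      rw [show Finset.Icc (-1 : ℤ) (n + 1) = insert (n + 1) (Finset.Icc (-1 : ℤ) n) from by
        ext j; simp only [Finset.mem_Icc, Finset.mem_insert]; omega]
      rw [Finset.prod_insert (by simp only [Finset.mem_Icc]; omega)]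
    obtain ⟨w', rfl⟩ : ∃ w', w = w' + 1 := ⟨w - 1, by omega⟩
    simp only [Prev, map_add, map_mul, map_sub, map_one, MvPolynomial.eval_C,
      MvPolynomial.eval_X, ← hn, hlen, List.map_cons, List.sum_cons]
    rw [hsub q v, hsub q⁻¹ (fun i : ℤ => (v i)⁻¹)]
    rw [show (MvPolynomial.eval
        (fun j : ℤ => if n + 1 - ((w' + 1 : ℕ) : ℤ) ≤ j ∧ j ≤ n then q * v j else v j)
        (Prev q V)) = MvPolynomial.eval v' (Prev q V) from rfl]
    rw [hA, hB, hB', hprod, htop]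
    set x := v (n + 1) with hx
    have hxne : x ≠ 0 := hv (n + 1)
    set P := ∏ i ∈ Finset.Icc (-1 : ℤ) n, v i with hP
    set A' := MvPolynomial.eval (fun i : ℤ => (v i)⁻¹) (Prev q⁻¹ V) with hA'
    set B' := MvPolynomial.eval
        (fun j : ℤ => if n + 1 - ((w' + 1 : ℕ) : ℤ) ≤ j ∧ j ≤ n then q⁻¹ * (v j)⁻¹ else (v j)⁻¹)
        (Prev q⁻¹ V) with hB'def
    have h1q : (1 : K) - q ≠ 0 := sub_ne_zero_of_ne (fun h => hq1 h.symm)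
    have h1q' : (1 : K) - q⁻¹ ≠ 0 := sub_ne_zero_of_ne (fun h => hq1' h.symm)
    have hsum : 1 + ((w' + 1 - 1) + (V.map (fun w => w - 1)).sum)
        = (1 + (V.map (fun w => w - 1)).sum) + w' := by omega
    rw [hsum]
    set e := 1 + (V.map (fun w => w - 1)).sum with he
    rw [pow_add]
    have hinv : ((1 : K) - q⁻¹)⁻¹ = -q * (1 - q)⁻¹ := by
      rw [← inv_inv (-q * (1 - q)⁻¹)]
      congr 1
      rw [mul_inv, inv_inv, inv_neg]
      field_simp
      ring
    rw [hinv, inv_pow]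
    have hqp : q ^ (w' + 1) ≠ 0 := pow_ne_zero _ hq0
    field_simp
    ring

/-- complementation identity: for all legal schedules W (of length k-1),
P_W(X_k;q) = x_{-1}⋯x_{k-1} · q^{1+Σ(w_i-1)} · P_W(1/x_{-1},…,1/x_{k-1};1/q),
stated via evaluation at an arbitrary assignment of nonzero values to the variables. -/
theorem stmt5 (W : List ℕ) (hW : Legal W) (v : ℤ → K) (hv : ∀ i : ℤ, v i ≠ 0) :
    MvPolynomial.eval v (Psched qq W) =
      (∏ i ∈ Finset.Icc (-1 : ℤ) (W.length : ℤ), v i) *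
        qq ^ (1 + (W.map (fun w => w - 1)).sum) *
          MvPolynomial.eval (fun i : ℤ => (v i)⁻¹) (Psched qq⁻¹ W) := by
  have hq0 : qq ≠ 0 := RatFunc.X_ne_zero
  have hq1 : qq ≠ 1 := by
    intro h
    have := RatFunc.algebraMap_injective ℚ
      (by simpa [qq, RatFunc.algebraMap_X] using h : algebraMap ℚ[X] K X = algebraMap ℚ[X] K 1)
    simpa using congrArg Polynomial.natDegree this
  have := main_lemma qq hq0 hq1 W.reverse (ok_reverse W hW) v hv
  simpa [Psched, List.sum_reverse, List.map_reverse] using this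

end
end

section
/- For all legal schedules W = (w_1,...,w_{k-1}), the coefficients A_b(q) in Q_W(x;q) = Σ_{b=1}^k x^b A_b(q) satisfy A_b(q) = q^{1+Σ_{i=1}^{k-1}(w_i-1)} A_{k+1-b}(1/q) for 1 ≤ b ≤ k. -/
open Polynomial Finset

noncomputable section

/-! ### Auxiliary development -/

/-- `Good V` : legality condition on the reversed schedule list. -/
def Good : List ℕ → Prop
  | [] => True
  | w :: V => 1 ≤ w ∧ w ≤ V.length + 2 ∧ Good V

/-- The coefficient of the multilinear monomial `∏_{j ∈ s} X j` in `Prev q V`. -/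
def cf (q : K) : List ℕ → Finset ℤ → K
  | [], s => if s = {(-1 : ℤ)} then q else if s = {(0 : ℤ)} then 1 else 0
  | w :: V, s =>
      if ((V.length : ℤ) + 1) ∈ s then
        (1 - q)⁻¹ * (1 - q ^ ((Finset.Icc ((V.length : ℤ) + 1 - w) (V.length : ℤ)
            ∩ s.erase ((V.length : ℤ) + 1)).card)) * cf q V (s.erase ((V.length : ℤ) + 1))
      else
        (1 - q)⁻¹ * (q ^ ((Finset.Icc ((V.length : ℤ) + 1 - w) (V.length : ℤ) ∩ s).card)
            - q ^ w) * cf q V s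

lemma Icc_neg_one_zero : Finset.Icc (-1 : ℤ) 0 = {-1, 0} := by
  ext j; simp [Finset.mem_Icc]; omega

lemma Icc_insert (m : ℕ) :
    Finset.Icc (-1 : ℤ) ((m : ℤ) + 1) = insert ((m : ℤ) + 1) (Finset.Icc (-1 : ℤ) (m : ℤ)) := by
  ext j; simp [Finset.mem_Icc]; omega

lemma cf_nil_empty (q : K) : cf q [] ∅ = 0 := by
  simp [cf, (Finset.singleton_nonempty (-1 : ℤ)).ne_empty.symm,
    (Finset.singleton_nonempty (0 : ℤ)).ne_empty.symm]

lemma cf_nil_pair (q : K) : cf q [] {-1, 0} = 0 := by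
  have h1 : ({-1, 0} : Finset ℤ) ≠ {-1} := by
    intro h
    have : (0 : ℤ) ∈ ({-1, 0} : Finset ℤ) := by simp
    rw [h] at this; simp at this
  have h2 : ({-1, 0} : Finset ℤ) ≠ {0} := by
    intro h
    have : (-1 : ℤ) ∈ ({-1, 0} : Finset ℤ) := by simp
    rw [h] at this; simp at this
  simp [cf, h1, h2]

lemma cf_nil_neg (q : K) : cf q [] {-1} = q := by simp [cf]

lemma cf_nil_zero (q : K) : cf q [] {0} = 1 := by
  have h1 : ({0} : Finset ℤ) ≠ {-1} := by
    intro h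
    have : (0 : ℤ) ∈ ({0} : Finset ℤ) := by simp
    rw [h] at this; simp at this
  simp [cf, h1]

lemma prev_rep (q : K) (V : List ℕ) :
    Prev q V = ∑ s ∈ (Finset.Icc (-1 : ℤ) (V.length : ℤ)).powerset,
      MvPolynomial.C (cf q V s) * ∏ j ∈ s, MvPolynomial.X j := by
  induction V with
  | nil =>
      have h0 : ((([] : List ℕ).length : ℕ) : ℤ) = 0 := by simp
      rw [h0, Icc_neg_one_zero]
      have hne : (-1 : ℤ) ∉ ({0} : Finset ℤ) := by simp
      have hne0 : (0 : ℤ) ∉ (∅ : Finset ℤ) := by simp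
      rw [show ({-1, 0} : Finset ℤ) = insert (-1) {0} from rfl,
        Finset.sum_powerset_insert hne,
        show ({0} : Finset ℤ) = insert 0 ∅ from rfl,
        Finset.sum_powerset_insert hne0, Finset.sum_powerset_insert hne0]
      simp only [Finset.powerset_empty, Finset.sum_singleton]
      rw [show (insert (0:ℤ) ∅ : Finset ℤ) = {0} from rfl,
        show (insert (-1:ℤ) ∅ : Finset ℤ) = {-1} from rfl,
        show (insert (-1 : ℤ) ({0} : Finset ℤ)) = {-1, 0} from rfl,
        cf_nil_empty, cf_nil_zero, cf_nil_neg, cf_nil_pair]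
      simp [Prev]
      ring
  | cons w V ih =>
      set t : ℤ := (V.length : ℤ) + 1 with ht
      set Iv : Finset ℤ := Finset.Icc (-1 : ℤ) (V.length : ℤ) with hIv
      set Ww : Finset ℤ := Finset.Icc (t - w) (V.length : ℤ) with hWw
      have htIv : t ∉ Iv := by simp [hIv, Finset.mem_Icc]; omega
      have hlen : ((w :: V).length : ℤ) = (V.length : ℤ) + 1 := by
        simp
      rw [show Prev q (w :: V) =
        MvPolynomial.C ((1 - q)⁻¹) *
        ((MvPolynomial.X t - MvPolynomial.C (q ^ w)) * Prev q V +
          (1 - MvPolynomial.X t) *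
            MvPolynomial.aeval
              (fun j : ℤ =>
                if t - (w : ℤ) ≤ j ∧ j ≤ (V.length : ℤ) then
                  MvPolynomial.C q * MvPolynomial.X j
                else MvPolynomial.X j)
              (Prev q V)) from rfl]
      rw [hlen, Icc_insert V.length, Finset.sum_powerset_insert htIv]
      set g : ℤ → MvPolynomial ℤ K := fun j : ℤ =>
        if t - (w : ℤ) ≤ j ∧ j ≤ (V.length : ℤ) then
          MvPolynomial.C q * MvPolynomial.X j
        else MvPolynomial.X j with hg
      have key : ∀ s ∈ Iv.powerset,
          MvPolynomial.C ((1 - q)⁻¹) *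
            ((MvPolynomial.X t - MvPolynomial.C (q ^ w)) *
              (MvPolynomial.C (cf q V s) * ∏ j ∈ s, MvPolynomial.X j) +
            (1 - MvPolynomial.X t) *
              MvPolynomial.aeval g (MvPolynomial.C (cf q V s) * ∏ j ∈ s, MvPolynomial.X j))
          = MvPolynomial.C (cf q (w :: V) s) * ∏ j ∈ s, MvPolynomial.X j +
            MvPolynomial.C (cf q (w :: V) (insert t s)) * ∏ j ∈ insert t s, MvPolynomial.X j := by
        intro s hs
        rw [Finset.mem_powerset] at hs
        have hts : t ∉ s := fun h => htIv (hs h)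
        -- compute the scaled product
        have hgj : ∀ j : ℤ, g j = (if j ∈ Ww then MvPolynomial.C q else 1) * MvPolynomial.X j := by
          intro j
          simp only [hg, hWw, Finset.mem_Icc]
          split_ifs <;> simp
        have haev : MvPolynomial.aeval g (MvPolynomial.C (cf q V s) * ∏ j ∈ s, MvPolynomial.X j)
            = MvPolynomial.C (cf q V s) * (MvPolynomial.C (q ^ (Ww ∩ s).card) *
                ∏ j ∈ s, MvPolynomial.X j) := by
          rw [map_mul, MvPolynomial.aeval_C, MvPolynomial.algebraMap_eq, map_prod]
          congr 1
          simp only [MvPolynomial.aeval_X]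
          calc ∏ j ∈ s, g j
              = ∏ j ∈ s, (if j ∈ Ww then MvPolynomial.C q else 1) * MvPolynomial.X j := by
                exact Finset.prod_congr rfl fun j _ => hgj j
            _ = (∏ j ∈ s, if j ∈ Ww then MvPolynomial.C q else 1) * ∏ j ∈ s, MvPolynomial.X j :=
                Finset.prod_mul_distrib
            _ = MvPolynomial.C (q ^ (Ww ∩ s).card) * ∏ j ∈ s, MvPolynomial.X j := by
                rw [Finset.prod_ite_mem s Ww (fun _ => MvPolynomial.C q), Finset.prod_const,
                  Finset.inter_comm, ← MvPolynomial.C_pow]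
        rw [haev]
        have hcf1 : cf q (w :: V) s = (1 - q)⁻¹ * (q ^ ((Ww ∩ s).card) - q ^ w) * cf q V s := by
          rw [show cf q (w :: V) s = if ((V.length : ℤ) + 1) ∈ s then
            (1 - q)⁻¹ * (1 - q ^ ((Finset.Icc ((V.length : ℤ) + 1 - w) (V.length : ℤ)
              ∩ s.erase ((V.length : ℤ) + 1)).card)) * cf q V (s.erase ((V.length : ℤ) + 1))
          else
            (1 - q)⁻¹ * (q ^ ((Finset.Icc ((V.length : ℤ) + 1 - w) (V.length : ℤ) ∩ s).card)
              - q ^ w) * cf q V s from rfl]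
          rw [if_neg (by rw [← ht]; exact hts)]
        have hcf2 : cf q (w :: V) (insert t s)
            = (1 - q)⁻¹ * (1 - q ^ ((Ww ∩ s).card)) * cf q V s := by
          rw [show cf q (w :: V) (insert t s) = if ((V.length : ℤ) + 1) ∈ (insert t s) then
            (1 - q)⁻¹ * (1 - q ^ ((Finset.Icc ((V.length : ℤ) + 1 - w) (V.length : ℤ)
              ∩ (insert t s).erase ((V.length : ℤ) + 1)).card)) *
                cf q V ((insert t s).erase ((V.length : ℤ) + 1))
          else
            (1 - q)⁻¹ * (q ^ ((Finset.Icc ((V.length : ℤ) + 1 - w) (V.length : ℤ)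
              ∩ (insert t s)).card) - q ^ w) * cf q V (insert t s) from rfl]
          rw [if_pos (by rw [← ht]; exact Finset.mem_insert_self t s)]
          rw [← ht, Finset.erase_insert hts]
        rw [hcf1, hcf2, Finset.prod_insert hts]
        simp only [map_mul, map_sub, map_one, map_pow]
        ring
      rw [ih, map_sum (MvPolynomial.aeval g), Finset.mul_sum, Finset.mul_sum,
        ← Finset.sum_add_distrib, Finset.mul_sum]
      rw [Finset.sum_congr rfl key, Finset.sum_add_distrib]

lemma scal1 (q : K) (hq0 : q ≠ 0) (a w : ℤ) :
    (1 - q)⁻¹ * (1 - q ^ a) = q ^ (w - 1) * ((1 - q⁻¹)⁻¹ * (q ^ (a - w) - q ^ (-w))) := by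
  rcases eq_or_ne q 1 with h | h
  · simp [h]
  · have h2 : (1 : K) - q ≠ 0 := fun hc => h ((sub_eq_zero.mp hc).symm)
    have h1 : (1 - q⁻¹)⁻¹ = -(q * (1 - q)⁻¹) := by
      apply inv_eq_of_mul_eq_one_right
      field_simp
      ring
    have h3 : q ^ w ≠ 0 := zpow_ne_zero _ hq0
    rw [h1]
    simp only [zpow_sub₀ hq0, zpow_neg]
    field_simp
    ring

lemma scal2 (q : K) (hq0 : q ≠ 0) (a w : ℤ) :
    (1 - q)⁻¹ * (q ^ a - q ^ w) = q ^ (w - 1) * ((1 - q⁻¹)⁻¹ * (1 - q ^ (a - w))) := by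
  rcases eq_or_ne q 1 with h | h
  · simp [h]
  · have h2 : (1 : K) - q ≠ 0 := fun hc => h ((sub_eq_zero.mp hc).symm)
    have h1 : (1 - q⁻¹)⁻¹ = -(q * (1 - q)⁻¹) := by
      apply inv_eq_of_mul_eq_one_right
      field_simp
      ring
    have h3 : q ^ w ≠ 0 := zpow_ne_zero _ hq0
    rw [h1]
    simp only [zpow_sub₀ hq0, zpow_neg]
    field_simp
    ring

lemma cf_cons_mem (q : K) (w : ℕ) (V : List ℕ) (s : Finset ℤ) (h : ((V.length : ℤ) + 1) ∈ s) :
    cf q (w :: V) s = (1 - q)⁻¹ * (1 - q ^ ((Finset.Icc ((V.length : ℤ) + 1 - w) (V.length : ℤ)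
        ∩ s.erase ((V.length : ℤ) + 1)).card)) * cf q V (s.erase ((V.length : ℤ) + 1)) := by
  rw [show cf q (w :: V) s = if ((V.length : ℤ) + 1) ∈ s then
      (1 - q)⁻¹ * (1 - q ^ ((Finset.Icc ((V.length : ℤ) + 1 - w) (V.length : ℤ)
          ∩ s.erase ((V.length : ℤ) + 1)).card)) * cf q V (s.erase ((V.length : ℤ) + 1))
    else
      (1 - q)⁻¹ * (q ^ ((Finset.Icc ((V.length : ℤ) + 1 - w) (V.length : ℤ) ∩ s).card)
          - q ^ w) * cf q V s from rfl, if_pos h]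

lemma cf_cons_not_mem (q : K) (w : ℕ) (V : List ℕ) (s : Finset ℤ)
    (h : ((V.length : ℤ) + 1) ∉ s) :
    cf q (w :: V) s = (1 - q)⁻¹ * (q ^ ((Finset.Icc ((V.length : ℤ) + 1 - w) (V.length : ℤ)
        ∩ s).card) - q ^ w) * cf q V s := by
  rw [show cf q (w :: V) s = if ((V.length : ℤ) + 1) ∈ s then
      (1 - q)⁻¹ * (1 - q ^ ((Finset.Icc ((V.length : ℤ) + 1 - w) (V.length : ℤ)
          ∩ s.erase ((V.length : ℤ) + 1)).card)) * cf q V (s.erase ((V.length : ℤ) + 1))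
    else
      (1 - q)⁻¹ * (q ^ ((Finset.Icc ((V.length : ℤ) + 1 - w) (V.length : ℤ) ∩ s).card)
          - q ^ w) * cf q V s from rfl, if_neg h]

lemma scal1' (q : K) (hq0 : q ≠ 0) (a w : ℕ) (hw : 1 ≤ w) (haw : a ≤ w) :
    (1 - q)⁻¹ * (1 - q ^ a) =
      q ^ (w - 1) * ((1 - q⁻¹)⁻¹ * ((q⁻¹) ^ (w - a) - (q⁻¹) ^ w)) := by
  have h := scal1 q hq0 (a : ℤ) (w : ℤ)
  rw [show (a : ℤ) - (w : ℤ) = -(((w - a : ℕ) : ℤ)) from by omega,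
    show (w : ℤ) - 1 = ((w - 1 : ℕ) : ℤ) from by omega,
    show -(w : ℤ) = -(((w : ℕ) : ℤ)) from rfl] at h
  simp only [zpow_neg, zpow_natCast, ← inv_pow] at h
  exact h

lemma scal2' (q : K) (hq0 : q ≠ 0) (a w : ℕ) (hw : 1 ≤ w) (haw : a ≤ w) :
    (1 - q)⁻¹ * (q ^ a - q ^ w) =
      q ^ (w - 1) * ((1 - q⁻¹)⁻¹ * (1 - (q⁻¹) ^ (w - a))) := by
  have h := scal2 q hq0 (a : ℤ) (w : ℤ)
  rw [show (a : ℤ) - (w : ℤ) = -(((w - a : ℕ) : ℤ)) from by omega,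
    show (w : ℤ) - 1 = ((w - 1 : ℕ) : ℤ) from by omega] at h
  simp only [zpow_neg, zpow_natCast, ← inv_pow] at h
  exact h

lemma diff_pair_neg : ({-1, 0} : Finset ℤ) \ {-1} = {0} := by
  ext j; simp [Finset.mem_sdiff]; omega

lemma diff_pair_zero : ({-1, 0} : Finset ℤ) \ {0} = {-1} := by
  ext j; simp [Finset.mem_sdiff]

lemma cf_compl (q : K) (hq0 : q ≠ 0) (V : List ℕ) (hV : Good V) :
    ∀ s ⊆ Finset.Icc (-1 : ℤ) (V.length : ℤ),
      cf q V s = q ^ (1 + (V.map (fun w => w - 1)).sum) *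
        cf q⁻¹ V (Finset.Icc (-1 : ℤ) (V.length : ℤ) \ s) := by
  induction V with
  | nil =>
      intro s hs
      rw [show ((([] : List ℕ).length : ℕ) : ℤ) = 0 from by simp] at hs ⊢
      rw [Icc_neg_one_zero] at hs ⊢
      simp only [List.map_nil, List.sum_nil, add_zero, pow_one]
      by_cases h1 : (-1 : ℤ) ∈ s <;> by_cases h2 : (0 : ℤ) ∈ s
      · have hse : s = {-1, 0} := by
          apply Finset.Subset.antisymm hs
          intro j hj
          simp only [Finset.mem_insert, Finset.mem_singleton] at hj
          rcases hj with rfl | rfl <;> assumption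
        rw [hse, Finset.sdiff_self, cf_nil_pair, cf_nil_empty, mul_zero]
      · have hse : s = {-1} := by
          apply Finset.Subset.antisymm
          · intro j hj
            have := hs hj
            simp only [Finset.mem_insert, Finset.mem_singleton] at this ⊢
            rcases this with h | h
            · exact h
            · exact absurd (h ▸ hj) h2
          · simp [h1]
        rw [hse, diff_pair_neg, cf_nil_neg, cf_nil_zero, mul_one]
      · have hse : s = {0} := by
          apply Finset.Subset.antisymm
          · intro j hj
            have := hs hj
            simp only [Finset.mem_insert, Finset.mem_singleton] at this ⊢
            rcases this with h | h
            · exact absurd (h ▸ hj) h1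
            · exact h
          · simp [h2]
        rw [hse, diff_pair_zero, cf_nil_zero, cf_nil_neg, mul_inv_cancel₀ hq0]
      · have hse : s = ∅ := by
          apply Finset.eq_empty_of_forall_notMem
          intro j hj
          have := hs hj
          simp only [Finset.mem_insert, Finset.mem_singleton] at this
          rcases this with h | h
          · exact h1 (h ▸ hj)
          · exact h2 (h ▸ hj)
        rw [hse, Finset.sdiff_empty, cf_nil_empty, cf_nil_pair, mul_zero]
  | cons w V ih =>
      intro s hs
      obtain ⟨hw1, hw2, hVg⟩ := hV
      have hlen : (((w :: V).length : ℕ) : ℤ) = (V.length : ℤ) + 1 := by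
        push_cast [List.length_cons]; ring
      rw [hlen] at hs ⊢
      rw [Icc_insert V.length] at hs ⊢
      have htIv : ((V.length : ℤ) + 1) ∉ Finset.Icc (-1 : ℤ) (V.length : ℤ) := by
        simp [Finset.mem_Icc]
      have hWsub : Finset.Icc ((V.length : ℤ) + 1 - w) (V.length : ℤ)
          ⊆ Finset.Icc (-1 : ℤ) (V.length : ℤ) := by
        intro j hj
        simp only [Finset.mem_Icc] at hj ⊢
        omega
      have hcardW : (Finset.Icc ((V.length : ℤ) + 1 - w) (V.length : ℤ)).card = w := by
        rw [Int.card_Icc]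
        omega
      have hexp : 1 + ((w :: V).map (fun w => w - 1)).sum
          = (w - 1) + (1 + (V.map (fun w => w - 1)).sum) := by
        simp only [List.map_cons, List.sum_cons]
        omega
      rw [hexp, pow_add]
      specialize ih hVg
      by_cases hts : ((V.length : ℤ) + 1) ∈ s
      · have hs0 : s.erase ((V.length : ℤ) + 1) ⊆ Finset.Icc (-1 : ℤ) (V.length : ℤ) := by
          intro j hj
          rw [Finset.mem_erase] at hj
          rcases Finset.mem_insert.mp (hs hj.2) with h | h
          · exact absurd h hj.1
          · exact h
        have hdiff : insert ((V.length : ℤ) + 1) (Finset.Icc (-1 : ℤ) (V.length : ℤ)) \ s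
            = Finset.Icc (-1 : ℤ) (V.length : ℤ) \ s.erase ((V.length : ℤ) + 1) := by
          ext j
          by_cases hjt : j = (V.length : ℤ) + 1
          · subst hjt; simp [hts, htIv]
          · simp [Finset.mem_sdiff, Finset.mem_insert, Finset.mem_erase, hjt]
        rw [hdiff]
        have ha_le : (Finset.Icc ((V.length : ℤ) + 1 - w) (V.length : ℤ)
            ∩ s.erase ((V.length : ℤ) + 1)).card ≤ w :=
          le_trans (Finset.card_le_card Finset.inter_subset_left) hcardW.le
        have hncompl : ((V.length : ℤ) + 1) ∉
            Finset.Icc (-1 : ℤ) (V.length : ℤ) \ s.erase ((V.length : ℤ) + 1) :=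
          fun h => htIv (Finset.mem_sdiff.mp h).1
        have hcc : (Finset.Icc ((V.length : ℤ) + 1 - w) (V.length : ℤ)
            ∩ (Finset.Icc (-1 : ℤ) (V.length : ℤ) \ s.erase ((V.length : ℤ) + 1))).card
            = w - (Finset.Icc ((V.length : ℤ) + 1 - w) (V.length : ℤ)
                ∩ s.erase ((V.length : ℤ) + 1)).card := by
          have h1 : Finset.Icc ((V.length : ℤ) + 1 - w) (V.length : ℤ)
              ∩ (Finset.Icc (-1 : ℤ) (V.length : ℤ) \ s.erase ((V.length : ℤ) + 1))
              = Finset.Icc ((V.length : ℤ) + 1 - w) (V.length : ℤ)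
                \ (Finset.Icc ((V.length : ℤ) + 1 - w) (V.length : ℤ)
                    ∩ s.erase ((V.length : ℤ) + 1)) := by
            ext j
            simp only [Finset.mem_inter, Finset.mem_sdiff]
            constructor
            · rintro ⟨hw', _, hn⟩
              exact ⟨hw', fun hc => hn hc.2⟩
            · rintro ⟨hw', hn⟩
              exact ⟨hw', hWsub hw', fun hc => hn ⟨hw', hc⟩⟩
          rw [h1, Finset.card_sdiff_of_subset Finset.inter_subset_left, hcardW]
        rw [cf_cons_mem q w V s hts, cf_cons_not_mem q⁻¹ w V _ hncompl, hcc,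
          ih _ hs0]
        have key := scal1' q hq0 _ w hw1 ha_le
        linear_combination (q ^ (1 + (V.map (fun w => w - 1)).sum) *
          cf q⁻¹ V (Finset.Icc (-1 : ℤ) (V.length : ℤ) \ s.erase ((V.length : ℤ) + 1))) * key
      · have hssub : s ⊆ Finset.Icc (-1 : ℤ) (V.length : ℤ) := by
          intro j hj
          rcases Finset.mem_insert.mp (hs hj) with h | h
          · exact absurd (h ▸ hj) hts
          · exact h
        have hdiff : insert ((V.length : ℤ) + 1) (Finset.Icc (-1 : ℤ) (V.length : ℤ)) \ s
            = insert ((V.length : ℤ) + 1) (Finset.Icc (-1 : ℤ) (V.length : ℤ) \ s) := by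
          ext j
          by_cases hjt : j = (V.length : ℤ) + 1
          · subst hjt; simp [hts, htIv]
          · simp [Finset.mem_sdiff, Finset.mem_insert, hjt]
        rw [hdiff]
        have hmem : ((V.length : ℤ) + 1) ∈
            insert ((V.length : ℤ) + 1) (Finset.Icc (-1 : ℤ) (V.length : ℤ) \ s) :=
          Finset.mem_insert_self _ _
        have hnotin : ((V.length : ℤ) + 1) ∉ Finset.Icc (-1 : ℤ) (V.length : ℤ) \ s :=
          fun h => htIv (Finset.mem_sdiff.mp h).1
        have herase : (insert ((V.length : ℤ) + 1)
            (Finset.Icc (-1 : ℤ) (V.length : ℤ) \ s)).erase ((V.length : ℤ) + 1)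
            = Finset.Icc (-1 : ℤ) (V.length : ℤ) \ s := Finset.erase_insert hnotin
        have ha_le : (Finset.Icc ((V.length : ℤ) + 1 - w) (V.length : ℤ) ∩ s).card ≤ w :=
          le_trans (Finset.card_le_card Finset.inter_subset_left) hcardW.le
        have hcc : (Finset.Icc ((V.length : ℤ) + 1 - w) (V.length : ℤ)
            ∩ (Finset.Icc (-1 : ℤ) (V.length : ℤ) \ s)).card
            = w - (Finset.Icc ((V.length : ℤ) + 1 - w) (V.length : ℤ) ∩ s).card := by
          have h1 : Finset.Icc ((V.length : ℤ) + 1 - w) (V.length : ℤ)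
              ∩ (Finset.Icc (-1 : ℤ) (V.length : ℤ) \ s)
              = Finset.Icc ((V.length : ℤ) + 1 - w) (V.length : ℤ)
                \ (Finset.Icc ((V.length : ℤ) + 1 - w) (V.length : ℤ) ∩ s) := by
            ext j
            simp only [Finset.mem_inter, Finset.mem_sdiff]
            constructor
            · rintro ⟨hw', _, hn⟩
              exact ⟨hw', fun hc => hn hc.2⟩
            · rintro ⟨hw', hn⟩
              exact ⟨hw', hWsub hw', fun hc => hn ⟨hw', hc⟩⟩
          rw [h1, Finset.card_sdiff_of_subset Finset.inter_subset_left, hcardW]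
        rw [cf_cons_not_mem q w V s hts, cf_cons_mem q⁻¹ w V _ hmem, herase, hcc,
          ih _ hssub]
        have key := scal2' q hq0 _ w hw1 ha_le
        linear_combination (q ^ (1 + (V.map (fun w => w - 1)).sum) *
          cf q⁻¹ V (Finset.Icc (-1 : ℤ) (V.length : ℤ) \ s)) * key

lemma legal_bound (W : List ℕ) (hW : Legal W) :
    ∀ i (h : i < W.length), 1 ≤ W[i] ∧ W[i] ≤ i + 2 := by
  obtain ⟨hhead, hchain⟩ := hW
  intro i
  induction i with
  | zero =>
      intro h
      have hne : W ≠ [] := List.ne_nil_of_length_pos (by omega)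
      rw [List.getElem_zero h]
      exact ⟨(hhead hne).1, le_trans (hhead hne).2 (by omega)⟩
  | succ i ih =>
      intro h
      have hc := List.isChain_iff_getElem.mp hchain i (by omega)
      have hi := ih (by omega)
      exact ⟨hc.1, by omega⟩

lemma good_aux (W : List ℕ)
    (hb : ∀ i (h : i < W.length), 1 ≤ W[i] ∧ W[i] ≤ i + 2) : Good W.reverse := by
  induction W using List.reverseRecOn with
  | nil => trivial
  | append_singleton V w ih =>
      rw [List.reverse_append, List.reverse_singleton, List.singleton_append]
      have hw : (V ++ [w])[V.length] = w := by
        simp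
      refine ⟨?_, ?_, ?_⟩
      · have h := hb V.length (by simp)
        rw [hw] at h
        exact h.1
      · have h := hb V.length (by simp)
        rw [hw] at h
        rw [List.length_reverse]
        exact h.2
      · apply ih
        intro i h
        have hlt : i < (V ++ [w]).length := by simp; omega
        have := hb i hlt
        rwa [List.getElem_append_left h] at this

lemma legal_good (W : List ℕ) (hW : Legal W) : Good W.reverse :=
  good_aux W (legal_bound W hW)

lemma card_IccV (m : ℕ) : (Finset.Icc (-1 : ℤ) (m : ℤ)).card = m + 2 := by
  rw [Int.card_Icc]
  omega

lemma Qsched_rep (q : K) (W : List ℕ) (n : ℕ) :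
    (Qsched q W).coeff n = ∑ s ∈ (Finset.Icc (-1 : ℤ) (W.reverse.length : ℤ)).powerset,
      cf q W.reverse s * (if n = s.card then 1 else 0) := by
  rw [Qsched, Psched, prev_rep, map_sum, Polynomial.finset_sum_coeff]
  apply Finset.sum_congr rfl
  intro s _
  rw [map_mul, MvPolynomial.aeval_C, map_prod]
  simp only [MvPolynomial.aeval_X, Finset.prod_const]
  rw [show (algebraMap K (Polynomial K)) (cf q W.reverse s) = Polynomial.C (cf q W.reverse s)
    from rfl, Polynomial.coeff_C_mul, Polynomial.coeff_X_pow]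

/-- the coefficients of Q_W satisfy
A_b(q) = q^{1+Σ(w_i-1)} A_{k+1-b}(1/q) for 1 ≤ b ≤ k, k = W.length + 1. -/
theorem stmt6 (W : List ℕ) (hW : Legal W) (b : ℕ) (hb1 : 1 ≤ b) (hbk : b ≤ W.length + 1) :
    (Qsched qq W).coeff b =
      qq ^ (1 + (W.map (fun w => w - 1)).sum) *
        (Qsched qq⁻¹ W).coeff (W.length + 1 + 1 - b) := by
  have hq0 : qq ≠ 0 := RatFunc.X_ne_zero
  have hlenV : W.reverse.length = W.length := List.length_reverse
  have hsum : (W.reverse.map (fun w => w - 1)).sum = (W.map (fun w => w - 1)).sum := by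
    rw [List.map_reverse, List.sum_reverse]
  rw [Qsched_rep, Qsched_rep]
  have hcompl := cf_compl qq hq0 W.reverse (legal_good W hW)
  rw [Finset.sum_congr rfl (fun s hs => by
    rw [hcompl s (Finset.mem_powerset.mp hs), mul_assoc])]
  rw [← Finset.mul_sum, ← hsum]
  congr 1
  apply Finset.sum_nbij' (i := fun s => Finset.Icc (-1 : ℤ) (W.reverse.length : ℤ) \ s)
    (j := fun t => Finset.Icc (-1 : ℤ) (W.reverse.length : ℤ) \ t)
  · intro a _
    exact Finset.mem_powerset.mpr Finset.sdiff_subset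
  · intro a _
    exact Finset.mem_powerset.mpr Finset.sdiff_subset
  · intro a ha
    exact Finset.sdiff_sdiff_eq_self (Finset.mem_powerset.mp ha)
  · intro a ha
    exact Finset.sdiff_sdiff_eq_self (Finset.mem_powerset.mp ha)
  · intro s hs
    have hsub := Finset.mem_powerset.mp hs
    have hcard : s.card ≤ W.length + 2 := by
      have := Finset.card_le_card hsub
      rwa [hlenV, card_IccV] at this
    have hc2 : (Finset.Icc (-1 : ℤ) (W.reverse.length : ℤ) \ s).card
        = (W.length + 2) - s.card := by
      rw [Finset.card_sdiff_of_subset hsub, hlenV, card_IccV]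
    rw [hc2]
    have hiff : (b = s.card) ↔ (W.length + 1 + 1 - b = W.length + 2 - s.card) := by omega
    rw [if_congr hiff rfl rfl]

end
end

section
/- Let W = (w_1,...,w_{k-1}) be a schedule and 1 ≤ w ≤ w_{k-1}+1. Write P_{W,w} = A_{W,w} + x_k B_{W,w} and let A_{W,w}(x;q), B_{W,w}(x;q) be the specializations with all variables set to x. Then both Q_W(x;q) and Q_{W,w}(x;q) satisfy their respective functional equations if and only if (1-q/x) A_{W,w}(x;q) + x^k(1-xq) B_{W,w}(1/x;q) = [w]_q (1-q^2) Π_{i=1}^{k-1}[w_i]_q. -/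
open Polynomial Finset

noncomputable section

/-- The part A_{W,w}(x;q) of P_{W,w} = A_{W,w} + x_k B_{W,w} not involving the new
variable x_k (here k = W.length + 1), specialized at all variables equal to x. -/
def Apart (q : K) (W : List ℕ) (w : ℕ) (x : K) : K :=
  MvPolynomial.eval
    (fun i : ℤ => if i = (W.length : ℤ) + 1 then 0 else x) (Psched q (W ++ [w]))

/-- The coefficient B_{W,w} of x_k in P_{W,w} = A_{W,w} + x_k B_{W,w}
(P_{W,w} has degree at most 1 in x_k), specialized at all variables equal to x. -/
def Bpart (q : K) (W : List ℕ) (w : ℕ) (x : K) : K :=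
  MvPolynomial.eval (fun _ : ℤ => x)
    (MvPolynomial.pderiv ((W.length : ℤ) + 1) (Psched q (W ++ [w])))
namespace Stmt9Aux

lemma aeval_eq_eval' (f : ℤ → K) (p : MvPolynomial ℤ K) :
    MvPolynomial.aeval f p = MvPolynomial.eval f p := by
  rw [← MvPolynomial.coe_aeval_eq_eval]; rfl

lemma eval_aeval' (f : ℤ → K) (s : ℤ → MvPolynomial ℤ K) (p : MvPolynomial ℤ K) :
    MvPolynomial.eval f (MvPolynomial.aeval s p) =
      MvPolynomial.eval (fun j => MvPolynomial.eval f (s j)) p := by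
  rw [← aeval_eq_eval' f, MvPolynomial.comp_aeval_apply]
  simp only [aeval_eq_eval']


lemma pderiv_aeval_diag (s : ℤ → MvPolynomial ℤ K) (c : ℤ → K)
    (hs : ∀ j, s j = MvPolynomial.C (c j) * MvPolynomial.X j) (i : ℤ) (p : MvPolynomial ℤ K) :
    MvPolynomial.pderiv i (MvPolynomial.aeval s p)
      = MvPolynomial.C (c i) * MvPolynomial.aeval s (MvPolynomial.pderiv i p) := by
  induction p using MvPolynomial.induction_on with
  | C a =>
    rw [MvPolynomial.aeval_C, MvPolynomial.pderiv_C, map_zero, mul_zero]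
    simp [MvPolynomial.algebraMap_eq, MvPolynomial.pderiv_C]
  | add p r hp hr => rw [map_add, map_add, hp, hr, map_add, map_add, mul_add]
  | mul_X p n hp =>
    by_cases h : n = i
    · subst h
      simp only [map_mul, MvPolynomial.aeval_X, hs n, MvPolynomial.pderiv_mul, hp,
        MvPolynomial.pderiv_C_mul, MvPolynomial.pderiv_X_self, map_add, map_one, mul_one,
        MvPolynomial.pderiv_C, mul_zero, add_zero, zero_mul]
      ring
    · simp only [map_mul, MvPolynomial.aeval_X, hs n, MvPolynomial.pderiv_mul, hp,
        MvPolynomial.pderiv_C_mul, MvPolynomial.pderiv_X_of_ne h, MvPolynomial.pderiv_C, mul_zero,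
        map_zero, add_zero, zero_mul, map_add]
      ring

lemma pderiv_prev_zero : ∀ (V : List ℕ) (j : ℤ), (V.length : ℤ) < j →
    MvPolynomial.pderiv j (Prev qq V) = 0
  | [], j, hj => by
    have h1 : (-1 : ℤ) ≠ j := by simp only [List.length_nil, Nat.cast_zero] at hj; omega
    have h2 : (0 : ℤ) ≠ j := by simp only [List.length_nil, Nat.cast_zero] at hj; omega
    rw [Prev, map_add, MvPolynomial.pderiv_C_mul, MvPolynomial.pderiv_X_of_ne h1,
      MvPolynomial.pderiv_X_of_ne h2, mul_zero, add_zero]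
  | w :: V, j, hj => by
    have hlen : (V.length : ℤ) < j := by
      simp only [List.length_cons, Nat.cast_add, Nat.cast_one] at hj; omega
    have hne : ((V.length : ℤ) + 1) ≠ j := by
      simp only [List.length_cons, Nat.cast_add, Nat.cast_one] at hj; omega
    have hIH := pderiv_prev_zero V j hlen
    have hchain := pderiv_aeval_diag
      (fun j : ℤ => if (V.length : ℤ) + 1 - (w : ℤ) ≤ j ∧ j ≤ (V.length : ℤ) then
          MvPolynomial.C qq * MvPolynomial.X j else MvPolynomial.X j)
      (fun j : ℤ => if (V.length : ℤ) + 1 - (w : ℤ) ≤ j ∧ j ≤ (V.length : ℤ) then qq else 1)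
      (by intro j; split_ifs <;> simp) j (Prev qq V)
    simp only [Prev, MvPolynomial.pderiv_C_mul, map_add, MvPolynomial.pderiv_mul, hIH, hchain,
      map_sub, MvPolynomial.pderiv_X_of_ne hne, MvPolynomial.pderiv_C, MvPolynomial.pderiv_one,
      map_zero, mul_zero, zero_mul, sub_zero, add_zero, zero_add]


lemma eval_prev_cons (w : ℕ) (V : List ℕ) (f : ℤ → K) :
    MvPolynomial.eval f (Prev qq (w :: V)) =
      (1 - qq)⁻¹ * ((f ((V.length : ℤ) + 1) - qq ^ w) * MvPolynomial.eval f (Prev qq V) +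
        (1 - f ((V.length : ℤ) + 1)) *
          MvPolynomial.eval (fun j : ℤ =>
            if (V.length : ℤ) + 1 - (w : ℤ) ≤ j ∧ j ≤ (V.length : ℤ) then qq * f j else f j)
            (Prev qq V)) := by
  have key : (fun j : ℤ => MvPolynomial.eval f
      (if (V.length : ℤ) + 1 - (w : ℤ) ≤ j ∧ j ≤ (V.length : ℤ) then
        MvPolynomial.C qq * MvPolynomial.X j else MvPolynomial.X j)) =
      fun j : ℤ => if (V.length : ℤ) + 1 - (w : ℤ) ≤ j ∧ j ≤ (V.length : ℤ) then
        qq * f j else f j := by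
    funext j; split_ifs <;> simp
  rw [Prev]
  simp only [map_mul, map_add, map_sub, MvPolynomial.eval_C, MvPolynomial.eval_X, map_one,
    eval_aeval', key]

lemma eval_prev_congr : ∀ (V : List ℕ) (f g : ℤ → K),
    (∀ j : ℤ, j ≤ (V.length : ℤ) → f j = g j) →
    MvPolynomial.eval f (Prev qq V) = MvPolynomial.eval g (Prev qq V)
  | [], f, g, h => by
    have h1 := h (-1) (by simp)
    have h2 := h 0 (by simp)
    simp [Prev, h1, h2]
  | w :: V, f, g, h => by
    have hl : ∀ j : ℤ, j ≤ (V.length : ℤ) → f j = g j := by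
      intro j hj
      exact h j (by simp only [List.length_cons]; push_cast; omega)
    have hk : f ((V.length : ℤ) + 1) = g ((V.length : ℤ) + 1) := by
      apply h; simp only [List.length_cons]; push_cast; omega
    have h3 : MvPolynomial.eval (fun j : ℤ =>
        if (V.length : ℤ) + 1 - (w : ℤ) ≤ j ∧ j ≤ (V.length : ℤ) then qq * f j else f j)
          (Prev qq V) =
        MvPolynomial.eval (fun j : ℤ =>
        if (V.length : ℤ) + 1 - (w : ℤ) ≤ j ∧ j ≤ (V.length : ℤ) then qq * g j else g j)
          (Prev qq V) :=
      eval_prev_congr V _ _ (fun j hj => by simp only [hl j hj])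
    rw [eval_prev_cons, eval_prev_cons, hk, eval_prev_congr V f g hl, h3]

lemma qsched_eval (W : List ℕ) (x : K) :
    (Qsched qq W).eval x = MvPolynomial.eval (fun _ : ℤ => x) (Prev qq W.reverse) := by
  unfold Qsched Psched
  rw [← Polynomial.coe_aeval_eq_eval, MvPolynomial.comp_aeval_apply]
  simp only [Polynomial.aeval_X, aeval_eq_eval']


def Rval (W : List ℕ) (w : ℕ) (x : K) : K :=
  MvPolynomial.eval (fun j : ℤ =>
    if (W.length : ℤ) + 1 - (w : ℤ) ≤ j ∧ j ≤ (W.length : ℤ) then qq * x else x)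
    (Prev qq W.reverse)

lemma psched_append (W : List ℕ) (w : ℕ) :
    Psched qq (W ++ [w]) = Prev qq (w :: W.reverse) := by
  unfold Psched
  rw [List.reverse_append]
  rfl

lemma apart_eq (W : List ℕ) (w : ℕ) (x : K) :
    Apart qq W w x = (1 - qq)⁻¹ * (Rval W w x - qq ^ w * (Qsched qq W).eval x) := by
  unfold Apart
  rw [psched_append, eval_prev_cons]
  simp only [List.length_reverse, if_true]
  have e1 : MvPolynomial.eval
      (fun i : ℤ => if i = (W.length : ℤ) + 1 then 0 else x) (Prev qq W.reverse) =
      MvPolynomial.eval (fun _ : ℤ => x) (Prev qq W.reverse) := by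
    apply eval_prev_congr
    intro j hj
    simp only [List.length_reverse] at hj
    rw [if_neg (by omega)]
  have e2 : MvPolynomial.eval (fun j : ℤ =>
      if (W.length : ℤ) + 1 - (w : ℤ) ≤ j ∧ j ≤ (W.length : ℤ) then
        qq * (if j = (W.length : ℤ) + 1 then 0 else x) else
        (if j = (W.length : ℤ) + 1 then 0 else x)) (Prev qq W.reverse) = Rval W w x := by
    apply eval_prev_congr
    intro j hj
    simp only [List.length_reverse] at hj
    have hne : j ≠ (W.length : ℤ) + 1 := by omega
    simp only [if_neg hne]
  rw [e1, e2, qsched_eval]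
  ring

lemma bpart_eq (W : List ℕ) (w : ℕ) (x : K) :
    Bpart qq W w x = (1 - qq)⁻¹ * ((Qsched qq W).eval x - Rval W w x) := by
  unfold Bpart
  rw [psched_append]
  have hz : MvPolynomial.pderiv ((W.length : ℤ) + 1) (Prev qq W.reverse) = 0 :=
    pderiv_prev_zero _ _ (by simp)
  have hch := pderiv_aeval_diag
    (fun j : ℤ => if (W.length : ℤ) + 1 - (w : ℤ) ≤ j ∧ j ≤ (W.length : ℤ) then
        MvPolynomial.C qq * MvPolynomial.X j else MvPolynomial.X j)
    (fun j : ℤ => if (W.length : ℤ) + 1 - (w : ℤ) ≤ j ∧ j ≤ (W.length : ℤ) then qq else 1)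
    (by intro j; split_ifs <;> simp) ((W.length : ℤ) + 1) (Prev qq W.reverse)
  rw [Prev]
  simp only [List.length_reverse, MvPolynomial.pderiv_C_mul, map_add, MvPolynomial.pderiv_mul,
    map_sub, MvPolynomial.pderiv_X_self, MvPolynomial.pderiv_C, MvPolynomial.pderiv_one, hz,
    hch, map_zero, mul_zero, zero_mul, sub_zero, zero_sub, add_zero, one_mul, map_one, map_mul,
    neg_mul, map_neg, MvPolynomial.eval_C, eval_aeval']
  have key : (fun j : ℤ => MvPolynomial.eval (fun _ : ℤ => x)
      (if (W.length : ℤ) + 1 - (w : ℤ) ≤ j ∧ j ≤ (W.length : ℤ) then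
        MvPolynomial.C qq * MvPolynomial.X j else MvPolynomial.X j)) =
      fun j : ℤ => if (W.length : ℤ) + 1 - (w : ℤ) ≤ j ∧ j ≤ (W.length : ℤ) then
        qq * x else x := by
    funext j; split_ifs <;> simp
  rw [key, qsched_eval]
  unfold Rval
  ring

lemma qdecomp (W : List ℕ) (w : ℕ) (x : K) :
    (Qsched qq (W ++ [w])).eval x = Apart qq W w x + x * Bpart qq W w x := by
  have h := qsched_eval (W ++ [w]) x
  rw [List.reverse_append, show ([w].reverse ++ W.reverse) = w :: W.reverse from rfl,
    eval_prev_cons] at h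
  simp only [List.length_reverse] at h
  rw [h, apart_eq, bpart_eq, qsched_eval, Rval]
  ring


lemma qq_pow_ne_one {m : ℕ} (hm : 1 ≤ m) : qq ^ m ≠ 1 := by
  intro h
  have : algebraMap (Polynomial ℚ) (RatFunc ℚ) (Polynomial.X ^ m) =
      algebraMap (Polynomial ℚ) (RatFunc ℚ) 1 := by
    rw [map_one, map_pow, RatFunc.algebraMap_X]
    exact h
  have hX : (Polynomial.X : Polynomial ℚ) ^ m = 1 := RatFunc.algebraMap_injective ℚ this
  have := congrArg Polynomial.natDegree hX
  rw [Polynomial.natDegree_X_pow, Polynomial.natDegree_one] at this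
  omega

lemma qq_ne_one : qq ≠ 1 := by
  have := qq_pow_ne_one (m := 1) le_rfl
  rwa [pow_one] at this

lemma one_sub_qq_ne : (1 : K) - qq ≠ 0 := sub_ne_zero.mpr (Ne.symm qq_ne_one)

lemma qint_eq (m : ℕ) : qint qq m = (1 - qq)⁻¹ * (1 - qq ^ m) := by
  have h1 : qq - 1 ≠ 0 := sub_ne_zero.mpr qq_ne_one
  have h2 := one_sub_qq_ne
  rw [qint, geom_sum_eq qq_ne_one]
  field_simp
  ring

lemma qint_ne {m : ℕ} (hm : 1 ≤ m) : qint qq m ≠ 0 := by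
  rw [qint_eq]
  exact mul_ne_zero (inv_ne_zero one_sub_qq_ne) (sub_ne_zero.mpr (Ne.symm (qq_pow_ne_one hm)))

lemma sum_eq (W : List ℕ) (w : ℕ) (x : K) :
    Apart qq W w x + Bpart qq W w x = qint qq w * (Qsched qq W).eval x := by
  rw [apart_eq, bpart_eq, qint_eq]
  ring


def Tfun (W : List ℕ) (w : ℕ) (x : K) : K :=
  (1 - qq / x) * Apart qq W w x + x ^ (W.length + 1) * (1 - x * qq) * Bpart qq W w x⁻¹

lemma I1 (W : List ℕ) (w : ℕ) (x : K) (hx : x ≠ 0) :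
    Tfun W w x + x ^ (W.length + 1) * Tfun W w x⁻¹ =
      qint qq w * ((1 - qq / x) * (Qsched qq W).eval x +
        x ^ (W.length + 1) * (1 - qq * x) * (Qsched qq W).eval x⁻¹) := by
  unfold Tfun
  have h1 := sum_eq W w x
  have h2 := sum_eq W w x⁻¹
  have hxx : x ^ (W.length + 1) * x⁻¹ ^ (W.length + 1) = 1 := by
    rw [← mul_pow, mul_inv_cancel₀ hx, one_pow]
  rw [inv_inv, div_inv_eq_mul]
  linear_combination (1 - qq * x⁻¹) * h1 + x ^ (W.length + 1) * (1 - qq * x) * h2 +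
    (1 - x⁻¹ * qq) * Bpart qq W w x * hxx

lemma I2 (W : List ℕ) (w : ℕ) (x : K) (hx : x ≠ 0) :
    Tfun W w x + x ^ (W.length + 2) * Tfun W w x⁻¹ =
      (1 - qq / x) * (Qsched qq (W ++ [w])).eval x +
        x ^ (W.length + 2) * (1 - qq * x) * (Qsched qq (W ++ [w])).eval x⁻¹ := by
  unfold Tfun
  have hxx : x ^ (W.length + 1) * x⁻¹ ^ (W.length + 1) = 1 := by
    rw [← mul_pow, mul_inv_cancel₀ hx, one_pow]
  have hinv : x * x⁻¹ = 1 := mul_inv_cancel₀ hx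
  rw [qdecomp, qdecomp, inv_inv, div_inv_eq_mul]
  linear_combination x * (1 - x⁻¹ * qq) * Bpart qq W w x * hxx -
    x ^ (W.length + 1) * (1 - x * qq) * Bpart qq W w x⁻¹ * hinv

lemma FE1_iff (W : List ℕ) (w : ℕ) (hw : 1 ≤ w) :
    TameFE qq W ↔ ∀ x : K, x ≠ 0 →
      Tfun W w x + x ^ (W.length + 1) * Tfun W w x⁻¹ =
        (1 + x ^ (W.length + 1)) *
          (qint qq w * ((1 - qq ^ 2) * (W.map (qint qq)).prod)) := by
  unfold TameFE
  constructor
  · intro h x hx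
    linear_combination (I1 W w x hx) + qint qq w * (h x hx)
  · intro h x hx
    apply mul_left_cancel₀ (qint_ne hw)
    linear_combination (h x hx) - I1 W w x hx

lemma FE2_iff (W : List ℕ) (w : ℕ) :
    TameFE qq (W ++ [w]) ↔ ∀ x : K, x ≠ 0 →
      Tfun W w x + x ^ (W.length + 2) * Tfun W w x⁻¹ =
        (1 + x ^ (W.length + 2)) *
          (qint qq w * ((1 - qq ^ 2) * (W.map (qint qq)).prod)) := by
  unfold TameFE
  have hlen : (W ++ [w]).length + 1 = W.length + 2 := by simp
  have hprod : (((W ++ [w]).map (qint qq)).prod : K) =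
      (W.map (qint qq)).prod * qint qq w := by simp
  constructor
  · intro h x hx
    have := h x hx
    rw [hlen, hprod] at this
    linear_combination (I2 W w x hx) + this
  · intro h x hx
    rw [hlen, hprod]
    linear_combination (h x hx) - I2 W w x hx

end Stmt9Aux


/-- Theorem 2.4: both Q_W and Q_{W,w} satisfy their functional
equations iff (1-q/x)A_{W,w}(x;q) + x^k(1-xq)B_{W,w}(1/x;q) = [w]_q(1-q²)∏[w_i]_q. -/
theorem stmt9 (W : List ℕ) (w : ℕ) (hW : Legal (W ++ [w])) :
    (TameFE qq W ∧ TameFE qq (W ++ [w])) ↔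
      ∀ x : K, x ≠ 0 →
        (1 - qq / x) * Apart qq W w x +
            x ^ (W.length + 1) * (1 - x * qq) * Bpart qq W w x⁻¹ =
          qint qq w * ((1 - qq ^ 2) * (W.map (qint qq)).prod) := by
  classical
  have hw1 : 1 ≤ w := by
    rcases W with _ | ⟨a, W'⟩
    · exact (hW.1 (by simp)).1
    · have h := hW.2
      unfold List.Chain' at h; rw [List.isChain_append] at h
      obtain ⟨-, -, h3⟩ := h
      exact (h3 _ (List.getLast?_eq_getLast (l := a :: W') (by simp)) w rfl).1
  constructor
  · rintro ⟨h1, h2⟩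
    replace h1 := (Stmt9Aux.FE1_iff W w hw1).mp h1
    replace h2 := (Stmt9Aux.FE2_iff W w).mp h2
    have key : ∀ y : K, y ≠ 0 → y ≠ 1 → Stmt9Aux.Tfun W w y⁻¹ =
        qint qq w * ((1 - qq ^ 2) * (W.map (qint qq)).prod) := by
      intro y hy hy1
      have a1 := h1 y hy
      have a2 := h2 y hy
      have hyn : y ^ (W.length + 1) * (y - 1) ≠ 0 :=
        mul_ne_zero (pow_ne_zero _ hy) (sub_ne_zero.mpr hy1)
      apply mul_left_cancel₀ hyn
      linear_combination a2 - a1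
    intro x hx
    show Stmt9Aux.Tfun W w x = _
    by_cases hx1 : x = 1
    · subst hx1
      have a1 := h1 1 one_ne_zero
      rw [inv_one, one_pow] at a1
      have h2T : (2 : K) * Stmt9Aux.Tfun W w 1 =
          2 * (qint qq w * ((1 - qq ^ 2) * (W.map (qint qq)).prod)) := by
        linear_combination a1
      haveI : CharZero K := charZero_of_injective_algebraMap (algebraMap ℚ K).injective
      exact mul_left_cancel₀ two_ne_zero h2T
    · have h := key x⁻¹ (inv_ne_zero hx) (fun hc => hx1 (by rw [← inv_inv x, hc, inv_one]))
      rwa [inv_inv] at h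
  · intro h
    have hT : ∀ x : K, x ≠ 0 → Stmt9Aux.Tfun W w x =
        qint qq w * ((1 - qq ^ 2) * (W.map (qint qq)).prod) := fun x hx => h x hx
    refine ⟨(Stmt9Aux.FE1_iff W w hw1).mpr ?_, (Stmt9Aux.FE2_iff W w).mpr ?_⟩ <;>
      intro x hx <;>
      rw [hT x hx, hT x⁻¹ (inv_ne_zero hx)] <;> ring

end
end

section
/- If both schedules W' = (w_1,...,w_{k-2}) and W = (w_1,...,w_{k-1}) are tame, then the schedule (W,1) = (w_1,...,w_{k-1},1) is tame, and more generally every legal schedule of the form (w_1,...,w_{k-1},1,v_2,...,v_s) is tame. -/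
open Polynomial Finset

noncomputable section

lemma qint_spec (t : ℕ) : (1 - qq)⁻¹ * (1 - qq ^ t) = qint qq t := by
  have h := geom_sum_mul qq t
  have h2 : qint qq t * (1 - qq) = 1 - qq ^ t := by
    unfold qint; linear_combination -h
  rw [← h2, mul_comm (qint qq t) (1 - qq), ← mul_assoc, inv_mul_cancel₀ one_sub_qq_ne, one_mul]

lemma combo {x y q c A1 B1 A2 B2 W1 W2 P' U : K} (n s : ℕ)
    (hy : x * y = 1)
    (h1 : (1 - q*y)*(A1 + B1*x) + x^(n+1)*(1 - q*x)*(A2 + B2*y)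
        = (1 + x^(n+1))*((1 - q^2)*(U*P')))
    (h2 : (1 - q*y)*W1 + x^n*(1 - q*x)*W2 = (1 + x^n)*((1 - q^2)*P'))
    (r1 : A1 + B1 = U*W1) (r2 : A2 + B2 = U*W2) :
    (1 - q*y)*(c*(A1 + B1*x^(s+1))) + x^(n+s+1)*(1 - q*x)*(c*(A2 + B2*y^(s+1)))
      = (1 + x^(n+s+1))*((1 - q^2)*(U*P'*c)) := by
  have hXY : x^(s+1) * y^(s+1) = 1 := by rw [← mul_pow, hy, one_pow]
  have hE : (x - 1) * (∑ i ∈ Finset.range s, x ^ i) = x^s - 1 := by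
    rw [mul_comm]; exact geom_sum_mul x s
  set E0 := ∑ i ∈ Finset.range s, x ^ i with hE0
  linear_combination (c*(x*E0+1)) * h1 - (c*x*E0*U) * h2 - (c*x*E0*(1-q*y)) * r1
    - (c*x*E0*x^n*(1-q*x)) * r2 - (c*(1-q*x)*x^n*B2*(x*E0+1)) * hy
    + (c*(1-q*x)*x^n*B2) * hXY
    + (-(c*(1-q*y)*B1*x) - c*(1-q*x)*x^n*A2*x + c*(1-q^2)*U*P'*x*x^n) * hE

lemma combo0 {x y q c : K} (s : ℕ) (hy : x * y = 1) :
    (1 - q*y)*(c*(q*x + x^(s+1))) + x^(s+1)*(1 - q*x)*(c*(q*y + y^(s+1)))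
      = (1 + x^(s+1))*((1 - q^2)*c) := by
  have hXY : x^(s+1) * y^(s+1) = 1 := by rw [← mul_pow, hy, one_pow]
  linear_combination (-(c*q^2)*(1 + x^(s+1))) * hy + (c*(1 - q*x)) * hXY

lemma aeval_aeval (f g : ℤ → MvPolynomial ℤ K) (p : MvPolynomial ℤ K) :
    MvPolynomial.aeval f (MvPolynomial.aeval g p)
      = MvPolynomial.aeval (fun i => MvPolynomial.aeval f (g i)) p := by
  rw [MvPolynomial.aeval_eq_bind₁ g, MvPolynomial.aeval_bind₁]

lemma prev_congr (q' : K) : ∀ (V : List ℕ) (f g : ℤ → MvPolynomial ℤ K),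
    (∀ j : ℤ, j ≤ (V.length : ℤ) → f j = g j) →
    MvPolynomial.aeval f (Prev q' V) = MvPolynomial.aeval g (Prev q' V)
  | [], f, g, h => by
      simp only [Prev, map_add, map_mul, MvPolynomial.aeval_C, MvPolynomial.aeval_X]
      rw [h (-1) (by simp), h 0 (by simp)]
  | w :: V, f, g, h => by
      have hV : ∀ j : ℤ, j ≤ (V.length : ℤ) → f j = g j := by
        intro j hj
        exact h j (by simp only [List.length_cons]; push_cast; omega)
      have htop : f ((V.length : ℤ) + 1) = g ((V.length : ℤ) + 1) := by
        apply h; simp only [List.length_cons]; push_cast; omega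
      have hcomp : ∀ j : ℤ, j ≤ (V.length : ℤ) →
          (fun i => MvPolynomial.aeval f
            ((fun j : ℤ => if (V.length : ℤ) + 1 - (w : ℤ) ≤ j ∧ j ≤ (V.length : ℤ) then
                MvPolynomial.C q' * MvPolynomial.X j else MvPolynomial.X j) i)) j
          = (fun i => MvPolynomial.aeval g
            ((fun j : ℤ => if (V.length : ℤ) + 1 - (w : ℤ) ≤ j ∧ j ≤ (V.length : ℤ) then
                MvPolynomial.C q' * MvPolynomial.X j else MvPolynomial.X j) i)) j := by
        intro j hj
        by_cases hc : (V.length : ℤ) + 1 - (w : ℤ) ≤ j ∧ j ≤ (V.length : ℤ)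
        · simp only [if_pos hc, map_mul, MvPolynomial.aeval_C, MvPolynomial.aeval_X, hV j hj]
        · simp only [if_neg hc, MvPolynomial.aeval_X, hV j hj]
      simp only [Prev, map_add, map_mul, map_sub, map_one, MvPolynomial.aeval_C,
        MvPolynomial.aeval_X, aeval_aeval]
      rw [htop, prev_congr q' V f g hV,
        prev_congr q' V _ _ hcomp]

lemma prev_fix (q' : K) (V : List ℕ) (f : ℤ → MvPolynomial ℤ K)
    (h : ∀ j : ℤ, j ≤ (V.length : ℤ) → f j = MvPolynomial.X j) :
    MvPolynomial.aeval f (Prev q' V) = Prev q' V := by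
  rw [prev_congr q' V f MvPolynomial.X h]
  simp [MvPolynomial.aeval_X_left]

lemma cf1 (t : ℕ) : (MvPolynomial.C ((1 - qq)⁻¹) : MvPolynomial ℤ K) *
    (1 - MvPolynomial.C (qq ^ t)) = MvPolynomial.C (qint qq t) := by
  rw [mul_sub, mul_one, ← map_mul, ← map_sub]
  exact congrArg _ (by rw [← qint_spec t]; ring)

lemma lemL : ∀ (Trev R : List ℕ) (A B : MvPolynomial ℤ K),
    (∀ i (h : i < Trev.length), 1 ≤ Trev[i]'h ∧ Trev[i]'h + i ≤ Trev.length) →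
    (∀ f : ℤ → MvPolynomial ℤ K, (∀ j : ℤ, j < (R.length : ℤ) → f j = MvPolynomial.X j) →
        MvPolynomial.aeval f A = A) →
    (∀ f : ℤ → MvPolynomial ℤ K, (∀ j : ℤ, j < (R.length : ℤ) → f j = MvPolynomial.X j) →
        MvPolynomial.aeval f B = B) →
    Prev qq R = A + B * MvPolynomial.X (R.length : ℤ) →
    Prev qq (Trev ++ R) = MvPolynomial.C ((Trev.map (qint qq)).prod) *
      (A + B * ∏ j ∈ Finset.range (Trev.length + 1), MvPolynomial.X ((R.length : ℤ) + (j : ℤ)))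
  | [], R, A, B, hc, hA, hB, hbase => by
      simpa using hbase
  | t :: T', R, A, B, hc, hA, hB, hbase => by
      have ht : t ≤ T'.length + 1 := by
        have := (hc 0 (by simp)).2
        simpa using this
      have IH := lemL T' R A B (fun i h => by
          have := hc (i+1) (by simpa using Nat.succ_lt_succ h)
          constructor
          · exact this.1
          · have h2 := this.2
            simp only [List.getElem_cons_succ, List.length_cons] at h2 ⊢
            omega) hA hB hbase
      set Pi0 : MvPolynomial ℤ K :=
        ∏ j ∈ Finset.range (T'.length + 1), MvPolynomial.X ((R.length : ℤ) + (j : ℤ)) with hPi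
      set f0 : ℤ → MvPolynomial ℤ K := fun j : ℤ =>
        if ((T' ++ R).length : ℤ) + 1 - (t : ℤ) ≤ j ∧ j ≤ ((T' ++ R).length : ℤ) then
          MvPolynomial.C qq * MvPolynomial.X j
        else MvPolynomial.X j with hf0
      have hlenTR : ((T' ++ R).length : ℤ) = (T'.length : ℤ) + (R.length : ℤ) := by
        push_cast [List.length_append]; ring
      have hsigA : MvPolynomial.aeval f0 A = A := by
        apply hA; intro j hj
        simp only [hf0]
        rw [if_neg]
        push_cast [List.length_append]; omega
      have hsigB : MvPolynomial.aeval f0 B = B := by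
        apply hB; intro j hj
        simp only [hf0]
        rw [if_neg]
        push_cast [List.length_append]; omega
      have hsigPi : MvPolynomial.aeval f0 Pi0 = MvPolynomial.C (qq ^ t) * Pi0 := by
        rw [hPi, map_prod]
        have hfac : ∀ j ∈ Finset.range (T'.length+1),
            MvPolynomial.aeval f0 ((MvPolynomial.X ((R.length : ℤ) + (j : ℤ))) : MvPolynomial ℤ K)
            = (if T'.length+1-t ≤ j then (MvPolynomial.C qq : MvPolynomial ℤ K) else 1)
                * MvPolynomial.X ((R.length : ℤ) + (j : ℤ)) := by
          intro j hj
          rw [MvPolynomial.aeval_X]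
          simp only [hf0, Finset.mem_range] at hj ⊢
          by_cases hcj : T'.length+1-t ≤ j
          · rw [if_pos, if_pos hcj]
            push_cast [List.length_append]; omega
          · rw [if_neg, if_neg hcj, one_mul]
            push_cast [List.length_append]; omega
        rw [Finset.prod_congr rfl hfac, Finset.prod_mul_distrib]
        congr 1
        rw [Finset.prod_ite, Finset.prod_const, Finset.prod_const_one, mul_one]
        have hfilter : (Finset.range (T'.length+1)).filter (fun j => T'.length+1-t ≤ j)
            = Finset.Ico (T'.length+1-t) (T'.length+1) := by
          ext j; simp only [Finset.mem_Ico, Finset.mem_filter, Finset.mem_range]; omega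
        rw [hfilter, Nat.card_Ico]
        have htt : T'.length + 1 - (T'.length + 1 - t) = t := by omega
        rw [htt, ← map_pow]
      -- unfold Prev on the cons
      show MvPolynomial.C ((1 - qq)⁻¹) *
        ((MvPolynomial.X (((T' ++ R).length : ℤ) + 1) - MvPolynomial.C (qq ^ t)) * Prev qq (T' ++ R) +
          (1 - MvPolynomial.X (((T' ++ R).length : ℤ) + 1)) *
            MvPolynomial.aeval f0 (Prev qq (T' ++ R))) =
        MvPolynomial.C (((t :: T').map (qint qq)).prod) *
          (A + B * ∏ j ∈ Finset.range ((t :: T').length + 1),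
            MvPolynomial.X ((R.length : ℤ) + (j : ℤ)))
      rw [IH]
      have hsig : MvPolynomial.aeval f0
          (MvPolynomial.C ((T'.map (qint qq)).prod) * (A + B * Pi0)) =
          MvPolynomial.C ((T'.map (qint qq)).prod)
            * (A + MvPolynomial.C (qq ^ t) * (B * Pi0)) := by
        rw [map_mul, map_add, map_mul, MvPolynomial.aeval_C, hsigA, hsigB, hsigPi]
        rw [MvPolynomial.algebraMap_eq]
        ring
      rw [hsig]
      have hmap : ((t :: T').map (qint qq)).prod = qint qq t * (T'.map (qint qq)).prod := by
        simp
      rw [hmap, map_mul]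
      have hlen2 : (t :: T').length = T'.length + 1 := by simp
      rw [hlen2]
      rw [Finset.prod_range_succ]
      have hidx : ((R.length : ℤ) + ((T'.length+1 : ℕ) : ℤ)) = ((T' ++ R).length : ℤ) + 1 := by
        rw [hlenTR]; push_cast; ring
      rw [hidx]
      have f1 := cf1 t
      linear_combination (MvPolynomial.C ((T'.map (qint qq)).prod) *
        (A + B * Pi0 * MvPolynomial.X (((T' ++ R).length : ℤ) + 1))) * f1

lemma chain_bound : ∀ (V : List ℕ) (a : ℕ),
    List.Chain' (fun p b => 1 ≤ b ∧ b ≤ p + 1) (a :: V) →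
    ∀ i (h : i < (a :: V).length), (a :: V)[i]'h ≤ a + i ∧ (1 ≤ i → 1 ≤ (a :: V)[i]'h)
  | [], _, _, 0, _ => by simp
  | b :: V, a, hch, 0, h => by simp
  | b :: V, a, hch, (i+1), h => by
      simp only [List.Chain', List.isChain_cons_cons] at hch
      have hrec := chain_bound V b hch.2 i (by simpa using h)
      have h1 := hch.1
      simp only [List.getElem_cons_succ] at *
      constructor
      · omega
      · intro _
        rcases Nat.eq_zero_or_pos i with hi | hi
        · subst hi; simpa using h1.1
        · exact hrec.2 hi

lemma tame_ext (W T : List ℕ)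
    (hT : ∀ i (h : i < T.length), 1 ≤ T[i]'h ∧ T[i]'h ≤ i + 1)
    (hW' : TameFE qq W.dropLast) (hWt : TameFE qq W) :
    TameFE qq (W ++ T) := by
  classical
  have hTrev : ∀ i (h : i < T.reverse.length),
      1 ≤ (T.reverse)[i]'h ∧ (T.reverse)[i]'h + i ≤ T.reverse.length := by
    intro i h
    have hlen : T.reverse.length = T.length := List.length_reverse
    have h' : i < T.length := by omega
    rw [List.getElem_reverse]
    have hb := hT (T.length - 1 - i) (by omega)
    refine ⟨hb.1, ?_⟩
    have := hb.2
    omega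
  by_cases hW0 : W = []
  · -- base case : W = []
    subst hW0
    set A : MvPolynomial ℤ K := MvPolynomial.C qq * MvPolynomial.X (-1) with hAdef
    set B : MvPolynomial ℤ K := 1 with hBdef
    have hbase : Prev qq (List.reverse ([] : List ℕ)) =
        A + B * MvPolynomial.X (((List.reverse ([] : List ℕ)).length : ℤ)) := by
      show Prev qq [] = _
      simp only [Prev, hAdef, hBdef, List.reverse_nil, List.length_nil, Nat.cast_zero, one_mul]
    have hA : ∀ f : ℤ → MvPolynomial ℤ K,
        (∀ j : ℤ, j < (((List.reverse ([] : List ℕ)).length : ℤ)) → f j = MvPolynomial.X j) →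
        MvPolynomial.aeval f A = A := by
      intro f hf
      simp only [hAdef, map_mul, MvPolynomial.aeval_C, MvPolynomial.aeval_X,
        MvPolynomial.algebraMap_eq]
      rw [hf (-1) (by simp)]
    have hB : ∀ f : ℤ → MvPolynomial ℤ K,
        (∀ j : ℤ, j < (((List.reverse ([] : List ℕ)).length : ℤ)) → f j = MvPolynomial.X j) →
        MvPolynomial.aeval f B = B := by
      intro f _; simp [hBdef]
    have hL := lemL T.reverse (List.reverse []) A B hTrev hA hB hbase
    simp only [List.reverse_nil, List.append_nil, List.length_nil, Nat.cast_zero,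
      zero_add] at hL
    have hq : Qsched qq ([] ++ T) = Polynomial.C ((T.map (qint qq)).prod) *
        (Polynomial.C qq * Polynomial.X + Polynomial.X ^ (T.length + 1)) := by
      show MvPolynomial.aeval _ (Prev qq (([] ++ T) : List ℕ).reverse) = _
      rw [List.nil_append, hL]
      simp only [map_mul, map_add, MvPolynomial.aeval_C, map_prod, MvPolynomial.aeval_X,
        Finset.prod_const, Finset.card_range, List.length_reverse, Polynomial.algebraMap_eq,
        hAdef, hBdef, map_one, one_mul]
      rw [List.map_reverse, List.prod_reverse]
    intro x hx
    have hy := mul_inv_cancel₀ hx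
    rw [hq]
    simp only [Polynomial.eval_mul, Polynomial.eval_add, Polynomial.eval_pow,
      Polynomial.eval_X, Polynomial.eval_C, List.nil_append]
    have main := combo0 (x := x) (y := x⁻¹) (q := qq) (c := (T.map (qint qq)).prod)
      (s := T.length) hy
    linear_combination main
  · -- W nonempty
    obtain ⟨W', u, hWeq⟩ : ∃ W' u, W = W' ++ [u] :=
      ⟨W.dropLast, W.getLast hW0, (List.dropLast_append_getLast hW0).symm⟩
    subst hWeq
    rw [List.dropLast_concat] at hW'
    have hrev : (W' ++ [u]).reverse = u :: W'.reverse := by simp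
    set P' : MvPolynomial ℤ K := Prev qq W'.reverse with hP'def
    set fu : ℤ → MvPolynomial ℤ K := fun j : ℤ =>
      if ((W'.reverse.length : ℤ)) + 1 - (u : ℤ) ≤ j ∧ j ≤ ((W'.reverse.length : ℤ)) then
        MvPolynomial.C qq * MvPolynomial.X j
      else MvPolynomial.X j with hfudef
    set A : MvPolynomial ℤ K :=
      MvPolynomial.C ((1 - qq)⁻¹) * (MvPolynomial.aeval fu P' - MvPolynomial.C (qq ^ u) * P')
      with hAdef
    set B : MvPolynomial ℤ K :=
      MvPolynomial.C ((1 - qq)⁻¹) * (P' - MvPolynomial.aeval fu P') with hBdef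
    have hlenrev : (((u :: W'.reverse).length : ℕ) : ℤ) = (W'.reverse.length : ℤ) + 1 := by
      push_cast [List.length_cons]
      ring
    have hbase : Prev qq ((W' ++ [u]).reverse) =
        A + B * MvPolynomial.X (((W' ++ [u]).reverse.length : ℤ)) := by
      rw [hrev]
      show MvPolynomial.C ((1 - qq)⁻¹) *
        ((MvPolynomial.X ((W'.reverse.length : ℤ) + 1) - MvPolynomial.C (qq ^ u)) * P' +
          (1 - MvPolynomial.X ((W'.reverse.length : ℤ) + 1)) * MvPolynomial.aeval fu P') = _
      rw [hlenrev]
      ring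
    have hlow : ∀ f : ℤ → MvPolynomial ℤ K,
        (∀ j : ℤ, j < (((W' ++ [u]).reverse.length : ℕ) : ℤ) → f j = MvPolynomial.X j) →
        MvPolynomial.aeval f P' = P' ∧
          MvPolynomial.aeval f (MvPolynomial.aeval fu P') = MvPolynomial.aeval fu P' := by
      intro f hf
      have hlr : (((W' ++ [u]).reverse.length : ℕ) : ℤ) = (W'.reverse.length : ℤ) + 1 := by
        push_cast [List.length_reverse, List.length_append, List.length_singleton]
        ring
      have hflow : ∀ j : ℤ, j ≤ (W'.reverse.length : ℤ) → f j = MvPolynomial.X j := by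
        intro j hj; exact hf j (by omega)
      constructor
      · exact prev_fix qq W'.reverse f hflow
      · rw [aeval_aeval]
        rw [prev_congr qq W'.reverse _ fu]
        intro j hj
        by_cases hc : ((W'.reverse.length : ℤ)) + 1 - (u : ℤ) ≤ j ∧ j ≤ ((W'.reverse.length : ℤ))
        · simp only [hfudef, if_pos hc, map_mul, MvPolynomial.aeval_C, MvPolynomial.aeval_X,
            MvPolynomial.algebraMap_eq, hflow j hj]
        · simp only [hfudef, if_neg hc, MvPolynomial.aeval_X, hflow j hj]
    have hA : ∀ f : ℤ → MvPolynomial ℤ K,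
        (∀ j : ℤ, j < (((W' ++ [u]).reverse.length : ℕ) : ℤ) → f j = MvPolynomial.X j) →
        MvPolynomial.aeval f A = A := by
      intro f hf
      obtain ⟨h1, h2⟩ := hlow f hf
      simp only [hAdef, map_mul, map_sub, MvPolynomial.aeval_C, MvPolynomial.algebraMap_eq,
        h1, h2]
    have hB : ∀ f : ℤ → MvPolynomial ℤ K,
        (∀ j : ℤ, j < (((W' ++ [u]).reverse.length : ℕ) : ℤ) → f j = MvPolynomial.X j) →
        MvPolynomial.aeval f B = B := by
      intro f hf
      obtain ⟨h1, h2⟩ := hlow f hf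
      simp only [hBdef, map_mul, map_sub, MvPolynomial.aeval_C, MvPolynomial.algebraMap_eq,
        h1, h2]
    have hAB : A + B = MvPolynomial.C (qint qq u) * P' := by
      have f1 := cf1 u
      rw [hAdef, hBdef]
      linear_combination P' * f1
    have hL := lemL T.reverse ((W' ++ [u]).reverse) A B hTrev hA hB hbase
    -- specialize to one variable
    set cst : ℤ → Polynomial K := fun _ : ℤ => (Polynomial.X : Polynomial K) with hcst
    set a : Polynomial K := MvPolynomial.aeval cst A with hadef
    set b : Polynomial K := MvPolynomial.aeval cst B with hbdef
    have hc0 : ((T.reverse.map (qint qq)).prod) = (T.map (qint qq)).prod := by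
      rw [List.map_reverse, List.prod_reverse]
    have hq : Qsched qq ((W' ++ [u]) ++ T) = Polynomial.C ((T.map (qint qq)).prod) *
        (a + b * Polynomial.X ^ (T.length + 1)) := by
      show MvPolynomial.aeval cst (Prev qq (((W' ++ [u]) ++ T).reverse)) = _
      rw [List.reverse_append, hL]
      simp only [map_mul, map_add, MvPolynomial.aeval_C, map_prod, MvPolynomial.aeval_X,
        Finset.prod_const, Finset.card_range, List.length_reverse, Polynomial.algebraMap_eq, hc0]
      rw [← hadef, ← hbdef]
      simp only [hcst, Finset.prod_const, Finset.card_range]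
    have qW : Qsched qq (W' ++ [u]) = a + b * Polynomial.X := by
      show MvPolynomial.aeval cst (Prev qq ((W' ++ [u]).reverse)) = _
      rw [hbase]
      simp only [map_add, map_mul, MvPolynomial.aeval_X]
      rfl
    have qW' : a + b = Polynomial.C (qint qq u) * Qsched qq W' := by
      have h := congrArg (MvPolynomial.aeval cst) hAB
      simp only [map_add, map_mul, MvPolynomial.aeval_C, Polynomial.algebraMap_eq] at h
      exact h
    have hPW : ((W' ++ [u]).map (qint qq)).prod = (W'.map (qint qq)).prod * qint qq u := by
      simp
    have hlen1 : (W' ++ [u]).length = W'.length + 1 := by simp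
    intro x hx
    have hy := mul_inv_cancel₀ hx
    have h1 := hWt x hx
    rw [qW, hlen1, hPW] at h1
    simp only [Polynomial.eval_add, Polynomial.eval_mul, Polynomial.eval_X] at h1
    have h2 := hW' x hx
    have r1 : a.eval x + b.eval x = qint qq u * ((Qsched qq W').eval x) := by
      have h := congrArg (Polynomial.eval x) qW'
      simpa using h
    have r2 : a.eval x⁻¹ + b.eval x⁻¹ = qint qq u * ((Qsched qq W').eval x⁻¹) := by
      have h := congrArg (Polynomial.eval x⁻¹) qW'
      simpa using h
    have h1' : (1 - qq*x⁻¹)*(a.eval x + b.eval x * x) +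
        x^((W'.length+1)+1)*(1 - qq*x)*(a.eval x⁻¹ + b.eval x⁻¹ * x⁻¹)
        = (1 + x^((W'.length+1)+1))*((1 - qq^2)*((qint qq u)*((W'.map (qint qq)).prod))) := by
      linear_combination h1
    have h2' : (1 - qq*x⁻¹)*((Qsched qq W').eval x) +
        x^(W'.length+1)*(1 - qq*x)*((Qsched qq W').eval x⁻¹)
        = (1 + x^(W'.length+1))*((1 - qq^2)*((W'.map (qint qq)).prod)) := by
      linear_combination h2
    have main := combo (x := x) (y := x⁻¹) (q := qq) (c := (T.map (qint qq)).prod)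
      (A1 := a.eval x) (B1 := b.eval x) (A2 := a.eval x⁻¹) (B2 := b.eval x⁻¹)
      (W1 := (Qsched qq W').eval x) (W2 := (Qsched qq W').eval x⁻¹)
      (P' := (W'.map (qint qq)).prod) (U := qint qq u)
      (W'.length + 1) T.length hy h1' h2' r1 r2
    have hlenWT : ((W' ++ [u]) ++ T).length = W'.length + 1 + T.length := by
      simp [List.length_append]
      omega
    have hPWT : (((W' ++ [u]) ++ T).map (qint qq)).prod =
        ((W'.map (qint qq)).prod * qint qq u) * (T.map (qint qq)).prod := by
      simp [List.map_append]
      ring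
    rw [hq, hlenWT, hPWT]
    simp only [Polynomial.eval_mul, Polynomial.eval_add, Polynomial.eval_pow,
      Polynomial.eval_X, Polynomial.eval_C]
    linear_combination main

/-- Theorem 2.5: if W' = W.dropLast and W are both tame then
(W,1) is tame, and so is every legal schedule (W,1,v_2,…,v_s). -/
theorem stmt10 (W : List ℕ) (hW : Legal W)
    (hW' : TameFE qq W.dropLast) (hWt : TameFE qq W) :
    TameFE qq (W ++ [1]) ∧
      ∀ V : List ℕ, Legal (W ++ 1 :: V) → TameFE qq (W ++ 1 :: V) := by
  constructor
  · refine tame_ext W [1] ?_ hW' hWt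
    intro i h
    have hi : i = 0 := by simpa using h
    subst hi
    simp
  · intro V hLeg
    have hch : List.Chain' (fun a b => 1 ≤ b ∧ b ≤ a + 1) (1 :: V) :=
      hLeg.2.right_of_append
    refine tame_ext W (1 :: V) ?_ hW' hWt
    intro i h
    have hb := chain_bound V 1 hch i h
    constructor
    · rcases Nat.eq_zero_or_pos i with hi | hi
      · subst hi; simp
      · exact hb.2 hi
    · have := hb.1
      omega


end
end

section
/- Let W = (U, v, v+1, V) be a legal schedule in which the increasing pair (v, v+1) at positions h-1, h is not split by any bar, i.e., there is no index r with r - w_r = h. Then Q_{U,v,v+1,V}(x;q) = (1+q) Q_{U,v,v,V}(x;q) - q Q_{U,v-1,v,V}(x;q). -/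
open Polynomial Finset

noncomputable section

namespace S13

abbrev MP : Type := MvPolynomial ℤ K
local notation "MC" => (MvPolynomial.C : K →+* MP)
local notation "MX" => (MvPolynomial.X : ℤ → MP)

/-- Dilation: scale each variable `X j` by `σ j`. -/
noncomputable def dil (σ : ℤ → K) : MP →ₐ[K] MP :=
  MvPolynomial.aeval (fun j => MC (σ j) * MX j)

/-- multiplicative weight of a monomial -/
def wt (σ : ℤ → K) (d : ℤ →₀ ℕ) : K := d.prod fun j e => σ j ^ e

lemma dil_monomial (σ : ℤ → K) (d : ℤ →₀ ℕ) (c : K) :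
    dil σ (MvPolynomial.monomial d c) = MvPolynomial.monomial d (wt σ d * c) := by
  rw [dil, MvPolynomial.aeval_monomial]
  have h1 : (d.prod fun j e => (MC (σ j) * MX j : MP) ^ e)
      = MC (wt σ d) * d.prod fun j e => (MX j : MP) ^ e := by
    rw [show (fun (j : ℤ) (e : ℕ) => (MC (σ j) * MX j : MP) ^ e)
        = fun j e => MC (σ j ^ e) * (MX j) ^ e by
          funext j e; rw [mul_pow, MvPolynomial.C_pow],
      Finsupp.prod_mul, wt]
    congr 1
    rw [Finsupp.prod, Finsupp.prod, map_prod]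
  rw [h1, MvPolynomial.monomial_eq]
  have : (algebraMap K MP) c = MC c := rfl
  rw [this, map_mul]
  ring

lemma coeff_dil (σ : ℤ → K) (p : MP) (d : ℤ →₀ ℕ) :
    MvPolynomial.coeff d (dil σ p) = wt σ d * MvPolynomial.coeff d p := by
  conv_lhs => rw [p.as_sum, map_sum]
  rw [MvPolynomial.coeff_sum]
  simp_rw [dil_monomial, MvPolynomial.coeff_monomial]
  rw [Finset.sum_ite_eq' p.support d (fun d' => wt σ d' * MvPolynomial.coeff d' p)]
  by_cases h : d ∈ p.support
  · simp [h]
  · simp only [h, if_false]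
    rw [MvPolynomial.notMem_support_iff.mp h, mul_zero]

lemma dil_dil (σ τ : ℤ → K) (p : MP) :
    dil σ (dil τ p) = dil (fun j => σ j * τ j) p := by
  apply MvPolynomial.ext
  intro d
  simp only [coeff_dil]
  have : wt (fun j => σ j * τ j) d = wt σ d * wt τ d := by
    rw [wt, wt, wt, show (fun (j:ℤ) (e:ℕ) => (σ j * τ j) ^ e) = fun j e => σ j ^ e * τ j ^ e
      by funext j e; rw [mul_pow], Finsupp.prod_mul]
  rw [this]; ring

lemma degreeOf_pos_of_ne (p : MP) {j : ℤ} {d : ℤ →₀ ℕ}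
    (hd : MvPolynomial.coeff d p ≠ 0) (hj : j ∈ d.support) : 1 ≤ MvPolynomial.degreeOf j p := by
  rw [MvPolynomial.degreeOf_eq_sup]
  have hmem : d ∈ p.support := MvPolynomial.mem_support_iff.mpr hd
  calc (1 : ℕ) ≤ d j := Nat.one_le_iff_ne_zero.mpr (Finsupp.mem_support_iff.mp hj)
    _ ≤ _ := Finset.le_sup (f := fun m => m j) hmem

/-- aeval only depends on values at variables of positive degree. -/
lemma aeval_congr (f g : ℤ → MP) (p : MP)
    (H : ∀ j, f j ≠ g j → MvPolynomial.degreeOf j p = 0) :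
    MvPolynomial.aeval f p = MvPolynomial.aeval g p := by
  rw [MvPolynomial.aeval_def, MvPolynomial.aeval_def]
  apply MvPolynomial.eval₂_congr
  intro i c hi hc
  by_contra hne
  have h1 := H i hne
  have h2 := degreeOf_pos_of_ne p hc hi
  omega

lemma dil_congr (σ τ : ℤ → K) (p : MP)
    (H : ∀ j, σ j ≠ τ j → MvPolynomial.degreeOf j p = 0) : dil σ p = dil τ p := by
  show MvPolynomial.aeval _ p = MvPolynomial.aeval _ p
  apply aeval_congr
  intro j hj
  apply H j
  intro h; apply hj; rw [h]

lemma degreeOf_dil_le (σ : ℤ → K) (p : MP) (j : ℤ) :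
    MvPolynomial.degreeOf j (dil σ p) ≤ MvPolynomial.degreeOf j p := by
  rw [MvPolynomial.degreeOf_eq_sup, MvPolynomial.degreeOf_eq_sup]
  apply Finset.sup_mono
  intro d hd
  rw [MvPolynomial.mem_support_iff] at hd ⊢
  intro h
  rw [coeff_dil, h, mul_zero] at hd
  exact hd rfl

lemma dil_one (p : MP) : dil (fun _ => 1) p = p := by
  apply MvPolynomial.ext
  intro d
  rw [coeff_dil]
  have : wt (fun _ => (1:K)) d = 1 := by
    simp [wt, Finsupp.prod]
  rw [this, one_mul]

/-- weight of a single-variable scaling -/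
lemma wt_single (c : K) (m : ℤ) (d : ℤ →₀ ℕ) :
    wt (fun j => if j = m then c else 1) d = c ^ d m := by
  rw [wt, Finsupp.prod]
  by_cases h : m ∈ d.support
  · rw [Finset.prod_eq_single m (fun b _ hb => by simp [hb]) (fun h' => absurd h h')]
    simp
  · rw [Finset.prod_eq_one (fun b hb => by
      have : b ≠ m := fun e => h (e ▸ hb)
      simp [this])]
    rw [Finsupp.notMem_support_iff.mp h, pow_zero]

/-- Key multilinearity identity: if `p` has degree ≤ 1 in `x_m`, then
scaling `x_m` by `q²` equals `(1+q)`·(scale by `q`) minus `q`·(no scale). -/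
lemma key_lin (q : K) (σ : ℤ → K) (m : ℤ) (p : MP)
    (hp : MvPolynomial.degreeOf m p ≤ 1) :
    dil (fun j => σ j * (if j = m then q^2 else 1)) p
      = MC (1+q) * dil (fun j => σ j * (if j = m then q else 1)) p - MC q * dil σ p := by
  apply MvPolynomial.ext
  intro d
  rw [MvPolynomial.coeff_sub, MvPolynomial.coeff_C_mul, MvPolynomial.coeff_C_mul]
  simp only [coeff_dil]
  by_cases hc : MvPolynomial.coeff d p = 0
  · rw [hc]; ring
  · have hd : d ∈ p.support := MvPolynomial.mem_support_iff.mpr hc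
    have he : d m ≤ 1 := by
      rw [MvPolynomial.degreeOf_eq_sup] at hp
      exact le_trans (Finset.le_sup (f := fun m' => m' m) hd) hp
    have hw : ∀ c : K, wt (fun j => σ j * (if j = m then c else 1)) d = wt σ d * c ^ d m := by
      intro c
      rw [wt, show (fun (j:ℤ) (e:ℕ) => (σ j * (if j = m then c else 1)) ^ e)
          = fun j e => σ j ^ e * (if j = m then c else 1) ^ e by
            funext j e; rw [mul_pow],
        Finsupp.prod_mul]
      rw [← wt, ← wt_single c m d]
      rfl
    rw [hw, hw]
    interval_cases h : d m
    · simp; ring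
    · simp; ring

/-- interval scaling weight -/
def iv (q : K) (a b : ℤ) : ℤ → K := fun j => if a ≤ j ∧ j ≤ b then q else 1

lemma prev_cons (q : K) (w : ℕ) (V : List ℕ) :
    Prev q (w :: V) = MC ((1-q)⁻¹) *
      ((MX ((V.length:ℤ)+1) - MC (q^w)) * Prev q V +
        (1 - MX ((V.length:ℤ)+1)) *
          dil (iv q ((V.length:ℤ)+1-w) (V.length:ℤ)) (Prev q V)) := by
  have h : (fun j : ℤ => if (V.length:ℤ)+1-(w:ℤ) ≤ j ∧ j ≤ (V.length:ℤ) then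
        MvPolynomial.C q * MvPolynomial.X j else MvPolynomial.X j)
      = fun j => MC (iv q ((V.length:ℤ)+1-w) (V.length:ℤ) j) * MX j := by
    funext j
    unfold iv
    split_ifs <;> simp
  rw [Prev, h]
  rfl

lemma degreeOf_sub_le' (j : ℤ) (p r : MP) :
    MvPolynomial.degreeOf j (p - r) ≤ max (MvPolynomial.degreeOf j p) (MvPolynomial.degreeOf j r) := by
  have hneg : MvPolynomial.degreeOf j (-r) = MvPolynomial.degreeOf j r := by
    rw [MvPolynomial.degreeOf_eq_sup, MvPolynomial.degreeOf_eq_sup, MvPolynomial.support_neg]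
  rw [sub_eq_add_neg]
  exact le_trans (MvPolynomial.degreeOf_add_le _ _ _) (by rw [hneg])

lemma degreeOf_one' (j : ℤ) : MvPolynomial.degreeOf j (1 : MP) = 0 := by
  rw [← MvPolynomial.C_1]
  exact MvPolynomial.degreeOf_C _ _

lemma prev_unused (q : K) (W : List ℕ) (j : ℤ) (hj : (W.length : ℤ) < j) :
    MvPolynomial.degreeOf j (Prev q W) = 0 := by
  induction W generalizing j with
  | nil =>
    apply Nat.le_antisymm _ (Nat.zero_le _)
    refine le_trans (MvPolynomial.degreeOf_add_le _ _ _) ?_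
    simp only [List.length_nil, Nat.cast_zero] at hj
    have h1 : j ≠ (-1 : ℤ) := by omega
    have h0 : j ≠ (0 : ℤ) := by omega
    refine max_le (le_trans (MvPolynomial.degreeOf_mul_le _ _ _) ?_) ?_
    · rw [MvPolynomial.degreeOf_C, MvPolynomial.degreeOf_X, if_neg h1]
    · rw [MvPolynomial.degreeOf_X, if_neg h0]
  | cons w V ih =>
    rw [prev_cons]
    apply Nat.le_antisymm _ (Nat.zero_le _)
    simp only [List.length_cons] at hj
    have hjn : j ≠ (V.length : ℤ) + 1 := by push_cast at hj ⊢; omega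
    have hjV : (V.length : ℤ) < j := by push_cast at hj ⊢; omega
    have hP := ih j hjV
    have hdil : MvPolynomial.degreeOf j
        (dil (iv q ((V.length:ℤ)+1-w) (V.length:ℤ)) (Prev q V)) = 0 :=
      Nat.le_antisymm (le_trans (degreeOf_dil_le _ _ _) (le_of_eq hP)) (Nat.zero_le _)
    refine le_trans (MvPolynomial.degreeOf_mul_le _ _ _) ?_
    rw [MvPolynomial.degreeOf_C, zero_add]
    refine le_trans (MvPolynomial.degreeOf_add_le _ _ _) ?_
    refine max_le (le_trans (MvPolynomial.degreeOf_mul_le _ _ _) ?_)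
      (le_trans (MvPolynomial.degreeOf_mul_le _ _ _) ?_)
    · have h1 : MvPolynomial.degreeOf j ((MX ((V.length:ℤ)+1) : MP) - MC (q^w)) = 0 :=
        Nat.le_antisymm (le_trans (degreeOf_sub_le' _ _ _)
          (by rw [MvPolynomial.degreeOf_X, if_neg hjn, MvPolynomial.degreeOf_C]; simp))
          (Nat.zero_le _)
      rw [h1, hP]
    · have h1 : MvPolynomial.degreeOf j ((1 : MP) - MX ((V.length:ℤ)+1)) = 0 :=
        Nat.le_antisymm (le_trans (degreeOf_sub_le' _ _ _)
          (by rw [MvPolynomial.degreeOf_X, if_neg hjn, degreeOf_one']; simp))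
          (Nat.zero_le _)
      rw [h1, hdil]

lemma prev_lin (q : K) (W : List ℕ) (j : ℤ) :
    MvPolynomial.degreeOf j (Prev q W) ≤ 1 := by
  induction W generalizing j with
  | nil =>
    refine le_trans (MvPolynomial.degreeOf_add_le _ _ _) ?_
    refine max_le (le_trans (MvPolynomial.degreeOf_mul_le _ _ _) ?_) ?_
    · rw [MvPolynomial.degreeOf_C, MvPolynomial.degreeOf_X]
      split_ifs <;> simp
    · rw [MvPolynomial.degreeOf_X]
      split_ifs <;> simp
  | cons w V ih =>
    rw [prev_cons]
    by_cases hjn : j = (V.length : ℤ) + 1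
    · -- new variable: old poly doesn't contain it
      have hP : MvPolynomial.degreeOf j (Prev q V) = 0 :=
        prev_unused q V j (by omega)
      have hdil : MvPolynomial.degreeOf j
          (dil (iv q ((V.length:ℤ)+1-w) (V.length:ℤ)) (Prev q V)) = 0 :=
        Nat.le_antisymm (le_trans (degreeOf_dil_le _ _ _) (le_of_eq hP)) (Nat.zero_le _)
      refine le_trans (MvPolynomial.degreeOf_mul_le _ _ _) ?_
      rw [MvPolynomial.degreeOf_C, zero_add]
      refine le_trans (MvPolynomial.degreeOf_add_le _ _ _) ?_
      refine max_le (le_trans (MvPolynomial.degreeOf_mul_le _ _ _) ?_)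
        (le_trans (MvPolynomial.degreeOf_mul_le _ _ _) ?_)
      · rw [hP, Nat.add_zero]
        refine le_trans (degreeOf_sub_le' _ _ _) ?_
        rw [MvPolynomial.degreeOf_X, if_pos hjn, MvPolynomial.degreeOf_C]
        simp
      · rw [hdil, Nat.add_zero]
        refine le_trans (degreeOf_sub_le' _ _ _) ?_
        rw [MvPolynomial.degreeOf_X, if_pos hjn, degreeOf_one']
        simp
    · have hX : MvPolynomial.degreeOf j (MX ((V.length:ℤ)+1) : MP) = 0 := by
        rw [MvPolynomial.degreeOf_X, if_neg hjn]
      refine le_trans (MvPolynomial.degreeOf_mul_le _ _ _) ?_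
      rw [MvPolynomial.degreeOf_C, zero_add]
      refine le_trans (MvPolynomial.degreeOf_add_le _ _ _) ?_
      refine max_le (le_trans (MvPolynomial.degreeOf_mul_le _ _ _) ?_)
        (le_trans (MvPolynomial.degreeOf_mul_le _ _ _) ?_)
      · have h1 : MvPolynomial.degreeOf j ((MX ((V.length:ℤ)+1) : MP) - MC (q^w)) = 0 :=
          Nat.le_antisymm (le_trans (degreeOf_sub_le' _ _ _)
            (by rw [hX, MvPolynomial.degreeOf_C]; simp)) (Nat.zero_le _)
        rw [h1, Nat.zero_add]
        exact ih j
      · have h1 : MvPolynomial.degreeOf j ((1 : MP) - MX ((V.length:ℤ)+1)) = 0 :=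
          Nat.le_antisymm (le_trans (degreeOf_sub_le' _ _ _)
            (by rw [hX, degreeOf_one']; simp)) (Nat.zero_le _)
        rw [h1, Nat.zero_add]
        exact le_trans (degreeOf_dil_le _ _ _) (ih j)

lemma dil_C (σ : ℤ → K) (c : K) : dil σ (MC c) = MC c := by
  simp [dil]

lemma dil_X (σ : ℤ → K) (j : ℤ) : dil σ (MX j) = MC (σ j) * MX j := by
  simp [dil]

section degz

variable {j : ℤ} {p r : MP}

lemma degz_mul (h1 : MvPolynomial.degreeOf j p = 0) (h2 : MvPolynomial.degreeOf j r = 0) :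
    MvPolynomial.degreeOf j (p * r) = 0 :=
  Nat.le_antisymm (le_trans (MvPolynomial.degreeOf_mul_le _ _ _) (by omega)) (Nat.zero_le _)

lemma degz_add (h1 : MvPolynomial.degreeOf j p = 0) (h2 : MvPolynomial.degreeOf j r = 0) :
    MvPolynomial.degreeOf j (p + r) = 0 :=
  Nat.le_antisymm (le_trans (MvPolynomial.degreeOf_add_le _ _ _) (by omega)) (Nat.zero_le _)

lemma degz_sub (h1 : MvPolynomial.degreeOf j p = 0) (h2 : MvPolynomial.degreeOf j r = 0) :
    MvPolynomial.degreeOf j (p - r) = 0 :=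
  Nat.le_antisymm (le_trans (degreeOf_sub_le' _ _ _) (by omega)) (Nat.zero_le _)

lemma degz_C (c : K) : MvPolynomial.degreeOf j (MC c) = 0 := MvPolynomial.degreeOf_C _ _

lemma degz_one : MvPolynomial.degreeOf j (1 : MP) = 0 := degreeOf_one' _

lemma degz_X {i : ℤ} (h : j ≠ i) : MvPolynomial.degreeOf j (MX i : MP) = 0 := by
  rw [MvPolynomial.degreeOf_X, if_neg h]

lemma degz_dil (σ : ℤ → K) (h : MvPolynomial.degreeOf j p = 0) :
    MvPolynomial.degreeOf j (dil σ p) = 0 :=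
  Nat.le_antisymm (le_trans (degreeOf_dil_le _ _ _) (by omega)) (Nat.zero_le _)

end degz

/-- merge variable `h` into `h-1` -/
noncomputable def mer (h : ℤ) : MP →ₐ[K] MP :=
  MvPolynomial.aeval (fun j => if j = h then MX (h-1) else MX j)

lemma mer_eq_self (h : ℤ) (p : MP) (hp : MvPolynomial.degreeOf h p = 0) : mer h p = p := by
  have e : mer h p = MvPolynomial.aeval MvPolynomial.X p := by
    apply aeval_congr
    intro j hj
    have : j = h := by by_contra hne; exact hj (if_neg hne)
    rwa [this]
  rw [e]
  simp [MvPolynomial.aeval_X_left]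

lemma mer_C (h : ℤ) (c : K) : mer h (MC c) = MC c := by simp [mer]

lemma mer_X_self (h : ℤ) : mer h (MX h) = MX (h-1) := by simp [mer]

lemma iv_congr_at (q : K) (a b a' b' j : ℤ)
    (h : (a ≤ j ∧ j ≤ b) ↔ (a' ≤ j ∧ j ≤ b')) : iv q a b j = iv q a' b' j := by
  unfold iv
  by_cases hc : a ≤ j ∧ j ≤ b
  · rw [if_pos hc, if_pos (h.mp hc)]
  · rw [if_neg hc, if_neg (fun hc' => hc (h.mpr hc'))]

/-- The abstract base-case identity. -/
lemma base_abstract (q c : K) (n : ℤ) (B : MP) (k : ℕ)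
    (hBlin : ∀ j, MvPolynomial.degreeOf j B ≤ 1)
    (hBn1 : MvPolynomial.degreeOf (n+1) B = 0)
    (hBn2 : MvPolynomial.degreeOf (n+2) B = 0) :
    mer (n+2) (MC c * ((MX (n+2) - MC (q^(k+2))) *
        (MC c * ((MX (n+1) - MC (q^(k+1))) * B +
          (1 - MX (n+1)) * dil (iv q (n-k) n) B)) +
      (1 - MX (n+2)) * dil (iv q (n-k) (n+1))
        (MC c * ((MX (n+1) - MC (q^(k+1))) * B +
          (1 - MX (n+1)) * dil (iv q (n-k) n) B))))
    = MC (1+q) * mer (n+2) (MC c * ((MX (n+2) - MC (q^(k+1))) *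
        (MC c * ((MX (n+1) - MC (q^(k+1))) * B +
          (1 - MX (n+1)) * dil (iv q (n-k) n) B)) +
      (1 - MX (n+2)) * dil (iv q (n-k+1) (n+1))
        (MC c * ((MX (n+1) - MC (q^(k+1))) * B +
          (1 - MX (n+1)) * dil (iv q (n-k) n) B))))
    - MC q * mer (n+2) (MC c * ((MX (n+2) - MC (q^(k+1))) *
        (MC c * ((MX (n+1) - MC (q^k)) * B +
          (1 - MX (n+1)) * dil (iv q (n-k+1) n) B)) +
      (1 - MX (n+2)) * dil (iv q (n-k+1) (n+1))
        (MC c * ((MX (n+1) - MC (q^k)) * B +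
          (1 - MX (n+1)) * dil (iv q (n-k+1) n) B)))) := by
  -- names for the dilations of B
  set ρv := iv q (n-k) n with hρv
  set ρp := iv q (n-k+1) n with hρp
  set sv1 := iv q (n-k) (n+1) with hsv1
  set sv := iv q (n-k+1) (n+1) with hsv
  -- congruence: away from variable n+1, the s's agree with the ρ's
  have hBj : ∀ j : ℤ, (j = n + 1) → MvPolynomial.degreeOf j B = 0 := by
    intro j hj; rwa [hj]
  have hd1 : dil sv1 B = dil ρv B := by
    apply dil_congr; intro j hne; apply hBj
    by_contra hj
    exact hne (iv_congr_at q _ _ _ _ j (by omega))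
  have hd2 : dil sv B = dil ρp B := by
    apply dil_congr; intro j hne; apply hBj
    by_contra hj
    exact hne (iv_congr_at q _ _ _ _ j (by omega))
  have hd11 : dil (fun j => sv1 j * ρv j) B = dil (fun j => ρv j * ρv j) B := by
    apply dil_congr; intro j hne; apply hBj
    by_contra hj
    exact hne (by rw [hsv1, hρv, iv_congr_at q (n-k) (n+1) (n-k) n j (by omega)])
  have hd12 : dil (fun j => sv j * ρv j) B = dil (fun j => ρp j * ρv j) B := by
    apply dil_congr; intro j hne; apply hBj
    by_contra hj
    exact hne (by rw [hsv, hρp, iv_congr_at q (n-k+1) (n+1) (n-k+1) n j (by omega)])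
  have hd22 : dil (fun j => sv j * ρp j) B = dil (fun j => ρp j * ρp j) B := by
    apply dil_congr; intro j hne; apply hBj
    by_contra hj
    exact hne (by rw [hsv, hρp, iv_congr_at q (n-k+1) (n+1) (n-k+1) n j (by omega)])
  have hsv1n : sv1 (n+1) = q := by rw [hsv1]; unfold iv; rw [if_pos (by omega)]
  have hsvn : sv (n+1) = q := by rw [hsv]; unfold iv; rw [if_pos (by omega)]
  -- expand the dilations applied to A, A'
  have hEA : dil sv1 (MC c * ((MX (n+1) - MC (q^(k+1))) * B + (1 - MX (n+1)) * dil ρv B))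
      = MC c * ((MC q * MX (n+1) - MC (q^(k+1))) * dil ρv B +
          (1 - MC q * MX (n+1)) * dil (fun j => ρv j * ρv j) B) := by
    simp only [map_mul, map_add, map_sub, map_one, dil_C, dil_X, dil_dil, hsv1n, hd1, hd11]
  have hEB : dil sv (MC c * ((MX (n+1) - MC (q^(k+1))) * B + (1 - MX (n+1)) * dil ρv B))
      = MC c * ((MC q * MX (n+1) - MC (q^(k+1))) * dil ρp B +
          (1 - MC q * MX (n+1)) * dil (fun j => ρp j * ρv j) B) := by
    simp only [map_mul, map_add, map_sub, map_one, dil_C, dil_X, dil_dil, hsvn, hd2, hd12]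
  have hEC : dil sv (MC c * ((MX (n+1) - MC (q^k)) * B + (1 - MX (n+1)) * dil ρp B))
      = MC c * ((MC q * MX (n+1) - MC (q^k)) * dil ρp B +
          (1 - MC q * MX (n+1)) * dil (fun j => ρp j * ρp j) B) := by
    simp only [map_mul, map_add, map_sub, map_one, dil_C, dil_X, dil_dil, hsvn, hd2, hd22]
  rw [hEA, hEB, hEC]
  have hz : (n : ℤ) + 2 ≠ n + 1 := by omega
  have hXz : MvPolynomial.degreeOf (n+2) (MX (n+1) : MP) = 0 := degz_X hz
  have hmerX1 : mer (n+2) (MX (n+1) : MP) = MX (n+1) := mer_eq_self _ _ hXz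
  have hmerB : mer (n+2) B = B := mer_eq_self _ _ hBn2
  have hmerdil : ∀ σ : ℤ → K, mer (n+2) (dil σ B) = dil σ B :=
    fun σ => mer_eq_self _ _ (degz_dil σ hBn2)
  simp only [map_mul, map_add, map_sub, map_one, mer_C, mer_X_self, hmerX1, hmerB, hmerdil]
  have e21 : (n : ℤ) + 2 - 1 = n + 1 := by ring
  rw [e21]
  -- the key multilinearity identity
  have hfun1 : (fun j => ρp j * ρp j * (if j = n - k then q^2 else 1)) = fun j => ρv j * ρv j := by
    funext j
    by_cases hj : j = n - k
    · subst hj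
      rw [hρp, hρv]; unfold iv
      rw [if_neg (by omega), if_pos (by omega)]
      split_ifs with hh
      · ring
      · exact absurd ⟨by omega, by omega⟩ hh
    · rw [if_neg hj]
      have : ρp j = ρv j := by
        rw [hρp, hρv]; exact iv_congr_at q _ _ _ _ j (by omega)
      rw [this]; ring
  have hfun2 : (fun j => ρp j * ρp j * (if j = n - k then q else 1)) = fun j => ρp j * ρv j := by
    funext j
    by_cases hj : j = n - k
    · subst hj
      rw [hρp, hρv]; unfold iv
      rw [if_neg (by omega), if_pos (by omega)]
      split_ifs with hh
      · ring
      · exact absurd ⟨by omega, by omega⟩ hh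
    · rw [if_neg hj]
      have : ρp j = ρv j := by
        rw [hρp, hρv]; exact iv_congr_at q _ _ _ _ j (by omega)
      rw [this]; ring
  have keyeq : dil (fun j => ρv j * ρv j) B
      = MC (1+q) * dil (fun j => ρp j * ρv j) B - MC q * dil (fun j => ρp j * ρp j) B := by
    have h := key_lin q (fun j => ρp j * ρp j) (n-k) B (hBlin (n-k))
    rw [hfun1, hfun2] at h
    exact h
  rw [keyeq]
  simp only [map_pow, map_add, map_one]
  ring

set_option maxHeartbeats 2000000 in
lemma base (q : K) (Ur : List ℕ) (v : ℕ) (hv : 1 ≤ v) :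
    mer ((Ur.length:ℤ)+2) (Prev q ((v+1)::v::Ur))
      = MC (1+q) * mer ((Ur.length:ℤ)+2) (Prev q (v::v::Ur))
        - MC q * mer ((Ur.length:ℤ)+2) (Prev q (v::(v-1)::Ur)) := by
  obtain ⟨k, rfl⟩ : ∃ k, v = k + 1 := ⟨v - 1, (Nat.succ_pred_eq_of_pos hv).symm⟩
  have hv1 : k + 1 - 1 = k := by omega
  rw [hv1]
  rw [prev_cons q (k+1+1) ((k+1)::Ur), prev_cons q (k+1) ((k+1)::Ur),
    prev_cons q (k+1) (k::Ur), prev_cons q (k+1) Ur, prev_cons q k Ur]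
  have H := base_abstract q ((1-q)⁻¹) (Ur.length:ℤ) (Prev q Ur) k
    (prev_lin q Ur) (prev_unused q Ur _ (by omega)) (prev_unused q Ur _ (by omega))
  push_cast [List.length_cons]
  have e1 : (Ur.length:ℤ) + 1 + 1 = (Ur.length:ℤ) + 2 := by ring
  have e2 : (Ur.length:ℤ) + 1 + 1 - ((k:ℤ) + 1 + 1) = (Ur.length:ℤ) - k := by ring
  have e3 : (Ur.length:ℤ) + 1 - ((k:ℤ) + 1) = (Ur.length:ℤ) - k := by ring
  have e4 : (Ur.length:ℤ) + 1 + 1 - ((k:ℤ) + 1) = (Ur.length:ℤ) - k + 1 := by ring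
  have e5 : (Ur.length:ℤ) + 1 - (k:ℤ) = (Ur.length:ℤ) - k + 1 := by ring
  have e6 : q ^ (k+1+1) = q ^ (k+2) := rfl
  have e7 : (Ur.length:ℤ) + 2 - ((k:ℤ) + 1 + 1) = (Ur.length:ℤ) - k := by ring
  have e8 : (Ur.length:ℤ) + 2 - ((k:ℤ) + 1) = (Ur.length:ℤ) - k + 1 := by ring
  simp only [e1, e2, e3, e4, e5, e6, e7, e8]
  exact H
lemma mer_X_ne {h j : ℤ} (hj : j ≠ h) : mer h (MX j) = MX j := by
  simp [mer, if_neg hj]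

lemma mer_dil (h : ℤ) (σ : ℤ → K) (hσ : σ (h-1) = σ h) (p : MP) :
    mer h (dil σ p) = dil σ (mer h p) := by
  have hc : (mer h).comp (dil σ) = (dil σ).comp (mer h) := by
    apply MvPolynomial.algHom_ext
    intro j
    simp only [AlgHom.comp_apply, dil_X, map_mul, mer_C]
    by_cases hj : j = h
    · subst hj
      rw [mer_X_self, dil_X, hσ]
    · rw [mer_X_ne hj, dil_X]
  calc mer h (dil σ p) = ((mer h).comp (dil σ)) p := rfl
    _ = ((dil σ).comp (mer h)) p := by rw [hc]
    _ = dil σ (mer h p) := rfl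

lemma mer_step (h n : ℤ) (c t : K) (σ : ℤ → K) (hn : n ≠ h) (hσ : σ (h-1) = σ h) (p : MP) :
    mer h (MC c * ((MX n - MC t) * p + (1 - MX n) * dil σ p))
      = MC c * ((MX n - MC t) * mer h p + (1 - MX n) * dil σ (mer h p)) := by
  simp only [map_mul, map_add, map_sub, map_one, mer_C, mer_dil h σ hσ, mer_X_ne hn]

lemma keyrev (q : K) (Ur : List ℕ) (v : ℕ) (hv : 1 ≤ v) (L : List ℕ)
    (hns : ∀ i, i < L.length → L.getD i 0 ≠ L.length - i) :
    mer ((Ur.length:ℤ)+2) (Prev q (L ++ (v+1)::v::Ur))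
      = MC (1+q) * mer ((Ur.length:ℤ)+2) (Prev q (L ++ v::v::Ur))
        - MC q * mer ((Ur.length:ℤ)+2) (Prev q (L ++ v::(v-1)::Ur)) := by
  induction L with
  | nil => simpa using base q Ur v hv
  | cons u L ih =>
    have hu : (u : ℕ) ≠ L.length + 1 := by
      have := hns 0 (by simp)
      simpa using this
    have hns' : ∀ i, i < L.length → L.getD i 0 ≠ L.length - i := by
      intro i hi
      have := hns (i+1) (by simp; omega)
      simpa using this
    rw [show (u::L) ++ (v+1)::v::Ur = u :: (L ++ (v+1)::v::Ur) from rfl,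
      show (u::L) ++ v::v::Ur = u :: (L ++ v::v::Ur) from rfl,
      show (u::L) ++ v::(v-1)::Ur = u :: (L ++ v::(v-1)::Ur) from rfl]
    rw [prev_cons q u (L ++ (v+1)::v::Ur), prev_cons q u (L ++ v::v::Ur),
      prev_cons q u (L ++ v::(v-1)::Ur)]
    simp only [List.length_append, List.length_cons]
    push_cast
    have hlen : ((L.length : ℤ) + ((Ur.length:ℤ) + 1 + 1) + 1) ≠ (Ur.length:ℤ) + 2 := by omega
    have hσ : ∀ (a b : ℤ), a ≠ (Ur.length:ℤ) + 2 → (Ur.length:ℤ) + 2 ≤ b →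
        iv q a b ((Ur.length:ℤ) + 2 - 1) = iv q a b ((Ur.length:ℤ) + 2) := by
      intro a b ha hb
      unfold iv
      split_ifs with h1 h2 h2 <;> first | rfl | omega
    rw [mer_step _ _ _ _ _ hlen (hσ _ _ (by push_cast; omega) (by omega)) _,
      mer_step _ _ _ _ _ hlen (hσ _ _ (by push_cast; omega) (by omega)) _,
      mer_step _ _ _ _ _ hlen (hσ _ _ (by push_cast; omega) (by omega)) _]
    rw [ih hns']
    simp only [map_sub, map_mul, dil_C]
    ring

lemma ev_mer (h : ℤ) (p : MP) :
    MvPolynomial.aeval (fun _ : ℤ => (Polynomial.X : Polynomial K)) (mer h p)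
      = MvPolynomial.aeval (fun _ : ℤ => (Polynomial.X : Polynomial K)) p := by
  have hc : (MvPolynomial.aeval (fun _ : ℤ => (Polynomial.X : Polynomial K))).comp (mer h)
      = MvPolynomial.aeval (fun _ : ℤ => (Polynomial.X : Polynomial K)) := by
    apply MvPolynomial.algHom_ext
    intro j
    simp only [AlgHom.comp_apply, MvPolynomial.aeval_X]
    by_cases hj : j = h
    · subst hj; rw [mer_X_self]; simp
    · rw [mer_X_ne hj]; simp
  calc MvPolynomial.aeval (fun _ : ℤ => (Polynomial.X : Polynomial K)) (mer h p)
      = ((MvPolynomial.aeval (fun _ : ℤ => (Polynomial.X : Polynomial K))).comp (mer h)) p := rfl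
    _ = _ := by rw [hc]

end S13

theorem stmt13' (U V : List ℕ) (v : ℕ) (q : K)
    (hv : 1 ≤ v)
    (hns : ∀ j, j < V.length → V.getD j 0 ≠ j + 1) :
    MvPolynomial.aeval (fun _ : ℤ => (Polynomial.X : Polynomial K))
        (Prev q ((U ++ v :: (v + 1) :: V).reverse)) =
      Polynomial.C (1 + q) * MvPolynomial.aeval (fun _ : ℤ => (Polynomial.X : Polynomial K))
          (Prev q ((U ++ v :: v :: V).reverse)) -
        Polynomial.C q * MvPolynomial.aeval (fun _ : ℤ => (Polynomial.X : Polynomial K))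
          (Prev q ((U ++ (v - 1) :: v :: V).reverse)) := by
  have hns' : ∀ i, i < V.reverse.length → V.reverse.getD i 0 ≠ V.reverse.length - i := by
    intro i hi
    rw [List.length_reverse] at hi ⊢
    rw [List.getD_eq_getElem _ _ (by rw [List.length_reverse]; exact hi), List.getElem_reverse]
    have h2 := hns (V.length - 1 - i) (by omega)
    rw [List.getD_eq_getElem _ _ (by omega)] at h2
    omega
  have hk := S13.keyrev q U.reverse v hv V.reverse hns'
  rw [show (U ++ v :: (v+1) :: V).reverse = V.reverse ++ (v+1) :: v :: U.reverse by
        simp,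
      show (U ++ v :: v :: V).reverse = V.reverse ++ v :: v :: U.reverse by simp,
      show (U ++ (v-1) :: v :: V).reverse = V.reverse ++ v :: (v-1) :: U.reverse by simp]
  rw [← S13.ev_mer ((U.reverse.length:ℤ)+2) (Prev q (V.reverse ++ (v+1)::v::U.reverse)), hk]
  rw [map_sub, map_mul, map_mul, MvPolynomial.aeval_C, MvPolynomial.aeval_C,
    S13.ev_mer, S13.ev_mer]
  rfl

/-- Proposition 3.3: let W = (U, v, v+1, V) be a legal schedule in
which no bar splits the increasing pair at positions h-1, h (h = U.length + 2):
there is no index r (1-based) with r - w_r = h. Then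
Q_{U,v,v+1,V} = (1+q)·Q_{U,v,v,V} - q·Q_{U,v-1,v,V}. -/
theorem stmt13 (U V : List ℕ) (v : ℕ)
    (hW : Legal (U ++ v :: (v + 1) :: V))
    (hsplit : ∀ r : ℕ, r < (U ++ v :: (v + 1) :: V).length →
      ((r : ℤ) + 1) - ((U ++ v :: (v + 1) :: V).getD r 0 : ℤ) ≠ (U.length : ℤ) + 2) :
    Qsched qq (U ++ v :: (v + 1) :: V) =
      Polynomial.C (1 + qq) * Qsched qq (U ++ v :: v :: V) -
        Polynomial.C qq * Qsched qq (U ++ (v - 1) :: v :: V) := by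
  have hv : 1 ≤ v := by
    rcases U with _ | ⟨a, U'⟩
    · have h := hW.1 (by simp)
      simpa using h.1
    · have h2 := hW.2
      have h3 := (List.isChain_append.mp h2).2.2
      have hgl : (a :: U').getLast? = some ((a :: U').getLast (by simp)) :=
        List.getLast?_eq_getLast_of_ne_nil (by simp)
      have := h3 ((a :: U').getLast (by simp)) (by rw [hgl]; rfl) v rfl
      exact this.1
  have hns : ∀ j, j < V.length → V.getD j 0 ≠ j + 1 := by
    intro j hj
    have hr := hsplit (U.length + 2 + j)
      (by simp only [List.length_append, List.length_cons]; omega)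
    rw [List.getD_append_right _ _ _ _ (by omega)] at hr
    have e : U.length + 2 + j - U.length = j + 2 := by omega
    rw [e] at hr
    have e2 : (v :: (v+1) :: V).getD (j+2) 0 = V.getD j 0 := rfl
    rw [e2] at hr
    intro hcon
    apply hr
    rw [hcon]
    push_cast
    ring
  unfold Qsched Psched
  exact stmt13' U V v qq hv hns

end
end

section
/- Let W = (U, v, v+1, V', j, V'') be a legal schedule in which (v, v+1) is the canonical (last) increase, at positions h-1, h, and suppose the first bar splitting this pair is x_{h+j} of length j (i.e., h+j - w_{h+j} = h). Then Q_{U,v,v+1,V',j+1,V''} - (1+q) Q_{U,v,v+1,V',j,V''} + q Q_{U,v,v+1,V',j-1,V''} = 0. -/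
open Polynomial Finset

noncomputable section

namespace Stmt14Aux
open MvPolynomial

def sb (q : K) (lo hi : ℤ) : ℤ → MvPolynomial ℤ K :=
  fun i => if lo ≤ i ∧ i ≤ hi then MvPolynomial.C q * MvPolynomial.X i else MvPolynomial.X i

lemma prev_cons (q : K) (w : ℕ) (V : List ℕ) :
    Prev q (w :: V) = MvPolynomial.C ((1 - q)⁻¹) *
      ((MvPolynomial.X ((V.length : ℤ) + 1) - MvPolynomial.C (q ^ w)) * Prev q V +
        (1 - MvPolynomial.X ((V.length : ℤ) + 1)) *
          MvPolynomial.aeval (sb q ((V.length : ℤ) + 1 - (w : ℤ)) (V.length)) (Prev q V)) := rfl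


lemma supported_aeval {s t : Set ℤ} {P : MvPolynomial ℤ K} (hP : P ∈ supported K s)
    {f : ℤ → MvPolynomial ℤ K} (hf : ∀ i ∈ s, f i ∈ supported K t) :
    aeval f P ∈ supported K t := by
  rw [supported_eq_adjoin_X] at hP
  induction hP using Algebra.adjoin_induction with
  | mem x hx => obtain ⟨i, hi, rfl⟩ := hx; simpa using hf i hi
  | algebraMap r => simpa using Subalgebra.algebraMap_mem (supported K t) r
  | add x y _ _ hx hy => rw [map_add]; exact add_mem hx hy
  | mul x y _ _ hx hy => rw [map_mul]; exact mul_mem hx hy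

lemma aeval_congr_supported {s : Set ℤ} {P : MvPolynomial ℤ K} (hP : P ∈ supported K s)
    {A : Type*} [CommSemiring A] [Algebra K A] {f g : ℤ → A}
    (hfg : ∀ i ∈ s, f i = g i) : aeval f P = aeval g P := by
  rw [supported_eq_adjoin_X] at hP
  induction hP using Algebra.adjoin_induction with
  | mem x hx => obtain ⟨i, hi, rfl⟩ := hx; simpa using hfg i hi
  | algebraMap r => simp
  | add x y _ _ hx hy => simp [hx, hy]
  | mul x y _ _ hx hy => simp [hx, hy]

lemma prev_supported (q : K) (L : List ℕ) :
    Prev q L ∈ supported K (Set.Icc (-1 : ℤ) (L.length : ℤ)) := by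
  induction L with
  | nil =>
      refine add_mem (mul_mem ?_ ?_) ?_
      · rw [← MvPolynomial.algebraMap_eq]; exact Subalgebra.algebraMap_mem _ _
      · exact (X_mem_supported).2 (by simp)
      · exact (X_mem_supported).2 (by simp)
  | cons w V ih =>
      rw [prev_cons]
      have hsub : Set.Icc (-1 : ℤ) (V.length : ℤ) ⊆ Set.Icc (-1 : ℤ) ((w :: V).length : ℤ) := by
        intro i hi; simp only [Set.mem_Icc, List.length_cons] at *; push_cast; omega
      have h1 : Prev q V ∈ supported K (Set.Icc (-1 : ℤ) ((w :: V).length : ℤ)) :=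
        supported_mono hsub ih
      have h2 : aeval (sb q ((V.length : ℤ) + 1 - (w : ℤ)) (V.length)) (Prev q V) ∈
          supported K (Set.Icc (-1 : ℤ) ((w :: V).length : ℤ)) := by
        refine supported_aeval ih ?_
        intro i hi
        unfold sb
        split_ifs
        · exact mul_mem (by rw [← MvPolynomial.algebraMap_eq]; exact Subalgebra.algebraMap_mem _ _)
            ((X_mem_supported).2 (hsub hi))
        · exact (X_mem_supported).2 (hsub hi)
      have hX : (MvPolynomial.X ((V.length : ℤ) + 1) : MvPolynomial ℤ K) ∈
          supported K (Set.Icc (-1 : ℤ) ((w :: V).length : ℤ)) :=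
        (X_mem_supported).2 (by simp only [Set.mem_Icc, List.length_cons]; push_cast; omega)
      have hC : ∀ x : K, (MvPolynomial.C x : MvPolynomial ℤ K) ∈
          supported K (Set.Icc (-1 : ℤ) ((w :: V).length : ℤ)) := fun x => by
        rw [← MvPolynomial.algebraMap_eq]; exact Subalgebra.algebraMap_mem _ _
      exact mul_mem (hC _) (add_mem (mul_mem (sub_mem hX (hC _)) h1)
        (mul_mem (sub_mem (Subalgebra.one_mem _) hX) h2))

def F (h : ℤ) : Set ℤ := {h - 1, h}ᶜ

lemma mem_F {h i : ℤ} (h1 : i ≠ h - 1) (h2 : i ≠ h) : i ∈ F h := by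
  simp [F, h1, h2]

lemma C_mem_F (h : ℤ) (x : K) : (MvPolynomial.C x : MvPolynomial ℤ K) ∈ supported K (F h) := by
  rw [← MvPolynomial.algebraMap_eq]; exact Subalgebra.algebraMap_mem _ _

lemma sb_mem_F (q : K) (h lo hi : ℤ) {i : ℤ} (hi' : i ∈ F h) :
    sb q lo hi i ∈ supported K (F h) := by
  unfold sb; split_ifs
  · exact mul_mem (C_mem_F h q) ((X_mem_supported).2 hi')
  · exact (X_mem_supported).2 hi'

lemma supported_F_sb (q : K) (h lo hi : ℤ) {P : MvPolynomial ℤ K}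
    (hP : P ∈ supported K (F h)) : aeval (sb q lo hi) P ∈ supported K (F h) :=
  supported_aeval hP fun _ hi' => sb_mem_F q h lo hi hi'

def Shp (q : K) (h : ℤ) (P : MvPolynomial ℤ K) : Prop :=
  ∃ A Cc D : MvPolynomial ℤ K, A ∈ supported K (F h) ∧ Cc ∈ supported K (F h) ∧
    D ∈ supported K (F h) ∧
    P = A + MvPolynomial.C q * (MvPolynomial.X (h - 1) * Cc) + MvPolynomial.X h * Cc +
      MvPolynomial.X (h - 1) * (MvPolynomial.X h * D)
lemma shape_base (q : K) (v : ℕ) (U : List ℕ) :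
    Shp q ((U.length : ℤ) + 2) (Prev q ((v + 1) :: v :: U.reverse)) := by
  set h : ℤ := (U.length : ℤ) + 2 with hh
  have hrev1 : (U.reverse.length : ℤ) + 1 = h - 1 := by simp only [List.length_reverse]; omega
  have hrev0 : (U.reverse.length : ℤ) = h - 2 := by simp only [List.length_reverse]; omega
  have hlen1 : ((v :: U.reverse).length : ℤ) + 1 = h := by simp only [List.length_cons, List.length_reverse]; push_cast; omega
  have hlen0 : ((v :: U.reverse).length : ℤ) = h - 1 := by simp only [List.length_cons, List.length_reverse]; push_cast; omega
  have hcast : (((v + 1 : ℕ)) : ℤ) = (v : ℤ) + 1 := by push_cast; omega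
  set P0 := Prev q U.reverse with hP0
  have hsupp0 : P0 ∈ supported K (Set.Icc (-1 : ℤ) (h - 2)) := by
    have := prev_supported q U.reverse
    rwa [hrev0] at this
  set σ := MvPolynomial.aeval (R := K) (sb q (h - 1 - (v : ℤ)) (h - 2)) with hσ
  set σ' := MvPolynomial.aeval (R := K) (sb q (h - ((v : ℤ) + 1)) (h - 1)) with hσ'
  set Pa := σ P0 with hPa
  set Pb := σ' Pa with hPb
  have hsub : Set.Icc (-1 : ℤ) (h - 2) ⊆ F h := fun i hi => by
    simp only [Set.mem_Icc] at hi; exact mem_F (by omega) (by omega)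
  have hA0 : P0 ∈ supported K (F h) := supported_mono hsub hsupp0
  have hPaF : Pa ∈ supported K (F h) := supported_F_sb q h _ _ hA0
  have hPbF : Pb ∈ supported K (F h) := supported_F_sb q h _ _ hPaF
  have e1 : Prev q (v :: U.reverse) = MvPolynomial.C ((1 - q)⁻¹) *
      ((MvPolynomial.X (h - 1) - MvPolynomial.C (q ^ v)) * P0 +
        (1 - MvPolynomial.X (h - 1)) * Pa) := by
    rw [prev_cons, hrev1, hrev0]
  have e2 : σ' P0 = Pa := by
    rw [hPa]
    refine aeval_congr_supported hsupp0 fun i hi => ?_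
    simp only [Set.mem_Icc] at hi
    unfold sb
    split_ifs with c1 c2 c2 <;> first | rfl | (exfalso; omega)
  have e3 : σ' (MvPolynomial.X (h - 1)) = MvPolynomial.C q * MvPolynomial.X (h - 1) := by
    rw [hσ', MvPolynomial.aeval_X]
    unfold sb
    rw [if_pos ⟨by omega, by omega⟩]
  have eC : ∀ x : K, σ' (MvPolynomial.C x) = MvPolynomial.C x := fun x => by
    rw [hσ', MvPolynomial.aeval_C, MvPolynomial.algebraMap_eq]
  have e4 : σ' (Prev q (v :: U.reverse)) = MvPolynomial.C ((1 - q)⁻¹) *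
      ((MvPolynomial.C q * MvPolynomial.X (h - 1) - MvPolynomial.C (q ^ v)) * Pa +
        (1 - MvPolynomial.C q * MvPolynomial.X (h - 1)) * Pb) := by
    rw [e1]
    simp only [map_mul, map_add, map_sub, map_one, e2, e3, ← hPb, eC]
  have e5 : Prev q ((v + 1) :: v :: U.reverse) = MvPolynomial.C ((1 - q)⁻¹) *
      ((MvPolynomial.X h - MvPolynomial.C (q ^ (v + 1))) * Prev q (v :: U.reverse) +
        (1 - MvPolynomial.X h) * σ' (Prev q (v :: U.reverse))) := by
    rw [prev_cons, hlen1, hlen0, hcast]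
  refine ⟨MvPolynomial.C ((1 - q)⁻¹) * MvPolynomial.C ((1 - q)⁻¹) *
      (MvPolynomial.C q * (MvPolynomial.C (q ^ v) * (MvPolynomial.C (q ^ v) * P0 - Pa)) +
        (Pb - MvPolynomial.C (q ^ v) * Pa)),
    MvPolynomial.C ((1 - q)⁻¹) * MvPolynomial.C ((1 - q)⁻¹) *
      ((Pa - MvPolynomial.C (q ^ v) * P0) - (Pb - MvPolynomial.C (q ^ v) * Pa)),
    MvPolynomial.C ((1 - q)⁻¹) * MvPolynomial.C ((1 - q)⁻¹) *
      ((P0 - Pa) - MvPolynomial.C q * (Pa - Pb)), ?_, ?_, ?_, ?_⟩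
  · exact mul_mem (mul_mem (C_mem_F h _) (C_mem_F h _))
      (add_mem (mul_mem (C_mem_F h _) (mul_mem (C_mem_F h _)
        (sub_mem (mul_mem (C_mem_F h _) hA0) hPaF)))
        (sub_mem hPbF (mul_mem (C_mem_F h _) hPaF)))
  · exact mul_mem (mul_mem (C_mem_F h _) (C_mem_F h _))
      (sub_mem (sub_mem hPaF (mul_mem (C_mem_F h _) hA0))
        (sub_mem hPbF (mul_mem (C_mem_F h _) hPaF)))
  · exact mul_mem (mul_mem (C_mem_F h _) (C_mem_F h _))
      (sub_mem (sub_mem hA0 hPaF) (mul_mem (C_mem_F h _) (sub_mem hPaF hPbF)))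
  · rw [e5, e4, e1, pow_succ, map_mul]
    ring

lemma shape_step (q : K) (h : ℤ) (x : ℕ) (L : List ℕ) (hlen : h ≤ (L.length : ℤ))
    (hx : (x : ℤ) ≠ (L.length : ℤ) + 1 - h) (hS : Shp q h (Prev q L)) :
    Shp q h (Prev q (x :: L)) := by
  obtain ⟨A, Cc, D, hA, hC, hD, hP⟩ := hS
  set n : ℤ := (L.length : ℤ) + 1 with hn
  set σ := MvPolynomial.aeval (R := K) (sb q (n - (x : ℤ)) (L.length : ℤ)) with hσ
  have eC : ∀ y : K, σ (MvPolynomial.C y) = MvPolynomial.C y := fun y => by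
    rw [hσ, MvPolynomial.aeval_C, MvPolynomial.algebraMap_eq]
  have hXn : (n : ℤ) ≠ h - 1 ∧ (n : ℤ) ≠ h := ⟨by omega, by omega⟩
  have hXnF : (MvPolynomial.X n : MvPolynomial ℤ K) ∈ supported K (F h) :=
    (X_mem_supported).2 (mem_F hXn.1 hXn.2)
  have hσA : σ A ∈ supported K (F h) := supported_F_sb q h _ _ hA
  have hσC : σ Cc ∈ supported K (F h) := supported_F_sb q h _ _ hC
  have hσD : σ D ∈ supported K (F h) := supported_F_sb q h _ _ hD
  have hcons : Prev q (x :: L) = MvPolynomial.C ((1 - q)⁻¹) *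
      ((MvPolynomial.X n - MvPolynomial.C (q ^ x)) * Prev q L +
        (1 - MvPolynomial.X n) * σ (Prev q L)) := prev_cons q x L
  rcases lt_or_gt_of_ne hx with hlt | hgt
  · -- x ≤ n - 1 - h : σ fixes X (h-1) and X h
    have e1 : σ (MvPolynomial.X (h - 1)) = MvPolynomial.X (h - 1) := by
      rw [hσ, MvPolynomial.aeval_X]; unfold sb; rw [if_neg]; omega
    have e2 : σ (MvPolynomial.X h) = MvPolynomial.X h := by
      rw [hσ, MvPolynomial.aeval_X]; unfold sb; rw [if_neg]; omega
    refine ⟨MvPolynomial.C ((1 - q)⁻¹) * ((MvPolynomial.X n - MvPolynomial.C (q ^ x)) * A +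
        (1 - MvPolynomial.X n) * σ A),
      MvPolynomial.C ((1 - q)⁻¹) * ((MvPolynomial.X n - MvPolynomial.C (q ^ x)) * Cc +
        (1 - MvPolynomial.X n) * σ Cc),
      MvPolynomial.C ((1 - q)⁻¹) * ((MvPolynomial.X n - MvPolynomial.C (q ^ x)) * D +
        (1 - MvPolynomial.X n) * σ D), ?_, ?_, ?_, ?_⟩
    · exact mul_mem (C_mem_F h _) (add_mem (mul_mem (sub_mem hXnF (C_mem_F h _)) hA)
        (mul_mem (sub_mem (one_mem _) hXnF) hσA))
    · exact mul_mem (C_mem_F h _) (add_mem (mul_mem (sub_mem hXnF (C_mem_F h _)) hC)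
        (mul_mem (sub_mem (one_mem _) hXnF) hσC))
    · exact mul_mem (C_mem_F h _) (add_mem (mul_mem (sub_mem hXnF (C_mem_F h _)) hD)
        (mul_mem (sub_mem (one_mem _) hXnF) hσD))
    · rw [hcons, hP]
      simp only [map_mul, map_add, map_one, e1, e2, eC]
      ring
  · -- x ≥ n + 1 - h : σ scales X (h-1) and X h by q
    have e1 : σ (MvPolynomial.X (h - 1)) = MvPolynomial.C q * MvPolynomial.X (h - 1) := by
      rw [hσ, MvPolynomial.aeval_X]; unfold sb; rw [if_pos ⟨by omega, by omega⟩]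
    have e2 : σ (MvPolynomial.X h) = MvPolynomial.C q * MvPolynomial.X h := by
      rw [hσ, MvPolynomial.aeval_X]; unfold sb; rw [if_pos ⟨by omega, by omega⟩]
    refine ⟨MvPolynomial.C ((1 - q)⁻¹) * ((MvPolynomial.X n - MvPolynomial.C (q ^ x)) * A +
        (1 - MvPolynomial.X n) * σ A),
      MvPolynomial.C ((1 - q)⁻¹) * ((MvPolynomial.X n - MvPolynomial.C (q ^ x)) * Cc +
        (1 - MvPolynomial.X n) * (MvPolynomial.C q * σ Cc)),
      MvPolynomial.C ((1 - q)⁻¹) * ((MvPolynomial.X n - MvPolynomial.C (q ^ x)) * D +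
        (1 - MvPolynomial.X n) * (MvPolynomial.C q * (MvPolynomial.C q * σ D))), ?_, ?_, ?_, ?_⟩
    · exact mul_mem (C_mem_F h _) (add_mem (mul_mem (sub_mem hXnF (C_mem_F h _)) hA)
        (mul_mem (sub_mem (one_mem _) hXnF) hσA))
    · exact mul_mem (C_mem_F h _) (add_mem (mul_mem (sub_mem hXnF (C_mem_F h _)) hC)
        (mul_mem (sub_mem (one_mem _) hXnF) (mul_mem (C_mem_F h _) hσC)))
    · exact mul_mem (C_mem_F h _) (add_mem (mul_mem (sub_mem hXnF (C_mem_F h _)) hD)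
        (mul_mem (sub_mem (one_mem _) hXnF) (mul_mem (C_mem_F h _) (mul_mem (C_mem_F h _) hσD))))
    · rw [hcons, hP]
      simp only [map_mul, map_add, map_one, e1, e2, eC]
      ring

lemma shape_steps (q : K) (h : ℤ) (M L : List ℕ) (hlen : h ≤ (L.length : ℤ))
    (hM : ∀ k, k < M.length → ((M.getD k 0 : ℤ)) ≠ (M.length : ℤ) + (L.length : ℤ) - k - h)
    (hS : Shp q h (Prev q L)) : Shp q h (Prev q (M ++ L)) := by
  induction M with
  | nil => simpa using hS
  | cons x M' ih =>
      have ih' := ih (fun k hk => by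
        have h2 := hM (k + 1) (by simp only [List.length_cons]; omega)
        rw [List.getD_cons_succ] at h2
        simp only [List.length_cons] at h2
        push_cast at h2 ⊢
        omega)
      rw [List.cons_append]
      refine shape_step q h x (M' ++ L) (by simp; omega) ?_ ih'
      have := hM 0 (by simp)
      simp only [List.getD_cons_zero, List.length_cons, List.length_append] at this ⊢
      push_cast at this ⊢
      omega

lemma delta_factor (q : K) (h : ℤ) (jp : ℕ) (L : List ℕ)
    (hlen : (L.length : ℤ) = h + (jp : ℤ))
    (hS : Shp q h (Prev q L)) :
    ∃ R : MvPolynomial ℤ K,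
      Prev q ((jp + 2) :: L) - MvPolynomial.C (1 + q) * Prev q ((jp + 1) :: L) +
        MvPolynomial.C q * Prev q (jp :: L) =
      (MvPolynomial.X (h - 1) - MvPolynomial.X h) * R := by
  obtain ⟨A, Cc, D, hA, hC, hD, hP⟩ := hS
  set nL : ℤ := (L.length : ℤ) with hnL
  have c2 : nL + 1 - ((jp + 2 : ℕ) : ℤ) = h - 1 := by push_cast; omega
  have c1 : nL + 1 - ((jp + 1 : ℕ) : ℤ) = h := by push_cast; omega
  have c0 : nL + 1 - ((jp : ℕ) : ℤ) = h + 1 := by push_cast; omega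
  set σ2 := MvPolynomial.aeval (R := K) (sb q (h - 1) nL) with hσ2
  set σ1 := MvPolynomial.aeval (R := K) (sb q h nL) with hσ1
  set σ0 := MvPolynomial.aeval (R := K) (sb q (h + 1) nL) with hσ0
  have hC2 : ∀ (f : ℤ → MvPolynomial ℤ K) (y : K),
      MvPolynomial.aeval (R := K) f (MvPolynomial.C y) = MvPolynomial.C y := fun f y => by
    rw [MvPolynomial.aeval_C, MvPolynomial.algebraMap_eq]
  -- τ-agreement on supported F h
  have key2 : ∀ E ∈ supported K (F h), σ2 E = σ0 E := fun E hE => by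
    rw [hσ2, hσ0]
    refine aeval_congr_supported hE fun i hi => ?_
    have hi1 : i ≠ h - 1 := by intro hcon; exact hi (by simp [F, hcon])
    have hi2 : i ≠ h := by intro hcon; exact hi (by simp [F, hcon])
    unfold sb; split_ifs with d1 d2 d2 <;> first | rfl | (exfalso; omega)
  have key1 : ∀ E ∈ supported K (F h), σ1 E = σ0 E := fun E hE => by
    rw [hσ1, hσ0]
    refine aeval_congr_supported hE fun i hi => ?_
    have hi1 : i ≠ h - 1 := by intro hcon; exact hi (by simp [F, hcon])
    have hi2 : i ≠ h := by intro hcon; exact hi (by simp [F, hcon])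
    unfold sb; split_ifs with d1 d2 d2 <;> first | rfl | (exfalso; omega)
  -- values on the two special variables
  have x2a : σ2 (MvPolynomial.X (h - 1)) = MvPolynomial.C q * MvPolynomial.X (h - 1) := by
    rw [hσ2, MvPolynomial.aeval_X]; unfold sb; rw [if_pos ⟨by omega, by omega⟩]
  have x2b : σ2 (MvPolynomial.X h) = MvPolynomial.C q * MvPolynomial.X h := by
    rw [hσ2, MvPolynomial.aeval_X]; unfold sb; rw [if_pos ⟨by omega, by omega⟩]
  have x1a : σ1 (MvPolynomial.X (h - 1)) = MvPolynomial.X (h - 1) := by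
    rw [hσ1, MvPolynomial.aeval_X]; unfold sb; rw [if_neg]; omega
  have x1b : σ1 (MvPolynomial.X h) = MvPolynomial.C q * MvPolynomial.X h := by
    rw [hσ1, MvPolynomial.aeval_X]; unfold sb; rw [if_pos ⟨by omega, by omega⟩]
  have x0a : σ0 (MvPolynomial.X (h - 1)) = MvPolynomial.X (h - 1) := by
    rw [hσ0, MvPolynomial.aeval_X]; unfold sb; rw [if_neg]; omega
  have x0b : σ0 (MvPolynomial.X h) = MvPolynomial.X h := by
    rw [hσ0, MvPolynomial.aeval_X]; unfold sb; rw [if_neg]; omega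
  refine ⟨MvPolynomial.C ((1 - q)⁻¹) * (MvPolynomial.C (q * q - q) *
      ((1 - MvPolynomial.X (nL + 1)) * σ0 Cc)), ?_⟩
  rw [prev_cons, prev_cons, prev_cons, c2, c1, c0, ← hσ2, ← hσ1, ← hσ0, ← hnL]
  rw [hP]
  simp only [map_mul, map_add, map_one, x2a, x2b, x1a, x1b, x0a, x0b, hC2,
    key2 A hA, key2 Cc hC, key2 D hD, key1 A hA, key1 Cc hC, key1 D hD]
  have p2 : (q : K) ^ (jp + 2) = q ^ jp * q * q := by ring
  have p1 : (q : K) ^ (jp + 1) = q ^ jp * q := by ring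
  rw [p2, p1]
  simp only [map_sub, map_mul, map_add, map_one]
  simp only [hσ2, hσ1, hσ0, hC2]
  ring

lemma delta_step (q : K) (h : ℤ) (x : ℕ) (L1 L2 L3 : List ℕ)
    (e2 : L2.length = L1.length) (e3 : L3.length = L1.length)
    (hx : (x : ℤ) ≤ (L1.length : ℤ) - h) (R : MvPolynomial ℤ K)
    (hΔ : Prev q L1 - MvPolynomial.C (1 + q) * Prev q L2 + MvPolynomial.C q * Prev q L3 =
      (MvPolynomial.X (h - 1) - MvPolynomial.X h) * R) :
    ∃ R' : MvPolynomial ℤ K,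
      Prev q (x :: L1) - MvPolynomial.C (1 + q) * Prev q (x :: L2) +
        MvPolynomial.C q * Prev q (x :: L3) =
      (MvPolynomial.X (h - 1) - MvPolynomial.X h) * R' := by
  set nL : ℤ := (L1.length : ℤ) with hnL
  set σ := MvPolynomial.aeval (R := K) (sb q (nL + 1 - (x : ℤ)) nL) with hσ
  have hC2 : ∀ y : K, σ (MvPolynomial.C y) = MvPolynomial.C y := fun y => by
    rw [hσ, MvPolynomial.aeval_C, MvPolynomial.algebraMap_eq]
  have xa : σ (MvPolynomial.X (h - 1)) = MvPolynomial.X (h - 1) := by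
    rw [hσ, MvPolynomial.aeval_X]; unfold sb; rw [if_neg]; omega
  have xb : σ (MvPolynomial.X h) = MvPolynomial.X h := by
    rw [hσ, MvPolynomial.aeval_X]; unfold sb; rw [if_neg]; omega
  have cexp : (MvPolynomial.C (1 + q) : MvPolynomial ℤ K) = 1 + MvPolynomial.C q := by
    rw [map_add, map_one]
  rw [cexp] at hΔ
  have comb : σ (Prev q L1) - (1 + MvPolynomial.C q) * σ (Prev q L2) +
      MvPolynomial.C q * σ (Prev q L3) =
      (MvPolynomial.X (h - 1) - MvPolynomial.X h) * σ R := by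
    have hc := congrArg σ hΔ
    simp only [map_sub, map_add, map_mul, map_one, hC2, xa, xb] at hc
    exact hc
  refine ⟨MvPolynomial.C ((1 - q)⁻¹) * ((MvPolynomial.X (nL + 1) - MvPolynomial.C (q ^ x)) * R +
      (1 - MvPolynomial.X (nL + 1)) * σ R), ?_⟩
  rw [prev_cons, prev_cons, prev_cons, e2, e3, ← hnL, ← hσ, cexp]
  linear_combination (MvPolynomial.C ((1 - q)⁻¹) *
      (MvPolynomial.X (nL + 1) - MvPolynomial.C (q ^ x))) * hΔ +
    (MvPolynomial.C ((1 - q)⁻¹) * (1 - MvPolynomial.X (nL + 1))) * comb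

lemma delta_steps (q : K) (h : ℤ) (M : List ℕ) (L1 L2 L3 : List ℕ)
    (e2 : L2.length = L1.length) (e3 : L3.length = L1.length)
    (hM : ∀ k, k < M.length → ((M.getD k 0 : ℤ)) ≤ (M.length : ℤ) + (L1.length : ℤ) - k - 1 - h)
    (R : MvPolynomial ℤ K)
    (hΔ : Prev q L1 - MvPolynomial.C (1 + q) * Prev q L2 + MvPolynomial.C q * Prev q L3 =
      (MvPolynomial.X (h - 1) - MvPolynomial.X h) * R) :
    ∃ R' : MvPolynomial ℤ K,
      Prev q (M ++ L1) - MvPolynomial.C (1 + q) * Prev q (M ++ L2) +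
        MvPolynomial.C q * Prev q (M ++ L3) =
      (MvPolynomial.X (h - 1) - MvPolynomial.X h) * R' := by
  induction M generalizing R with
  | nil => exact ⟨R, by simpa using hΔ⟩
  | cons x M' ih =>
      obtain ⟨R', hR'⟩ := ih (fun k hk => by
        have h2 := hM (k + 1) (by simp only [List.length_cons]; omega)
        rw [List.getD_cons_succ] at h2
        simp only [List.length_cons] at h2
        push_cast at h2 ⊢
        omega) R hΔ
      rw [List.cons_append, List.cons_append, List.cons_append]
      refine delta_step q h x (M' ++ L1) (M' ++ L2) (M' ++ L3) (by simp [e2]) (by simp [e3]) ?_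
        R' hR'
      have h2 := hM 0 (by simp)
      simp only [List.getD_cons_zero, List.length_cons, List.length_append] at h2 ⊢
      push_cast at h2 ⊢
      omega

lemma chain'_le_getD {l : List ℕ} (hc : List.Chain' (fun a b => 1 ≤ b ∧ b ≤ a + 1) l)
    (i : ℕ) (hi : i + 1 < l.length) : l.getD (i + 1) 0 ≤ l.getD i 0 + 1 := by
  replace hc := List.isChain_iff_getElem.1 hc
  have := hc i (by omega)
  rw [List.getD_eq_getElem _ _ hi, List.getD_eq_getElem _ _ (by omega)]
  simpa using this.2

lemma rev_eq (U V' V'' : List ℕ) (v w : ℕ) :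
    (U ++ v :: (v + 1) :: (V' ++ w :: V'')).reverse =
      V''.reverse ++ w :: (V'.reverse ++ (v + 1) :: v :: U.reverse) := by
  simp [List.reverse_append]

end Stmt14Aux

set_option maxHeartbeats 1000000 in
open Stmt14Aux MvPolynomial in
/-- Proposition 3.4, identity 3.9: with (v,v+1) the canonical
increase of W = (U,v,v+1,V',j,V'') at positions h-1,h, split first by the bar of
length j at position h+j, one has
Q_{U,v,v+1,V',j+1,V''} - (1+q) Q_{U,v,v+1,V',j,V''} + q Q_{U,v,v+1,V',j-1,V''} = 0. -/
theorem stmt14 (U V' V'' : List ℕ) (v j : ℕ)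
    (hW : Legal (U ++ v :: (v + 1) :: (V' ++ j :: V'')))
    -- the bar at position h + j (h = U.length + 2) has length j, i.e. it splits (v, v+1)
    (hpos : V'.length + 1 = j)
    -- (v, v+1) is the canonical (last) increase of W
    (hcanon : ∀ i : ℕ, U.length + 1 ≤ i →
      i + 1 < (U ++ v :: (v + 1) :: (V' ++ j :: V'')).length →
      (U ++ v :: (v + 1) :: (V' ++ j :: V'')).getD (i + 1) 0 ≠
        (U ++ v :: (v + 1) :: (V' ++ j :: V'')).getD i 0 + 1)
    -- no earlier bar splits the pair (v, v+1)
    (hfirst : ∀ r : ℕ, r < (U ++ v :: (v + 1) :: (V' ++ j :: V'')).length →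
      ((r : ℤ) + 1) < (U.length : ℤ) + 2 + (j : ℤ) →
      ((r : ℤ) + 1) - ((U ++ v :: (v + 1) :: (V' ++ j :: V'')).getD r 0 : ℤ) ≠
        (U.length : ℤ) + 2) :
    Qsched qq (U ++ v :: (v + 1) :: (V' ++ (j + 1) :: V'')) -
        Polynomial.C (1 + qq) * Qsched qq (U ++ v :: (v + 1) :: (V' ++ j :: V'')) +
          Polynomial.C qq * Qsched qq (U ++ v :: (v + 1) :: (V' ++ (j - 1) :: V'')) = 0 := by
  subst hpos
  set h : ℤ := (U.length : ℤ) + 2 with hh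
  set W : List ℕ := U ++ v :: (v + 1) :: (V' ++ (V'.length + 1) :: V'') with hWdef
  set T0 : List ℕ := (v + 1) :: v :: U.reverse with hT0
  set Ls : List ℕ := V'.reverse ++ T0 with hLs
  have hT0len : (T0.length : ℤ) = h := by simp [hT0, hh]; push_cast; ring
  have hLslen : (Ls.length : ℤ) = h + (V'.length : ℤ) := by
    simp [hLs, hT0, hh]; push_cast; ring
  -- getD of W in the V' ++ j :: V'' region
  have hWmid : ∀ m : ℕ, W.getD (U.length + 2 + m) 0 = (V' ++ (V'.length + 1) :: V'').getD m 0 := by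
    intro m
    rw [hWdef, List.getD_append_right _ _ _ _ (by omega)]
    have : U.length + 2 + m - U.length = m + 2 := by omega
    rw [this, List.getD_cons_succ, List.getD_cons_succ]
  -- Stage 2: shape through V'
  have base := shape_base qq v U
  have s2 : Shp qq h (Prev qq Ls) := by
    refine shape_steps qq h V'.reverse T0 (by omega) ?_ base
    intro k hk
    simp only [List.length_reverse] at hk
    set m : ℕ := V'.length - 1 - k with hm
    have hmlt : m < V'.length := by omega
    have hgd : V'.reverse.getD k 0 = V'.getD m 0 := by
      rw [List.getD_eq_getElem _ _ (by simpa using hk),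
        List.getD_eq_getElem _ _ hmlt, List.getElem_reverse]
    have hWm : W.getD (U.length + 2 + m) 0 = V'.getD m 0 := by
      rw [hWmid m, List.getD_append _ _ _ _ hmlt]
    have hf := hfirst (U.length + 2 + m)
      (by rw [hWdef]; simp only [List.length_append, List.length_cons]; omega)
      (by push_cast; omega)
    rw [hWm] at hf
    have : (V'.getD m 0 : ℤ) ≠ (m : ℤ) + 1 := by
      intro hcon; exact hf (by push_cast [hcon] at *; omega)
    rw [hgd]
    simp only [List.length_reverse]
    rw [hT0len]
    have : (m : ℤ) = (V'.length : ℤ) - 1 - k := by omega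
    push_cast at *
    omega
  -- Stage 3: the splitting bar
  obtain ⟨R, hR⟩ := delta_factor qq h V'.length Ls hLslen s2
  -- Stage 4: through V''
  have hdec : ∀ t : ℕ, U.length + 2 + V'.length + t < W.length →
      W.getD (U.length + 2 + V'.length + t) 0 ≤ V'.length + 1 := by
    intro t
    induction t with
    | zero =>
        intro _
        rw [Nat.add_zero, hWmid V'.length, List.getD_append_right _ _ _ _ (le_refl _), Nat.sub_self,
          List.getD_cons_zero]
    | succ t ih =>
        intro hlt
        have hlt' : U.length + 2 + V'.length + t < W.length := by omega
        have h1 := ih (by omega)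
        have h2 := chain'_le_getD hW.2 (U.length + 2 + V'.length + t) (by omega)
        have h3 := hcanon (U.length + 2 + V'.length + t) (by omega) (by omega)
        rw [show U.length + 2 + V'.length + (t + 1) = U.length + 2 + V'.length + t + 1 from rfl]
        omega
  have hVpp : ∀ k, k < V''.reverse.length →
      ((V''.reverse.getD k 0 : ℤ)) ≤ (V''.reverse.length : ℤ) +
        (((V'.length + 2) :: Ls).length : ℤ) - k - 1 - h := by
    intro k hk
    simp only [List.length_reverse, List.length_cons] at hk ⊢
    set m : ℕ := V''.length - 1 - k with hm
    have hmlt : m < V''.length := by omega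
    have hgd : V''.reverse.getD k 0 = V''.getD m 0 := by
      rw [List.getD_eq_getElem _ _ (by simpa using hk),
        List.getD_eq_getElem _ _ hmlt, List.getElem_reverse]
    have hWm : W.getD (U.length + 2 + V'.length + (1 + m)) 0 = V''.getD m 0 := by
      have : U.length + 2 + V'.length + (1 + m) = U.length + 2 + (V'.length + (1 + m)) := by omega
      rw [this, hWmid, List.getD_append_right _ _ _ _ (by omega)]
      have : V'.length + (1 + m) - V'.length = m + 1 := by omega
      rw [this, List.getD_cons_succ]
    have hb := hdec (1 + m) (by
      rw [hWdef]; simp only [List.length_append, List.length_cons]; omega)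
    rw [hWm] at hb
    rw [hgd]
    push_cast at *
    omega
  obtain ⟨R', hR'⟩ := delta_steps qq h V''.reverse ((V'.length + 2) :: Ls)
    ((V'.length + 1) :: Ls) (V'.length :: Ls) (by simp) (by simp) hVpp R hR
  -- final evaluation
  have happ := congrArg (MvPolynomial.aeval (R := K) (fun _ : ℤ => (Polynomial.X : Polynomial K))) hR'
  simp only [map_sub, map_add, map_mul, MvPolynomial.aeval_C, MvPolynomial.aeval_X] at happ
  simp only [Qsched, Psched, hWdef]
  rw [rev_eq U V' V'' v (V'.length + 1 + 1), rev_eq U V' V'' v (V'.length + 1),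
    rev_eq U V' V'' v (V'.length + 1 - 1)]
  have e1 : V'.length + 1 + 1 = V'.length + 2 := rfl
  have e2 : V'.length + 1 - 1 = V'.length := rfl
  rw [e1, e2, ← hT0, ← hLs]
  have cpoly : (Polynomial.C (1 + qq) : Polynomial K) = 1 + Polynomial.C qq := by
    rw [map_add, map_one]
  rw [cpoly]
  simp only [Polynomial.algebraMap_eq, map_one] at happ
  rw [happ, sub_self, zero_mul]

end
end
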